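/- arXiv:2307.01173 — 4 statements merged into one kernel-verified Lean document; each statement's English description precedes it below -/
import Mathlib

section
/- Let X be a quasi-Banach function space over (Ω,μ). Define Y ⊆ L^0(Ω) as the set of f for which there is a sequence (f_n) in X with 0 ≤ f_n ↑ |f| a.e. and sup_n ‖f_n‖_X < ∞, equipped with ‖f‖_Y = inf{sup_n ‖f_n‖_X : 0 ≤ f_n ↑ |f| a.e., f_n ∈ X}. Then Y is a quasi-Banach function space over (Ω,μ) satisfying the Fatou property, and X ⊆ Y with ‖f‖_Y ≤ ‖f‖_X for all f ∈ X. -/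
open MeasureTheory Filter Set Topology

/-- A quasi-Banach function space over the measure space `(Ω, μ)`:
a complete quasi-normed vector subspace of `L⁰(Ω)` satisfying the
ideal property and the saturation property. -/
structure QBFS {Ω : Type*} [MeasurableSpace Ω] (μ : Measure Ω) where
  carrier : Set (Ω → ℝ)
  qnorm : (Ω → ℝ) → ℝ
  K : ℝ
  one_le_K : 1 ≤ K
  aemeasurable_mem : ∀ f ∈ carrier, AEMeasurable f μ
  zero_mem : (0 : Ω → ℝ) ∈ carrier
  add_mem : ∀ f ∈ carrier, ∀ g ∈ carrier, f + g ∈ carrier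
  smul_mem : ∀ (c : ℝ), ∀ f ∈ carrier, c • f ∈ carrier
  qnorm_nonneg : ∀ f ∈ carrier, 0 ≤ qnorm f
  qnorm_eq_zero_iff : ∀ f ∈ carrier, (qnorm f = 0 ↔ f =ᵐ[μ] 0)
  qnorm_smul : ∀ (c : ℝ), ∀ f ∈ carrier, qnorm (c • f) = |c| * qnorm f
  qnorm_triangle : ∀ f ∈ carrier, ∀ g ∈ carrier, qnorm (f + g) ≤ K * (qnorm f + qnorm g)
  ideal : ∀ f ∈ carrier, ∀ g : Ω → ℝ, AEMeasurable g μ →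
      (∀ᵐ x ∂μ, |g x| ≤ |f x|) → g ∈ carrier ∧ qnorm g ≤ qnorm f
  saturated : ∀ E : Set Ω, MeasurableSet E → 0 < μ E →
      ∃ F, F ⊆ E ∧ MeasurableSet F ∧ 0 < μ F ∧ F.indicator (fun _ => (1 : ℝ)) ∈ carrier
  complete : ∀ f : ℕ → Ω → ℝ, (∀ n, f n ∈ carrier) →
      (∀ ε > 0, ∃ N, ∀ j ≥ N, ∀ k ≥ N, qnorm (f j - f k) < ε) →
      ∃ g ∈ carrier, Tendsto (fun n => qnorm (f n - g)) atTop (𝓝 0)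

namespace QBFS

variable {Ω : Type*} [MeasurableSpace Ω] {μ : Measure Ω}

/-- `X` is a *Banach* function space if its quasi-norm is a norm. -/
def IsBanach (X : QBFS μ) : Prop :=
  ∀ f ∈ X.carrier, ∀ g ∈ X.carrier, X.qnorm (f + g) ≤ X.qnorm f + X.qnorm g

/-- The Köthe dual `X'` of `X`. -/
def kotheDual (X : QBFS μ) : Set (Ω → ℝ) :=
  {g | AEMeasurable g μ ∧ ∀ f ∈ X.carrier, Integrable (fun x => f x * g x) μ}

/-- The Köthe dual norm `‖g‖_{X'} = sup_{‖f‖_X = 1} ‖fg‖_{L¹}`. -/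
noncomputable def dualNorm (X : QBFS μ) (g : Ω → ℝ) : ℝ :=
  sSup ((fun f => ∫ x, |f x * g x| ∂μ) '' {f | f ∈ X.carrier ∧ X.qnorm f = 1})

/-- The Fatou property. -/
def Fatou (X : QBFS μ) : Prop :=
  ∀ (f : ℕ → Ω → ℝ) (g : Ω → ℝ), (∀ n, f n ∈ X.carrier) → AEMeasurable g μ →
    (∀ᵐ x ∂μ, 0 ≤ f 0 x ∧ Monotone (fun n => f n x) ∧
      Tendsto (fun n => f n x) atTop (𝓝 (g x))) →
    BddAbove (Set.range fun n => X.qnorm (f n)) →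
    g ∈ X.carrier ∧ X.qnorm g = ⨆ n, X.qnorm (f n)

/-- Order-continuity: if `f_n ↓ 0` a.e. then `‖f_n‖_X → 0`. -/
def OrderContinuous (X : QBFS μ) : Prop :=
  ∀ f : ℕ → Ω → ℝ, (∀ n, f n ∈ X.carrier) →
    (∀ᵐ x ∂μ, Antitone (fun n => f n x) ∧ Tendsto (fun n => f n x) atTop (𝓝 0)) →
    Tendsto (fun n => X.qnorm (f n)) atTop (𝓝 0)

end QBFS

/-- `ApproxFromBelow X f g` : `g` is a sequence in `X` with `0 ≤ g_n ↑ |f|` a.e.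
and `sup_n ‖g_n‖_X < ∞`. -/
def ApproxFromBelow {Ω : Type*} [MeasurableSpace Ω] {μ : Measure Ω}
    (X : QBFS μ) (f : Ω → ℝ) (g : ℕ → Ω → ℝ) : Prop :=
  (∀ n, g n ∈ X.carrier) ∧
  (∀ᵐ x ∂μ, 0 ≤ g 0 x ∧ Monotone (fun n => g n x) ∧
    Tendsto (fun n => g n x) atTop (𝓝 |f x|)) ∧
  BddAbove (Set.range fun n => X.qnorm (g n))


namespace FatouAux

open scoped ENNReal NNReal

variable {Ω : Type*} [MeasurableSpace Ω] {μ : Measure Ω}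

/-- The set of candidate norms. -/
def NS (X : QBFS μ) (f : Ω → ℝ) : Set ℝ :=
  {r | ∃ g, ApproxFromBelow X f g ∧ r = sSup (Set.range fun n => X.qnorm (g n))}

/-- The Lorentz norm. -/
noncomputable def LN (X : QBFS μ) (f : Ω → ℝ) : ℝ := sInf (NS X f)

/-- The Lorentz carrier. -/
def LC (X : QBFS μ) : Set (Ω → ℝ) := {f | AEMeasurable f μ ∧ ∃ g, ApproxFromBelow X f g}

variable {X : QBFS μ} {f h : Ω → ℝ} {g : ℕ → Ω → ℝ}

theorem apx_ae (hg : ApproxFromBelow X f g) :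
    ∀ᵐ x ∂μ, Monotone (fun n => g n x) ∧ Tendsto (fun n => g n x) atTop (𝓝 |f x|) ∧
      (∀ n, 0 ≤ g n x) ∧ (∀ n, g n x ≤ |f x|) := by
  filter_upwards [hg.2.1] with x hx
  obtain ⟨h0, hm, ht⟩ := hx
  exact ⟨hm, ht, fun n => h0.trans (hm (Nat.zero_le n)), fun n => hm.ge_of_tendsto ht n⟩

theorem apx_norm_le (hg : ApproxFromBelow X f g) (n : ℕ) :
    X.qnorm (g n) ≤ sSup (Set.range fun n => X.qnorm (g n)) :=
  le_csSup hg.2.2 ⟨n, rfl⟩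

theorem apx_sSup_nonneg (hg : ApproxFromBelow X f g) :
    0 ≤ sSup (Set.range fun n => X.qnorm (g n)) :=
  (X.qnorm_nonneg _ (hg.1 0)).trans (apx_norm_le hg 0)

theorem NS_nonneg : ∀ r ∈ NS X f, 0 ≤ r := by
  rintro r ⟨g, hg, rfl⟩; exact apx_sSup_nonneg hg

theorem LN_nonneg (X : QBFS μ) (f : Ω → ℝ) : 0 ≤ LN X f := Real.sInf_nonneg NS_nonneg

theorem bddBelow_NS : BddBelow (NS X f) := ⟨0, fun r hr => NS_nonneg r hr⟩

theorem LN_le_of_apx (hg : ApproxFromBelow X f g) :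
    LN X f ≤ sSup (Set.range fun n => X.qnorm (g n)) :=
  csInf_le bddBelow_NS ⟨g, hg, rfl⟩

theorem exists_apx_lt (hf : ∃ g, ApproxFromBelow X f g) {b : ℝ} (hb : LN X f < b) :
    ∃ g, ApproxFromBelow X f g ∧ sSup (Set.range fun n => X.qnorm (g n)) < b := by
  obtain ⟨g0, hg0⟩ := hf
  have hne : (NS X f).Nonempty := ⟨_, ⟨g0, hg0, rfl⟩⟩
  obtain ⟨r, ⟨g, hg, rfl⟩, hr⟩ := exists_lt_of_csInf_lt hne hb
  exact ⟨g, hg, hr⟩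

theorem sSup_range_le {x y : ℕ → ℝ} (h : ∀ n, x n ≤ y n) (hy : BddAbove (range y)) :
    sSup (range x) ≤ sSup (range y) :=
  csSup_le (range_nonempty _) (by rintro r ⟨n, rfl⟩; exact (h n).trans (le_csSup hy ⟨n, rfl⟩))

theorem qnorm_zero (X : QBFS μ) : X.qnorm 0 = 0 :=
  (X.qnorm_eq_zero_iff 0 X.zero_mem).2 EventuallyEq.rfl

theorem apx_of_ae_zero (hf0 : f =ᵐ[μ] 0) : ApproxFromBelow X f (fun _ => 0) := by
  refine ⟨fun _ => X.zero_mem, ?_, ?_⟩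
  · filter_upwards [hf0] with x hx
    refine ⟨le_rfl, monotone_const, ?_⟩
    simpa [hx] using (tendsto_const_nhds : Tendsto (fun _ : ℕ => (0:ℝ)) atTop (𝓝 0))
  · simpa [Set.range_const] using bddAbove_singleton (a := X.qnorm 0)

theorem sSup_range_const_qnorm_zero (X : QBFS μ) :
    sSup (Set.range fun _ : ℕ => X.qnorm (0 : Ω → ℝ)) = 0 := by
  simp [Set.range_const, qnorm_zero]

theorem LN_of_ae_zero (hf0 : f =ᵐ[μ] 0) : LN X f = 0 :=
  le_antisymm (le_of_le_of_eq (LN_le_of_apx (apx_of_ae_zero hf0)) (sSup_range_const_qnorm_zero X))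
    (LN_nonneg X f)

theorem zero_mem_LC : (0 : Ω → ℝ) ∈ LC X :=
  ⟨aemeasurable_const, ⟨_, apx_of_ae_zero EventuallyEq.rfl⟩⟩

theorem ideal_LC (hfa : ∃ g, ApproxFromBelow X f g) (hh : AEMeasurable h μ)
    (hle : ∀ᵐ x ∂μ, |h x| ≤ |f x|) :
    (∃ p, ApproxFromBelow X h p) ∧ LN X h ≤ LN X f := by
  have key : ∀ g, ApproxFromBelow X f g → ∃ p, ApproxFromBelow X h p ∧
      sSup (Set.range fun n => X.qnorm (p n)) ≤ sSup (Set.range fun n => X.qnorm (g n)) := by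
    intro g hg
    set p : ℕ → Ω → ℝ := fun n x => min (g n x) |h x| with hp
    have hpnorm : ∀ n, p n ∈ X.carrier ∧ X.qnorm (p n) ≤ X.qnorm (g n) := by
      intro n
      refine X.ideal (g n) (hg.1 n) (p n)
        ((X.aemeasurable_mem _ (hg.1 n)).min (measurable_abs.comp_aemeasurable hh)) ?_
      filter_upwards [apx_ae hg] with x hx
      have h0 : 0 ≤ min (g n x) |h x| := le_min (hx.2.2.1 n) (abs_nonneg _)
      rw [abs_of_nonneg h0, abs_of_nonneg (hx.2.2.1 n)]
      exact min_le_left _ _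
    have hap : ApproxFromBelow X h p := by
      refine ⟨fun n => (hpnorm n).1, ?_, ?_⟩
      · filter_upwards [apx_ae hg, hle] with x hx hlex
        refine ⟨le_min (hx.2.2.1 0) (abs_nonneg _), fun a b hab => min_le_min (hx.1 hab) le_rfl, ?_⟩
        have := (hx.2.1).min (tendsto_const_nhds : Tendsto (fun _ : ℕ => |h x|) atTop (𝓝 |h x|))
        simpa [min_eq_right hlex] using this
      · exact ⟨sSup (Set.range fun n => X.qnorm (g n)),
          by rintro r ⟨n, rfl⟩; exact (hpnorm n).2.trans (apx_norm_le hg n)⟩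
    exact ⟨p, hap, sSup_range_le (fun n => (hpnorm n).2) hg.2.2⟩
  obtain ⟨g0, hg0⟩ := hfa
  obtain ⟨p0, hp0, _⟩ := key g0 hg0
  refine ⟨⟨p0, hp0⟩, ?_⟩
  refine le_csInf ⟨_, g0, hg0, rfl⟩ ?_
  rintro r ⟨g, hg, rfl⟩
  obtain ⟨p, hp, hps⟩ := key g hg
  exact (LN_le_of_apx hp).trans hps

theorem mem_LC_of_mem (hf : f ∈ X.carrier) : f ∈ LC X ∧ LN X f ≤ X.qnorm f := by
  have hmeas := X.aemeasurable_mem f hf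
  have habs : (fun x => |f x|) ∈ X.carrier ∧ X.qnorm (fun x => |f x|) ≤ X.qnorm f :=
    X.ideal f hf _ (measurable_abs.comp_aemeasurable hmeas) (Eventually.of_forall fun x => by simp [abs_abs])
  have hap : ApproxFromBelow X f (fun _ x => |f x|) := by
    refine ⟨fun _ => habs.1, Eventually.of_forall fun x =>
      ⟨abs_nonneg _, monotone_const, tendsto_const_nhds⟩, ?_⟩
    simpa [Set.range_const] using bddAbove_singleton (a := X.qnorm fun x => |f x|)
  refine ⟨⟨hmeas, _, hap⟩, ?_⟩
  calc LN X f ≤ sSup (Set.range fun _ : ℕ => X.qnorm (fun x => |f x|)) := LN_le_of_apx hap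
    _ = X.qnorm (fun x => |f x|) := by simp [Set.range_const]
    _ ≤ X.qnorm f := habs.2

theorem sSup_range_mul {a : ℝ} (ha : 0 ≤ a) (x : ℕ → ℝ) (hb : BddAbove (range x)) :
    sSup (range fun n => a * x n) = a * sSup (range x) := by
  rcases ha.eq_or_lt with rfl | ha'
  · simp [Set.range_const]
  · have hb' : BddAbove (range fun n => a * x n) := by
      obtain ⟨c, hc⟩ := hb
      exact ⟨a * c, by rintro r ⟨n, rfl⟩; exact mul_le_mul_of_nonneg_left (hc ⟨n, rfl⟩) ha⟩
    refine le_antisymm (csSup_le (range_nonempty _) ?_) ?_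
    · rintro r ⟨n, rfl⟩
      exact mul_le_mul_of_nonneg_left (le_csSup hb ⟨n, rfl⟩) ha
    · rw [mul_comm, ← le_div_iff₀ ha']
      refine csSup_le (range_nonempty _) ?_
      rintro r ⟨n, rfl⟩
      rw [le_div_iff₀ ha', mul_comm]
      exact le_csSup hb' ⟨n, rfl⟩

theorem smul_apx (c : ℝ) (hg : ApproxFromBelow X f g) :
    ApproxFromBelow X (c • f) (fun n => |c| • g n) ∧
      sSup (Set.range fun n => X.qnorm (|c| • g n)) =
        |c| * sSup (Set.range fun n => X.qnorm (g n)) := by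
  have hnorm : ∀ n, X.qnorm (|c| • g n) = |c| * X.qnorm (g n) := by
    intro n; rw [X.qnorm_smul |c| (g n) (hg.1 n), abs_abs]
  have hs : sSup (Set.range fun n => X.qnorm (|c| • g n)) =
      |c| * sSup (Set.range fun n => X.qnorm (g n)) := by
    calc sSup (Set.range fun n => X.qnorm (|c| • g n))
        = sSup (Set.range fun n => |c| * X.qnorm (g n)) := by simp only [hnorm]
      _ = |c| * sSup (Set.range fun n => X.qnorm (g n)) :=
        sSup_range_mul (abs_nonneg c) _ hg.2.2
  refine ⟨⟨fun n => X.smul_mem |c| (g n) (hg.1 n), ?_, ?_⟩, hs⟩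
  · filter_upwards [apx_ae hg] with x hx
    refine ⟨by simpa using mul_nonneg (abs_nonneg c) (hx.2.2.1 0), ?_, ?_⟩
    · intro a b hab
      simp only [Pi.smul_apply, smul_eq_mul]
      exact mul_le_mul_of_nonneg_left (hx.1 hab) (abs_nonneg c)
    · have := hx.2.1.const_mul |c|
      simp only [Pi.smul_apply, smul_eq_mul]
      convert this using 2
      simp [abs_mul]
  · refine ⟨|c| * sSup (Set.range fun n => X.qnorm (g n)), ?_⟩
    rintro r ⟨n, rfl⟩
    show X.qnorm (|c| • g n) ≤ _
    rw [hnorm n]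
    exact mul_le_mul_of_nonneg_left (apx_norm_le hg n) (abs_nonneg c)

theorem smul_LC (c : ℝ) (hf : f ∈ LC X) :
    c • f ∈ LC X ∧ LN X (c • f) = |c| * LN X f := by
  have hmem : ∀ (d : ℝ) (u : Ω → ℝ), u ∈ LC X → d • u ∈ LC X ∧ LN X (d • u) ≤ |d| * LN X u := by
    intro d u hu
    have hmeas : AEMeasurable (d • u) μ := hu.1.const_smul d
    obtain ⟨g0, hg0⟩ := hu.2
    refine ⟨⟨hmeas, _, (smul_apx d hg0).1⟩, ?_⟩
    rcases (abs_nonneg d).eq_or_lt with hd | hd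
    · rw [← hd, zero_mul]
      have : d = 0 := abs_eq_zero.1 hd.symm
      subst this
      exact le_of_eq (LN_of_ae_zero (by simp [EventuallyEq]))
    · rw [← div_le_iff₀' hd]
      refine le_csInf ⟨_, ⟨g0, hg0, rfl⟩⟩ ?_
      rintro r ⟨g, hg, rfl⟩
      rw [div_le_iff₀' hd, ← (smul_apx d hg).2]
      exact LN_le_of_apx (smul_apx d hg).1
  refine ⟨(hmem c f hf).1, le_antisymm (hmem c f hf).2 ?_⟩
  rcases eq_or_ne c 0 with rfl | hc
  · rw [LN_of_ae_zero (show (0:ℝ) • f =ᵐ[μ] 0 by simp [EventuallyEq]), abs_zero, zero_mul]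
  · have h2 := (hmem c⁻¹ (c • f) (hmem c f hf).1).2
    rw [inv_smul_smul₀ hc] at h2
    have hc' : 0 < |c| := abs_pos.2 hc
    calc |c| * LN X f ≤ |c| * (|c⁻¹| * LN X (c • f)) :=
          mul_le_mul_of_nonneg_left h2 (abs_nonneg c)
      _ = LN X (c • f) := by
          rw [abs_inv]
          field_simp

theorem add_LC (hf : f ∈ LC X) (hh : h ∈ LC X) :
    f + h ∈ LC X ∧ LN X (f + h) ≤ X.K * (LN X f + LN X h) := by
  have hK0 : (0:ℝ) < X.K := lt_of_lt_of_le one_pos X.one_le_K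
  set w : Ω → ℝ := fun x => |f x| + |h x| with hw
  have hwmeas : AEMeasurable w μ :=
    (measurable_abs.comp_aemeasurable hf.1).add (measurable_abs.comp_aemeasurable hh.1)
  have key : ∀ g k, ApproxFromBelow X f g → ApproxFromBelow X h k →
      ApproxFromBelow X w (fun n => g n + k n) ∧
      sSup (Set.range fun n => X.qnorm (g n + k n)) ≤
        X.K * (sSup (Set.range fun n => X.qnorm (g n)) +
               sSup (Set.range fun n => X.qnorm (k n))) := by
    intro g k hg hk
    have hmem : ∀ n, g n + k n ∈ X.carrier := fun n => X.add_mem _ (hg.1 n) _ (hk.1 n)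
    have hnb : ∀ n, X.qnorm (g n + k n) ≤
        X.K * (sSup (Set.range fun n => X.qnorm (g n)) +
               sSup (Set.range fun n => X.qnorm (k n))) := by
      intro n
      refine (X.qnorm_triangle _ (hg.1 n) _ (hk.1 n)).trans ?_
      exact mul_le_mul_of_nonneg_left (add_le_add (apx_norm_le hg n) (apx_norm_le hk n)) hK0.le
    refine ⟨⟨hmem, ?_, ⟨_, by rintro r ⟨n, rfl⟩; exact hnb n⟩⟩,
      csSup_le (range_nonempty _) (by rintro r ⟨n, rfl⟩; exact hnb n)⟩
    filter_upwards [apx_ae hg, apx_ae hk] with x hgx hkx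
    refine ⟨by simpa using add_le_add (hgx.2.2.1 0) (hkx.2.2.1 0), ?_, ?_⟩
    · intro a b hab
      simp only [Pi.add_apply]
      exact add_le_add (hgx.1 hab) (hkx.1 hab)
    · have hwx : |w x| = |f x| + |h x| :=
        abs_of_nonneg (add_nonneg (abs_nonneg _) (abs_nonneg _))
      simp only [Pi.add_apply]
      rw [hwx]
      exact hgx.2.1.add hkx.2.1
  have hwLC : w ∈ LC X := by
    obtain ⟨g0, hg0⟩ := hf.2
    obtain ⟨k0, hk0⟩ := hh.2
    exact ⟨hwmeas, _, (key g0 k0 hg0 hk0).1⟩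
  have hfhle : ∀ᵐ x ∂μ, |(f + h) x| ≤ |w x| := by
    refine Eventually.of_forall fun x => ?_
    have hwx : |w x| = |f x| + |h x| :=
      abs_of_nonneg (add_nonneg (abs_nonneg _) (abs_nonneg _))
    rw [hwx]
    exact abs_add_le (f x) (h x)
  have hmem := ideal_LC hwLC.2 (hf.1.add hh.1) hfhle
  refine ⟨⟨hf.1.add hh.1, hmem.1⟩, ?_⟩
  have hle : ∀ ε > (0:ℝ), LN X (f + h) ≤ X.K * (LN X f + LN X h) + 2 * X.K * ε := by
    intro ε hε
    obtain ⟨g, hg, hgs⟩ := exists_apx_lt hf.2 (lt_add_of_pos_right _ hε)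
    obtain ⟨k, hk, hks⟩ := exists_apx_lt hh.2 (lt_add_of_pos_right _ hε)
    refine hmem.2.trans ?_
    refine ((LN_le_of_apx (key g k hg hk).1).trans (key g k hg hk).2).trans ?_
    have := add_le_add hgs.le hks.le
    nlinarith [apx_sSup_nonneg hg, apx_sSup_nonneg hk]
  refine le_of_forall_pos_le_add fun ε hε => ?_
  have h2 := hle (ε / (2 * X.K)) (by positivity)
  calc LN X (f + h) ≤ X.K * (LN X f + LN X h) + 2 * X.K * (ε / (2 * X.K)) := h2
    _ = X.K * (LN X f + LN X h) + ε := by field_simp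

/-- From a.e.-monotone convergence `v k ↑ L ≥ w` one can find an index `k` and a small
measurable exceptional set `B` outside of which (within `A`) `v k ≥ w - η`. -/
theorem exists_good_index {A : Set Ω} (hA : MeasurableSet A) (hAfin : μ A ≠ ⊤)
    {v : ℕ → Ω → ℝ} {w L : Ω → ℝ} (hv : ∀ k, AEMeasurable (v k) μ) (hw : AEMeasurable w μ)
    (hae : ∀ᵐ x ∂μ, Monotone (fun k => v k x) ∧ Tendsto (fun k => v k x) atTop (𝓝 (L x)) ∧
      w x ≤ L x)
    {η : ℝ} (hη : 0 < η) {θ : ℝ≥0∞} (hθ : 0 < θ) :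
    ∃ k B, MeasurableSet B ∧ μ B < θ ∧ ∀ᵐ x ∂μ, x ∈ A → x ∉ B → w x - η ≤ v k x := by
  set v' : ℕ → Ω → ℝ := fun k => (hv k).mk _ with hv'
  have hv'meas : ∀ k, Measurable (v' k) := fun k => (hv k).measurable_mk
  have hv'ae : ∀ᵐ x ∂μ, ∀ k, v k x = v' k x := ae_all_iff.2 fun k => (hv k).ae_eq_mk
  set w' : Ω → ℝ := hw.mk _ with hw'
  have hw'ae : w =ᵐ[μ] w' := hw.ae_eq_mk
  -- running max, to make things genuinely monotone
  set V : ℕ → Ω → ℝ := fun k => Nat.rec (v' 0) (fun k ih => fun x => max (ih x) (v' (k+1) x)) k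
    with hV
  have hVmeas : ∀ k, Measurable (V k) := by
    intro k; induction k with
    | zero => exact hv'meas 0
    | succ k ih => exact ih.max (hv'meas (k+1))
  have hVmono : ∀ x, Monotone fun k => V k x := fun x =>
    monotone_nat_of_le_succ fun k => le_max_left _ _
  have hVae : ∀ᵐ x ∂μ, ∀ k, V k x = v k x := by
    filter_upwards [hv'ae, hae] with x hx hmx
    intro k
    induction k with
    | zero => exact (hx 0).symm
    | succ k ih =>
      show max (V k x) (v' (k+1) x) = v (k+1) x
      rw [ih, ← hx (k+1)]
      exact max_eq_right (hmx.1 (Nat.le_succ k))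
  set Z : ℕ → Set Ω := fun k => A ∩ {x | V k x < w' x - η} with hZ
  have hZmeas : ∀ k, MeasurableSet (Z k) :=
    fun k => hA.inter (measurableSet_lt (hVmeas k) ((hw.measurable_mk).sub measurable_const))
  have hZanti : Antitone Z := by
    intro a b hab
    refine inter_subset_inter le_rfl ?_
    intro x hx
    exact lt_of_le_of_lt (hVmono x hab) hx
  have hZinter : μ (⋂ k, Z k) = 0 := by
    rw [measure_eq_zero_iff_ae_notMem]
    filter_upwards [hVae, hae, hw'ae] with x hVx hmx hwx
    intro hmem
    have hvk : ∀ k, v k x < w x - η := by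
      intro k
      have h1 := (mem_iInter.1 hmem k).2
      simp only [mem_setOf_eq] at h1
      rw [hVx k] at h1
      rw [hwx]
      exact h1
    have hL : L x ≤ w x - η :=
      le_of_tendsto hmx.2.1 (Eventually.of_forall fun k => (hvk k).le)
    have := hmx.2.2
    linarith
  have hfin : ∃ k, μ (Z k) ≠ ⊤ :=
    ⟨0, ((measure_mono inter_subset_left).trans_lt hAfin.lt_top).ne⟩
  have htend : Tendsto (fun k => μ (Z k)) atTop (𝓝 0) := by
    have := MeasureTheory.tendsto_measure_iInter_atTop (μ := μ)
      (fun k => (hZmeas k).nullMeasurableSet) hZanti hfin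
    rwa [hZinter] at this
  obtain ⟨k, hk⟩ := (htend.eventually_lt_const hθ).exists
  refine ⟨k, Z k, hZmeas k, hk, ?_⟩
  filter_upwards [hVae, hw'ae] with x hVx hwx
  intro hxA hxB
  by_contra hcon
  push_neg at hcon
  exact hxB ⟨hxA, by simp only [mem_setOf_eq]; rw [hVx k, ← hwx]; exact hcon⟩

theorem ae_zero_iff_LN_zero [SigmaFinite μ] (hf : f ∈ LC X) :
    LN X f = 0 ↔ f =ᵐ[μ] 0 := by
  constructor
  · intro h0
    by_contra hne
    -- find a set of positive finite measure where |f| > δ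
    set f' : Ω → ℝ := hf.1.mk _ with hf'
    have hf'meas : Measurable f' := hf.1.measurable_mk
    have hff' : f =ᵐ[μ] f' := hf.1.ae_eq_mk
    have hne' : μ {x | f' x ≠ 0} ≠ 0 := by
      intro hz
      refine hne (hff'.trans ?_)
      have : ∀ᵐ x ∂μ, ¬ (f' x ≠ 0) := measure_eq_zero_iff_ae_notMem.1 hz
      filter_upwards [this] with x hx
      simpa using hx
    have hUnion : {x | f' x ≠ 0} = ⋃ m : ℕ, {x | 1 / (m + 1 : ℝ) < |f' x|} := by
      ext x
      simp only [mem_setOf_eq, mem_iUnion]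
      constructor
      · intro hx
        obtain ⟨m, hm⟩ := exists_nat_one_div_lt (abs_pos.2 hx)
        exact ⟨m, hm⟩
      · rintro ⟨m, hm⟩
        intro hx0
        rw [hx0] at hm
        simp at hm
        have : (0:ℝ) < 1 / (m + 1 : ℝ) := by positivity
        linarith
    have hm : ∃ m : ℕ, μ {x | 1 / (m + 1 : ℝ) < |f' x|} ≠ 0 := by
      by_contra hall
      push_neg at hall
      exact hne' (by rw [hUnion]; exact measure_iUnion_null_iff.2 hall)
    obtain ⟨m, hmpos⟩ := hm
    set δ : ℝ := 1 / (m + 1 : ℝ) with hδ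
    have hδpos : 0 < δ := by positivity
    set E : Set Ω := {x | δ < |f' x|} with hE
    have hEmeas : MeasurableSet E := measurableSet_lt measurable_const hf'meas.abs
    have hj : ∃ j : ℕ, μ (E ∩ spanningSets μ j) ≠ 0 := by
      by_contra hall
      push_neg at hall
      have : μ E = 0 := by
        have hEeq : E = ⋃ j, E ∩ spanningSets μ j := by
          rw [← inter_iUnion, iUnion_spanningSets, inter_univ]
        rw [hEeq]
        exact measure_iUnion_null_iff.2 hall
      exact hmpos this
    obtain ⟨j, hjpos⟩ := hj
    set F : Set Ω := E ∩ spanningSets μ j with hF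
    have hFmeas : MeasurableSet F := hEmeas.inter (measurableSet_spanningSets μ j)
    have hFfin : μ F ≠ ⊤ :=
      ((measure_mono inter_subset_right).trans_lt (measure_spanningSets_lt_top μ j)).ne
    -- for each k, choose a good approximating element with tiny norm
    have hsel : ∀ k : ℕ, ∃ u : Ω → ℝ, u ∈ X.carrier ∧ X.qnorm u ≤ (2⁻¹:ℝ)^k ∧
        ∃ B : Set Ω, MeasurableSet B ∧ μ B < μ F / 2 * (2⁻¹:ℝ≥0∞)^(k+1) ∧
          ∀ᵐ x ∂μ, (0 ≤ u x) ∧ (x ∈ F → x ∉ B → |f x| - δ / 2 ≤ u x) := by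
      intro k
      have hlt : LN X f < (2⁻¹:ℝ)^k := by rw [h0]; positivity
      obtain ⟨g, hg, hgs⟩ := exists_apx_lt hf.2 hlt
      have hθpos : (0:ℝ≥0∞) < μ F / 2 * (2⁻¹:ℝ≥0∞)^(k+1) := by
        have h1 : μ F / 2 ≠ 0 := by
          simp only [ne_eq, ENNReal.div_eq_zero_iff, not_or]
          exact ⟨hjpos, by norm_num⟩
        have h2 : ((2⁻¹:ℝ≥0∞))^(k+1) ≠ 0 :=
          pow_ne_zero _ (ENNReal.inv_ne_zero.2 (by norm_num))
        exact ENNReal.mul_pos h1 h2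
      obtain ⟨n, B, hBmeas, hBsmall, hBae⟩ := exists_good_index hFmeas hFfin
        (fun n => X.aemeasurable_mem _ (hg.1 n)) (measurable_abs.comp_aemeasurable hf.1)
        (by filter_upwards [apx_ae hg] with x hx; exact ⟨hx.1, hx.2.1, le_rfl⟩)
        (half_pos hδpos) hθpos
      refine ⟨g n, hg.1 n, (apx_norm_le hg n).trans hgs.le, B, hBmeas, hBsmall, ?_⟩
      filter_upwards [apx_ae hg, hBae] with x hx hBx
      exact ⟨hx.2.2.1 n, fun hxF hxB => hBx hxF hxB⟩
    choose u hu hunorm B hBmeas hBsmall hBae using hsel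
    set G : Set Ω := F \ ⋃ k, B k with hG
    have hGmeas : MeasurableSet G := hFmeas.diff (MeasurableSet.iUnion hBmeas)
    have hGpos : μ G ≠ 0 := by
      intro hG0
      have hFle : μ F ≤ μ G + μ (⋃ k, B k) :=
        (measure_mono (subset_diff_union F (⋃ k, B k))).trans (measure_union_le _ _)
      have hsum : μ (⋃ k, B k) ≤ μ F / 2 := by
        refine (measure_iUnion_le _).trans ?_
        calc ∑' k, μ (B k) ≤ ∑' k, μ F / 2 * (2⁻¹:ℝ≥0∞)^(k+1) :=
              ENNReal.tsum_le_tsum fun k => (hBsmall k).le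
          _ = μ F / 2 * ∑' k, (2⁻¹:ℝ≥0∞)^(k+1) := by rw [ENNReal.tsum_mul_left]
          _ ≤ μ F / 2 * 1 := by
              refine mul_le_mul_right ?_ _
              have : ∑' k : ℕ, (2⁻¹:ℝ≥0∞)^(k+1) = 2⁻¹ * ∑' k : ℕ, (2⁻¹:ℝ≥0∞)^k := by
                simp_rw [pow_succ, mul_comm ((2⁻¹:ℝ≥0∞)^_) _]
                rw [ENNReal.tsum_mul_left]
              rw [this, ENNReal.tsum_geometric, ENNReal.one_sub_inv_two, inv_inv]
              exact le_of_eq (ENNReal.inv_mul_cancel (by norm_num) (by norm_num))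
          _ = μ F / 2 := mul_one _
      rw [hG0, zero_add] at hFle
      have h2 : μ F / 2 < μ F := ENNReal.half_lt_self hjpos hFfin
      exact absurd (hFle.trans hsum) h2.not_ge
    -- on G, all the u k are ≥ δ/2, hence the indicator has arbitrarily small norm
    set ind : Ω → ℝ := G.indicator (fun _ => δ / 2) with hind
    have hindmeas : AEMeasurable ind μ := (measurable_const.indicator hGmeas).aemeasurable
    have hkey : ∀ k, ind ∈ X.carrier ∧ X.qnorm ind ≤ (2⁻¹:ℝ)^k := by
      intro k
      have hle : ∀ᵐ x ∂μ, |ind x| ≤ |u k x| := by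
        filter_upwards [hBae k, hff'] with x hx hfx
        by_cases hxG : x ∈ G
        · have hxF : x ∈ F := hxG.1
          have hxB : x ∉ B k := fun hmem => hxG.2 (mem_iUnion.2 ⟨k, hmem⟩)
          have h1 : |f x| - δ / 2 ≤ u k x := hx.2 hxF hxB
          have h2 : δ < |f x| := by rw [hfx]; exact hxF.1
          have h3 : δ / 2 ≤ u k x := by linarith
          rw [hind, indicator_of_mem hxG, abs_of_nonneg (half_pos hδpos).le,
            abs_of_nonneg hx.1]
          exact h3
        · rw [hind, indicator_of_notMem hxG, abs_zero]
          exact abs_nonneg _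
      obtain ⟨hmem, hnorm⟩ := X.ideal (u k) (hu k) ind hindmeas hle
      exact ⟨hmem, hnorm.trans (hunorm k)⟩
    have hind0 : X.qnorm ind = 0 := by
      have hn : 0 ≤ X.qnorm ind := X.qnorm_nonneg _ (hkey 0).1
      have hle : ∀ k, X.qnorm ind ≤ (2⁻¹:ℝ)^k := fun k => (hkey k).2
      by_contra hne0
      have hpos : 0 < X.qnorm ind := hn.lt_of_ne (Ne.symm hne0)
      obtain ⟨k, hk⟩ := exists_pow_lt_of_lt_one hpos (by norm_num : (2⁻¹:ℝ) < 1)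
      exact absurd (hle k) (not_le.2 hk)
    have := (X.qnorm_eq_zero_iff ind (hkey 0).1).1 hind0
    have hGnull : μ G = 0 := by
      rw [measure_eq_zero_iff_ae_notMem]
      filter_upwards [this] with x hx
      intro hxG
      rw [hind] at hx
      simp only [Pi.zero_apply, indicator_of_mem hxG] at hx
      exact absurd hx (by positivity)
    exact hGpos hGnull
  · exact fun h => LN_of_ae_zero h

theorem fatou_LC [SigmaFinite μ] (X : QBFS μ) (f : ℕ → Ω → ℝ) (u : Ω → ℝ)
    (hf : ∀ n, f n ∈ LC X) (hu : AEMeasurable u μ)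
    (hae : ∀ᵐ x ∂μ, 0 ≤ f 0 x ∧ Monotone (fun n => f n x) ∧
      Tendsto (fun n => f n x) atTop (𝓝 (u x)))
    (hbdd : BddAbove (Set.range fun n => LN X (f n))) :
    u ∈ LC X ∧ LN X u = ⨆ n, LN X (f n) := by
  set M : ℝ := ⨆ n, LN X (f n) with hMdef
  have hM : ∀ n, LN X (f n) ≤ M := fun n => le_ciSup hbdd n
  -- the main construction
  have key : ∀ ε : ℝ, 0 < ε → ∃ T, ApproxFromBelow X u T ∧
      sSup (Set.range fun m => X.qnorm (T m)) ≤ M + ε := by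
    intro ε hε
    have hsel : ∀ n, ∃ g, ApproxFromBelow X (f n) g ∧
        sSup (Set.range fun k => X.qnorm (g k)) < M + ε := fun n =>
      exists_apx_lt (hf n).2 ((hM n).trans_lt (lt_add_of_pos_right _ hε))
    choose G hG hGs using hsel
    set A : ℕ → ℕ → Ω → ℝ :=
      fun n => Nat.rec (G 0) (fun n ih => fun m x => max (ih m x) (G (n+1) m x)) n with hA
    have hA0 : ∀ m x, A 0 m x = G 0 m x := fun m x => rfl
    have hAS : ∀ n m x, A (n+1) m x = max (A n m x) (G (n+1) m x) := fun n m x => rfl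
    -- pointwise facts on an a.e. set
    have hptwise : ∀ᵐ x ∂μ,
        (∀ n, 0 ≤ f n x) ∧ (∀ n, f n x ≤ u x) ∧ Monotone (fun n => f n x) ∧
        Tendsto (fun n => f n x) atTop (𝓝 (u x)) ∧
        (∀ n, Monotone fun kk => G n kk x) ∧
        (∀ n, Tendsto (fun kk => G n kk x) atTop (𝓝 (f n x))) ∧
        (∀ n kk, 0 ≤ G n kk x) ∧ (∀ n kk, G n kk x ≤ f n x) ∧
        (∀ n m, A n m x ≤ f n x) ∧ (∀ n m, 0 ≤ A n m x) ∧
        (∀ n, Monotone fun m => A n m x) ∧ (∀ m, Monotone fun n => A n m x) ∧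
        (∀ i n m, i ≤ n → G i m x ≤ A n m x) := by
      filter_upwards [hae, ae_all_iff.2 fun n => apx_ae (hG n)] with x hx hGx
      obtain ⟨hf00, hfmono, hftend⟩ := hx
      have hf0 : ∀ n, 0 ≤ f n x := fun n => hf00.trans (hfmono (Nat.zero_le n))
      have hfu : ∀ n, f n x ≤ u x := fun n => hfmono.ge_of_tendsto hftend n
      have habs : ∀ n, |f n x| = f n x := fun n => abs_of_nonneg (hf0 n)
      have hGt : ∀ n, Tendsto (fun kk => G n kk x) atTop (𝓝 (f n x)) := by
        intro n; have := (hGx n).2.1; rwa [habs n] at this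
      have hGnn : ∀ n kk, 0 ≤ G n kk x := fun n kk => (hGx n).2.2.1 kk
      have hGle : ∀ n kk, G n kk x ≤ f n x := by
        intro n kk; have := (hGx n).2.2.2 kk; rwa [habs n] at this
      have hAle : ∀ n m, A n m x ≤ f n x := by
        intro n
        induction n with
        | zero => exact fun m => hGle 0 m
        | succ n ih =>
          intro m
          rw [hAS]
          exact max_le ((ih m).trans (hfmono (Nat.le_succ n))) (hGle (n+1) m)
      have hAnn : ∀ n m, 0 ≤ A n m x := by
        intro n
        induction n with
        | zero => exact fun m => hGnn 0 m
        | succ n ih => exact fun m => (ih m).trans (by rw [hAS]; exact le_max_left _ _)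
      have hAmono : ∀ n, Monotone fun m => A n m x := by
        intro n
        induction n with
        | zero => exact (hGx 0).1
        | succ n ih =>
          intro a b hab
          simp only [hAS]
          exact max_le_max (ih hab) ((hGx (n+1)).1 hab)
      have hAmono' : ∀ m, Monotone fun n => A n m x := fun m =>
        monotone_nat_of_le_succ fun n => by rw [hAS]; exact le_max_left _ _
      have hAG : ∀ i n m, i ≤ n → G i m x ≤ A n m x := by
        intro i n
        induction n with
        | zero => intro m hi; rw [Nat.le_zero] at hi; subst hi; exact le_of_eq (hA0 m x).symm
        | succ n ih =>
          intro m hi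
          rcases Nat.lt_or_ge i (n+1) with hlt | hge
          · exact (ih m (Nat.lt_succ_iff.1 hlt)).trans (by rw [hAS]; exact le_max_left _ _)
          · have : i = n + 1 := le_antisymm hi hge
            subst this
            rw [hAS]
            exact le_max_right _ _
      exact ⟨hf0, hfu, hfmono, hftend, fun n => (hGx n).1, hGt, hGnn, hGle, hAle, hAnn,
        hAmono, hAmono', hAG⟩
    -- membership of the diagonal maxima
    have hAmem : ∀ n m, A n m ∈ X.carrier := by
      intro n
      induction n with
      | zero => exact fun m => (hG 0).1 m
      | succ n ih =>
        intro m
        have hsum : A n m + G (n+1) m ∈ X.carrier :=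
          X.add_mem _ (ih m) _ ((hG (n+1)).1 m)
        have hmeas : AEMeasurable (A (n+1) m) μ := by
          have : AEMeasurable (fun x => max (A n m x) (G (n+1) m x)) μ :=
            (X.aemeasurable_mem _ (ih m)).max (X.aemeasurable_mem _ ((hG (n+1)).1 m))
          exact this
        refine (X.ideal _ hsum (A (n+1) m) hmeas ?_).1
        filter_upwards [hptwise] with x hx
        rw [hAS]
        have h1 : 0 ≤ A n m x := hx.2.2.2.2.2.2.2.2.2.1 n m
        have h2 : 0 ≤ G (n+1) m x := hx.2.2.2.2.2.2.1 (n+1) m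
        rw [abs_of_nonneg (le_trans h1 (le_max_left _ _)),
          abs_of_nonneg (by simpa using add_nonneg h1 h2)]
        simp only [Pi.add_apply]
        exact max_le (by linarith) (by linarith)
    set h : ℕ → Ω → ℝ := fun m x => A m m x with hh
    have hhmem : ∀ m, h m ∈ X.carrier := fun m => hAmem m m
    -- choose good indices
    have hgood : ∀ m, ∃ kk B, MeasurableSet B ∧ μ B < (2⁻¹:ℝ≥0∞)^m ∧
        ∀ᵐ x ∂μ, x ∈ spanningSets μ m → x ∉ B → h m x - (2⁻¹:ℝ)^m ≤ G m kk x := by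
      intro m
      refine exists_good_index (measurableSet_spanningSets μ m)
        (measure_spanningSets_lt_top μ m).ne
        (v := G m) (w := h m) (L := f m)
        (fun kk => X.aemeasurable_mem _ ((hG m).1 kk)) (X.aemeasurable_mem _ (hhmem m))
        ?_ (by positivity) (pos_iff_ne_zero.2 (pow_ne_zero _ (ENNReal.inv_ne_zero.2 (by norm_num))))
      filter_upwards [hptwise] with x hx
      exact ⟨hx.2.2.2.2.1 m, hx.2.2.2.2.2.1 m, hx.2.2.2.2.2.2.2.2.1 m m⟩
    choose kk B hBmeas hBsmall hBae using hgood
    set H : ℕ → Ω → ℝ := fun m x => min (h m x) (G m (kk m) x) with hH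
    have hHmem : ∀ m, H m ∈ X.carrier ∧ X.qnorm (H m) ≤ X.qnorm (G m (kk m)) := by
      intro m
      refine X.ideal _ ((hG m).1 (kk m)) (H m)
        ((X.aemeasurable_mem _ (hhmem m)).min (X.aemeasurable_mem _ ((hG m).1 (kk m)))) ?_
      filter_upwards [hptwise] with x hx
      have h1 : 0 ≤ h m x := hx.2.2.2.2.2.2.2.2.2.1 m m
      have h2 : 0 ≤ G m (kk m) x := hx.2.2.2.2.2.2.1 m (kk m)
      rw [hH, abs_of_nonneg (le_min h1 h2), abs_of_nonneg h2]
      exact min_le_right _ _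
    have hHnorm : ∀ m, X.qnorm (H m) < M + ε :=
      fun m => ((hHmem m).2.trans (apx_norm_le (hG m) (kk m))).trans_lt (hGs m)
    -- Borel–Cantelli
    have hBC : ∀ᵐ x ∂μ, ∀ᶠ m in atTop, x ∉ B m := by
      refine ae_eventually_notMem ?_
      refine ((ENNReal.tsum_le_tsum fun m => (hBsmall m).le).trans_lt ?_).ne
      rw [ENNReal.tsum_geometric, ENNReal.one_sub_inv_two, inv_inv]
      exact ENNReal.ofNat_lt_top
    -- the final monotone approximating sequence
    set T : ℕ → Ω → ℝ := fun m x => ⨅ j, H (m + j) x with hT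
    have hH'sel : ∀ m, AEMeasurable (H m) μ := fun m => X.aemeasurable_mem _ (hHmem m).1
    have hTmeas : ∀ m, AEMeasurable (T m) μ := by
      intro m
      have hmk : Measurable fun x => ⨅ j, (hH'sel (m + j)).mk _ x :=
        Measurable.iInf fun j => (hH'sel (m + j)).measurable_mk
      refine hmk.aemeasurable.congr ?_
      filter_upwards [ae_all_iff.2 fun j => (hH'sel j).ae_eq_mk] with x hx
      exact iInf_congr fun j => (hx (m + j)).symm
    have hHnn : ∀ᵐ x ∂μ, ∀ j, 0 ≤ H j x := by
      filter_upwards [hptwise] with x hx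
      intro j
      exact le_min (hx.2.2.2.2.2.2.2.2.2.1 j j) (hx.2.2.2.2.2.2.1 j (kk j))
    have hTmem : ∀ m, T m ∈ X.carrier ∧ X.qnorm (T m) ≤ X.qnorm (H m) := by
      intro m
      refine X.ideal _ (hHmem m).1 (T m) (hTmeas m) ?_
      filter_upwards [hHnn] with x hx
      have hbb : BddBelow (Set.range fun j => H (m + j) x) :=
        ⟨0, by rintro r ⟨j, rfl⟩; exact hx (m + j)⟩
      have h1 : 0 ≤ T m x := le_ciInf fun j => hx (m + j)
      have h2 : T m x ≤ H m x := by
        have := ciInf_le hbb 0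
        simpa using this
      rw [abs_of_nonneg h1, abs_of_nonneg (hx m)]
      exact h2
    have hTap : ApproxFromBelow X u T := by
      refine ⟨fun m => (hTmem m).1, ?_, ?_⟩
      · filter_upwards [hptwise, hHnn, hBC, ae_all_iff.2 hBae] with x hx hHx hBCx hBaex
        have hbb : ∀ m, BddBelow (Set.range fun j => H (m + j) x) :=
          fun m => ⟨0, by rintro r ⟨j, rfl⟩; exact hHx (m + j)⟩
        have hTle : ∀ m, T m x ≤ H m x := fun m => by
          have := ciInf_le (hbb m) 0; simpa using this
        have hHleh : ∀ m, H m x ≤ h m x := fun m => min_le_left _ _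
        have hhle : ∀ m, h m x ≤ u x :=
          fun m => (hx.2.2.2.2.2.2.2.2.1 m m).trans (hx.2.1 m)
        have hhmono : Monotone fun m => h m x := by
          intro a b hab
          exact (hx.2.2.2.2.2.2.2.2.2.2.1 a hab).trans (hx.2.2.2.2.2.2.2.2.2.2.2.1 b hab)
        have hspan : ∃ j0, ∀ m, j0 ≤ m → x ∈ spanningSets μ m := by
          have : x ∈ ⋃ i, spanningSets μ i := by
            rw [iUnion_spanningSets]; exact mem_univ x
          obtain ⟨i, hi⟩ := mem_iUnion.1 this
          exact ⟨i, fun m hm => monotone_spanningSets μ hm hi⟩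
        obtain ⟨j0, hj0⟩ := hspan
        obtain ⟨j1, hj1⟩ := eventually_atTop.1 hBCx
        set m₀ := max j0 j1 with hm₀
        have hlow : ∀ m, m₀ ≤ m → h m x - (2⁻¹:ℝ)^m ≤ H m x := by
          intro m hm
          have hGlow : h m x - (2⁻¹:ℝ)^m ≤ G m (kk m) x :=
            hBaex m (hj0 m ((le_max_left _ _).trans hm)) (hj1 m ((le_max_right _ _).trans hm))
          refine le_min ?_ hGlow
          have : (0:ℝ) ≤ (2⁻¹:ℝ)^m := by positivity
          linarith
        have huabs : |u x| = u x := abs_of_nonneg ((hx.1 0).trans (hx.2.1 0))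
        refine ⟨le_ciInf fun j => hHx (0 + j), ?_, ?_⟩
        · intro a b hab
          refine le_ciInf fun j => ?_
          have h1 : T a x ≤ H (a + (j + (b - a))) x := ciInf_le (hbb a) (j + (b - a))
          have : a + (j + (b - a)) = b + j := by omega
          rw [this] at h1
          exact h1
        · have hupper : ∀ m, T m x ≤ u x := fun m => (hTle m).trans ((hHleh m).trans (hhle m))
          have hlower : ∀ m, m₀ ≤ m → h m x - (2⁻¹:ℝ)^m ≤ T m x := by
            intro m hm
            refine le_ciInf fun j => ?_
            have h1 : h m x - (2⁻¹:ℝ)^m ≤ h (m + j) x - (2⁻¹:ℝ)^(m+j) := by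
              have := hhmono (Nat.le_add_right m j)
              have hpow : (2⁻¹:ℝ)^(m+j) ≤ (2⁻¹:ℝ)^m :=
                pow_le_pow_of_le_one (by norm_num) (by norm_num) (Nat.le_add_right m j)
              linarith
            exact h1.trans (hlow (m + j) (hm.trans (Nat.le_add_right m j)))
          have htendh : Tendsto (fun m => h m x) atTop (𝓝 (u x)) := by
            have hbdd' : BddAbove (Set.range fun m => h m x) :=
              ⟨u x, by rintro r ⟨m, rfl⟩; exact hhle m⟩
            have ht := tendsto_atTop_ciSup hhmono hbdd'
            have heq : (⨆ m, h m x) = u x := by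
              refine le_antisymm (ciSup_le hhle) ?_
              refine le_of_tendsto hx.2.2.2.1 (Eventually.of_forall fun n => ?_)
              have h1 : Tendsto (fun j => G n j x) atTop (𝓝 (f n x)) := hx.2.2.2.2.2.1 n
              refine le_of_tendsto h1 (eventually_atTop.2 ⟨n, fun j hj => ?_⟩)
              exact (hx.2.2.2.2.2.2.2.2.2.2.2.2 n j j hj).trans (le_ciSup hbdd' j)
            rwa [heq] at ht
          have hlowt : Tendsto (fun m => h m x - (2⁻¹:ℝ)^m) atTop (𝓝 (u x)) := by
            have := htendh.sub (tendsto_pow_atTop_nhds_zero_of_lt_one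
              (by norm_num : (0:ℝ) ≤ 2⁻¹) (by norm_num : (2⁻¹:ℝ) < 1))
            simpa using this
          rw [huabs]
          refine tendsto_of_tendsto_of_tendsto_of_le_of_le' hlowt tendsto_const_nhds ?_ ?_
          · exact eventually_atTop.2 ⟨m₀, fun m hm => hlower m hm⟩
          · exact Eventually.of_forall hupper
      · refine ⟨M + ε, ?_⟩
        rintro r ⟨m, rfl⟩
        exact (hTmem m).2.trans (hHnorm m).le
    refine ⟨T, hTap, csSup_le (range_nonempty _) ?_⟩
    rintro r ⟨m, rfl⟩
    exact (hTmem m).2.trans (hHnorm m).le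
  -- conclude
  obtain ⟨T1, hT1, _⟩ := key 1 one_pos
  have huLC : u ∈ LC X := ⟨hu, T1, hT1⟩
  have hle : LN X u ≤ M := by
    refine le_of_forall_pos_le_add fun ε hε => ?_
    obtain ⟨T, hTap, hTs⟩ := key ε hε
    exact (LN_le_of_apx hTap).trans hTs
  have hge : M ≤ LN X u := by
    refine ciSup_le fun n => ?_
    refine (ideal_LC huLC.2 (hf n).1 ?_).2
    filter_upwards [hae] with x hx
    obtain ⟨hf00, hfmono, hftend⟩ := hx
    have hf0 : 0 ≤ f n x := hf00.trans (hfmono (Nat.zero_le n))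
    have hfu : f n x ≤ u x := hfmono.ge_of_tendsto hftend n
    rw [abs_of_nonneg hf0, abs_of_nonneg (hf0.trans hfu)]
    exact hfu
  exact ⟨huLC, le_antisymm hle hge⟩

theorem sub_LC (hf : f ∈ LC X) (hh : h ∈ LC X) :
    f - h ∈ LC X ∧ LN X (f - h) ≤ X.K * (LN X f + LN X h) := by
  have hneg := smul_LC (-1 : ℝ) hh
  have heq : f - h = f + (-1 : ℝ) • h := by
    funext x; simp [sub_eq_add_neg]
  rw [heq]
  obtain ⟨h1, h2⟩ := add_LC hf hneg.1
  refine ⟨h1, h2.trans ?_⟩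
  rw [hneg.2]
  simp

theorem abs_LC (hf : f ∈ LC X) :
    (fun x => |f x|) ∈ LC X ∧ LN X (fun x => |f x|) ≤ LN X f := by
  have hm : AEMeasurable (fun x => |f x|) μ := measurable_abs.comp_aemeasurable hf.1
  have := ideal_LC hf.2 hm (Eventually.of_forall fun x => by simp [abs_abs])
  exact ⟨⟨hm, this.1⟩, this.2⟩

theorem sum_LC (X : QBFS μ) : ∀ (m : ℕ) (a : ℕ → Ω → ℝ), (∀ i, a i ∈ LC X) →
    (∑ i ∈ Finset.range m, a i) ∈ LC X ∧
    LN X (∑ i ∈ Finset.range m, a i) ≤ ∑ i ∈ Finset.range m, X.K^(i+1) * LN X (a i) := by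
  intro m
  induction m with
  | zero =>
    intro a _
    simpa using ⟨zero_mem_LC, le_of_eq (LN_of_ae_zero EventuallyEq.rfl)⟩
  | succ m ih =>
    intro a ha
    have hK0 : (0:ℝ) < X.K := lt_of_lt_of_le one_pos X.one_le_K
    have hsplit : ∑ i ∈ Finset.range (m+1), a i =
        a 0 + ∑ i ∈ Finset.range m, a (i+1) := by
      rw [Finset.sum_range_succ' a m, add_comm]
    obtain ⟨hmem2, hle2⟩ := ih (fun i => a (i+1)) (fun i => ha (i+1))
    obtain ⟨hmem, hle⟩ := add_LC (ha 0) hmem2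
    rw [hsplit]
    refine ⟨hmem, hle.trans ?_⟩
    have hRHS : ∑ i ∈ Finset.range (m+1), X.K^(i+1) * LN X (a i) =
        X.K * LN X (a 0) + ∑ i ∈ Finset.range m, X.K^(i+2) * LN X (a (i+1)) := by
      rw [Finset.sum_range_succ' (fun i => X.K^(i+1) * LN X (a i)) m, add_comm]
      simp [pow_succ]
    rw [hRHS]
    have h1 : X.K * LN X (∑ i ∈ Finset.range m, a (i+1)) ≤
        X.K * ∑ i ∈ Finset.range m, X.K^(i+1) * LN X (a (i+1)) :=
      mul_le_mul_of_nonneg_left hle2 hK0.le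
    have h2 : X.K * ∑ i ∈ Finset.range m, X.K^(i+1) * LN X (a (i+1)) =
        ∑ i ∈ Finset.range m, X.K^(i+2) * LN X (a (i+1)) := by
      rw [Finset.mul_sum]
      exact Finset.sum_congr rfl fun i _ => by ring
    nlinarith [mul_le_mul_of_nonneg_left hle2 hK0.le]

theorem mono_limit [SigmaFinite μ] (X : QBFS μ) {s : ℕ → Ω → ℝ}
    (hs : ∀ m, s m ∈ LC X)
    (hae : ∀ᵐ x ∂μ, 0 ≤ s 0 x ∧ Monotone fun m => s m x)
    (hbdd : BddAbove (Set.range fun m => LN X (s m))) :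
    ∃ S, S ∈ LC X ∧ (∀ᵐ x ∂μ, Tendsto (fun m => s m x) atTop (𝓝 (S x))) ∧
      LN X S = ⨆ m, LN X (s m) := by
  obtain ⟨cb, hcb⟩ := hbdd
  have hcm : ∀ m, LN X (s m) ≤ cb := fun m => hcb ⟨m, rfl⟩
  have hcb0 : 0 ≤ cb := (LN_nonneg X (s 0)).trans (hcm 0)
  have hptbdd : ∀ᵐ x ∂μ, BddAbove (Set.range fun m => s m x) := by
    by_contra hcon
    have hs'ae : ∀ᵐ x ∂μ, ∀ m, s m x = (hs m).1.mk _ x := ae_all_iff.2 fun m => (hs m).1.ae_eq_mk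
    set A' : Set Ω := ⋂ c : ℕ, ⋃ m, {x | (c:ℝ) < (hs m).1.mk _ x} with hA'
    have hA'meas : MeasurableSet A' := MeasurableSet.iInter fun c => MeasurableSet.iUnion
      fun m => measurableSet_lt measurable_const ((hs m).1.measurable_mk)
    have hA'pos : 0 < μ A' := by
      rcases eq_or_ne (μ A') 0 with h0 | h0
      · exfalso
        apply hcon
        filter_upwards [measure_eq_zero_iff_ae_notMem.1 h0, hs'ae] with x hx hsx
        simp only [hA', mem_iInter, mem_iUnion, mem_setOf_eq, not_forall, not_exists,
          not_lt] at hx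
        obtain ⟨c, hc⟩ := hx
        exact ⟨c, by rintro r ⟨m, rfl⟩; show s m x ≤ (c:ℝ); rw [hsx m]; exact hc m⟩
      · exact pos_iff_ne_zero.2 h0
    obtain ⟨F, hFA, hFmeas, hFpos, hFX⟩ := X.saturated A' hA'meas hA'pos
    obtain ⟨hFLC, _⟩ := mem_LC_of_mem hFX
    have hindne : ¬ (F.indicator (fun _ => (1:ℝ)) =ᵐ[μ] 0) := by
      intro hz
      have hF0 : μ F = 0 := by
        rw [measure_eq_zero_iff_ae_notMem]
        filter_upwards [hz] with x hx
        intro hxF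
        rw [indicator_of_mem hxF] at hx
        simp at hx
      exact hFpos.ne' hF0
    have hindpos : 0 < LN X (F.indicator fun _ => (1:ℝ)) := by
      rcases (LN_nonneg X (F.indicator fun _ => (1:ℝ))).eq_or_lt with h | h
      · exact absurd ((ae_zero_iff_LN_zero hFLC).1 h.symm) hindne
      · exact h
    set t : ℝ := (cb + 1) / LN X (F.indicator fun _ => (1:ℝ)) with ht
    have htpos : 0 < t := div_pos (by linarith) hindpos
    set tInd : Ω → ℝ := t • (F.indicator fun _ => (1:ℝ)) with htInd
    have htIndmeas : AEMeasurable tInd μ :=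
      ((measurable_const.indicator hFmeas).const_smul t).aemeasurable
    have htIndnn : ∀ x, 0 ≤ tInd x := by
      intro x
      rw [htInd]
      simp only [Pi.smul_apply, smul_eq_mul]
      exact mul_nonneg htpos.le (indicator_nonneg (fun _ _ => zero_le_one) x)
    set w : ℕ → Ω → ℝ := fun m x => min (s m x) (tInd x) with hw
    have hwLC : ∀ m, w m ∈ LC X ∧ LN X (w m) ≤ LN X (s m) := by
      intro m
      have hwm : AEMeasurable (w m) μ := (hs m).1.min htIndmeas
      have := ideal_LC (hs m).2 hwm ?_
      · exact ⟨⟨hwm, this.1⟩, this.2⟩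
      · filter_upwards [hae] with x hx
        have hsm : 0 ≤ s m x := hx.1.trans (hx.2 (Nat.zero_le m))
        rw [hw, abs_of_nonneg (le_min hsm (htIndnn x)), abs_of_nonneg hsm]
        exact min_le_left _ _
    have hfat := fatou_LC X w tInd (fun m => (hwLC m).1) htIndmeas ?_ ?_
    · have hsup : (⨆ m, LN X (w m)) ≤ cb := ciSup_le fun m => (hwLC m).2.trans (hcm m)
      rw [← hfat.2] at hsup
      have heqt : LN X tInd = t * LN X (F.indicator fun _ => (1:ℝ)) := by
        rw [htInd, (smul_LC t hFLC).2, abs_of_nonneg htpos.le]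
      rw [heqt, ht] at hsup
      rw [div_mul_cancel₀ _ hindpos.ne'] at hsup
      linarith
    · filter_upwards [hae, hs'ae] with x hx hsx
      refine ⟨le_min (hx.1) (htIndnn x), fun a b hab => min_le_min (hx.2 hab) le_rfl, ?_⟩
      by_cases hxF : x ∈ F
      · have hxA' : x ∈ A' := hFA hxF
        simp only [hA', mem_iInter, mem_iUnion, mem_setOf_eq] at hxA'
        have hst : Tendsto (fun m => s m x) atTop atTop := by
          refine tendsto_atTop_atTop_of_monotone hx.2 fun b => ?_
          obtain ⟨c, hc⟩ := exists_nat_ge b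
          obtain ⟨m, hm⟩ := hxA' c
          exact ⟨m, by rw [← hsx m] at hm; linarith⟩
        have hev : ∀ᶠ m in atTop, tInd x ≤ s m x := hst.eventually_ge_atTop (tInd x)
        refine Tendsto.congr' ?_ (tendsto_const_nhds : Tendsto (fun _ : ℕ => tInd x) atTop _)
        filter_upwards [hev] with m hm
        exact (min_eq_right hm).symm
      · have h0 : tInd x = 0 := by
          rw [htInd]
          simp [indicator_of_notMem hxF]
        have hmm : ∀ m, min (s m x) (tInd x) = tInd x := by
          intro m
          rw [h0]
          exact min_eq_right (hx.1.trans (hx.2 (Nat.zero_le m)))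
        exact Tendsto.congr (fun m => (hmm m).symm) tendsto_const_nhds
    · exact ⟨cb, by rintro r ⟨m, rfl⟩; exact (hwLC m).2.trans (hcm m)⟩
  set S : Ω → ℝ := fun x => ⨆ m, s m x with hS
  have hStend : ∀ᵐ x ∂μ, Tendsto (fun m => s m x) atTop (𝓝 (S x)) := by
    filter_upwards [hae, hptbdd] with x hx hbx
    exact tendsto_atTop_ciSup hx.2 hbx
  have hSmeas : AEMeasurable S μ :=
    aemeasurable_of_tendsto_metrizable_ae atTop (fun m => (hs m).1) hStend
  have hfat := fatou_LC X s S hs hSmeas ?_ ⟨cb, hcb⟩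
  · exact ⟨S, hfat.1, hStend, hfat.2⟩
  · filter_upwards [hae, hStend] with x hx htx
    exact ⟨hx.1, hx.2, htx⟩

set_option maxHeartbeats 1000000 in
theorem complete_LC [SigmaFinite μ] (X : QBFS μ) (f : ℕ → Ω → ℝ) (hf : ∀ n, f n ∈ LC X)
    (hcau : ∀ ε > 0, ∃ N, ∀ j ≥ N, ∀ k ≥ N, LN X (f j - f k) < ε) :
    ∃ g ∈ LC X, Tendsto (fun n => LN X (f n - g)) atTop (𝓝 0) := by
  have hK1 := X.one_le_K
  have hK0 : (0:ℝ) < X.K := lt_of_lt_of_le one_pos hK1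
  set c : ℕ → ℝ := fun i => (X.K ^ (i+1))⁻¹ * (4:ℝ)⁻¹^(i+1) with hc
  have hcpos : ∀ i, 0 < c i := fun i => by positivity
  have hsel : ∀ i : ℕ, ∃ N, ∀ j ≥ N, ∀ k ≥ N, LN X (f j - f k) < c i :=
    fun i => hcau (c i) (hcpos i)
  choose Nf hNf using hsel
  set n : ℕ → ℕ := fun i => Nat.rec (Nf 0) (fun i ih => max (ih + 1) (Nf (i+1))) i with hn
  have hnS : ∀ i, n (i+1) = max (n i + 1) (Nf (i+1)) := fun _ => rfl
  have hnge : ∀ i, Nf i ≤ n i := by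
    intro i
    cases i with
    | zero => exact le_rfl
    | succ i => rw [hnS]; exact le_max_right _ _
  have hnlt : ∀ i, n i < n (i+1) := fun i =>
    lt_of_lt_of_le (Nat.lt_succ_self _) (by rw [hnS]; exact le_max_left _ _)
  have hdiff : ∀ i, LN X (f (n (i+1)) - f (n i)) < c i :=
    fun i => hNf i _ ((hnge i).trans (hnlt i).le) _ (hnge i)
  clear_value n
  set g : ℕ → Ω → ℝ := fun i => f (n (i+1)) - f (n i) with hg
  have hgLC : ∀ i, g i ∈ LC X := fun i => (sub_LC (hf (n (i+1))) (hf (n i))).1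
  set ag : ℕ → Ω → ℝ := fun i x => |g i x| with hag
  have hagLC : ∀ i, ag i ∈ LC X ∧ LN X (ag i) ≤ LN X (g i) := fun i => abs_LC (hgLC i)
  have hsums : ∀ i m : ℕ, (∑ l ∈ Finset.range m, ag (i + l)) ∈ LC X ∧
      LN X (∑ l ∈ Finset.range m, ag (i + l)) ≤ (4:ℝ)⁻¹^i := by
    intro i m
    obtain ⟨hmem, hle⟩ := sum_LC X m (fun l => ag (i + l)) (fun l => (hagLC (i+l)).1)
    refine ⟨hmem, hle.trans ?_⟩
    calc ∑ l ∈ Finset.range m, X.K^(l+1) * LN X (ag (i+l))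
        ≤ ∑ l ∈ Finset.range m, (4:ℝ)⁻¹^(i+1) * (4:ℝ)⁻¹^l := by
          refine Finset.sum_le_sum fun l _ => ?_
          have h1 : LN X (ag (i+l)) ≤ c (i+l) :=
            (hagLC (i+l)).2.trans ((hdiff (i+l)).le)
          have hKpow : X.K^(l+1) * (X.K ^ (i+l+1))⁻¹ ≤ 1 := by
            rw [mul_inv_le_iff₀ (pow_pos hK0 _), one_mul]
            exact pow_le_pow_right₀ hK1 (by omega)
          have h2 : X.K^(l+1) * c (i+l) ≤ (4:ℝ)⁻¹^(i+1) * (4:ℝ)⁻¹^l := by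
            rw [hc]
            calc X.K^(l+1) * ((X.K ^ (i+l+1))⁻¹ * (4:ℝ)⁻¹^(i+l+1))
                = (X.K^(l+1) * (X.K ^ (i+l+1))⁻¹) * (4:ℝ)⁻¹^(i+l+1) := by ring
              _ ≤ 1 * (4:ℝ)⁻¹^(i+l+1) := mul_le_mul_of_nonneg_right hKpow (by positivity)
              _ = (4:ℝ)⁻¹^(i+1) * (4:ℝ)⁻¹^l := by
                  rw [one_mul, ← pow_add]
                  congr 1
                  omega
          refine le_trans ?_ h2
          exact mul_le_mul_of_nonneg_left h1 (by positivity)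
      _ = (4:ℝ)⁻¹^(i+1) * ∑ l ∈ Finset.range m, (4:ℝ)⁻¹^l := by rw [← Finset.mul_sum]
      _ ≤ (4:ℝ)⁻¹^(i+1) * 4 := by
          refine mul_le_mul_of_nonneg_left ?_ (by positivity)
          rw [geom_sum_eq (by norm_num : (4:ℝ)⁻¹ ≠ 1) m]
          rw [div_le_iff_of_neg (by norm_num : (4:ℝ)⁻¹ - 1 < 0)]
          have hx : (0:ℝ) ≤ (4:ℝ)⁻¹^m := by positivity
          nlinarith
      _ ≤ (4:ℝ)⁻¹^i := by
          rw [pow_succ]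
          have hx : (0:ℝ) ≤ (4:ℝ)⁻¹^i := by positivity
          nlinarith
  have haemono : ∀ i, ∀ᵐ x ∂μ, 0 ≤ (∑ l ∈ Finset.range 0, ag (i+l)) x ∧
      Monotone fun m => (∑ l ∈ Finset.range m, ag (i + l)) x := by
    intro i
    refine ae_of_all _ fun x => ⟨by simp, ?_⟩
    intro a b hab
    simp only [Finset.sum_apply]
    refine Finset.sum_le_sum_of_subset_of_nonneg (Finset.range_subset_range.2 hab) ?_
    intro l _ _
    exact abs_nonneg _
  have hTsel : ∀ i, ∃ T, T ∈ LC X ∧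
      (∀ᵐ x ∂μ, Tendsto (fun m => (∑ l ∈ Finset.range m, ag (i + l)) x) atTop (𝓝 (T x))) ∧
      LN X T = ⨆ m, LN X (∑ l ∈ Finset.range m, ag (i + l)) := by
    intro i
    exact mono_limit X (fun m => (hsums i m).1) (haemono i)
      ⟨(4:ℝ)⁻¹^i, by rintro r ⟨m, rfl⟩; exact (hsums i m).2⟩
  choose T hTLC hTtend hTnorm using hTsel
  have hTle : ∀ i, LN X (T i) ≤ (4:ℝ)⁻¹^i := by
    intro i
    rw [hTnorm i]
    exact ciSup_le fun m => (hsums i m).2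
  have hkey : ∀ᵐ x ∂μ, ∀ i,
      Tendsto (fun m => ∑ l ∈ Finset.range m, |g (i+l) x|) atTop (𝓝 (T i x)) := by
    filter_upwards [ae_all_iff.2 hTtend] with x hx
    intro i
    refine (hx i).congr fun m => ?_
    rw [Finset.sum_apply]
  have haelim : ∀ᵐ x ∂μ, Summable (fun l => g l x) ∧ Summable (fun l => |g l x|) ∧
      (∀ i, (∑' l, |g (i+l) x|) = T i x) := by
    filter_upwards [hkey] with x hx
    have hsum0 : Summable fun l => |g l x| := by
      refine summable_of_sum_range_le (c := T 0 x) (fun l => abs_nonneg _) fun m => ?_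
      have hm : Monotone fun m => ∑ l ∈ Finset.range m, |g (0+l) x| := by
        intro a b hab
        refine Finset.sum_le_sum_of_subset_of_nonneg (Finset.range_subset_range.2 hab) ?_
        intro l _ _
        exact abs_nonneg _
      have := hm.ge_of_tendsto (hx 0) m
      refine le_trans (le_of_eq ?_) this
      exact Finset.sum_congr rfl fun l _ => by rw [Nat.zero_add]
    refine ⟨hsum0.of_abs, hsum0, fun i => ?_⟩
    have hsumi : Summable fun l => |g (i+l) x| := by
      have := (summable_nat_add_iff i).2 hsum0
      refine this.congr fun l => ?_
      rw [Nat.add_comm]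
    exact tendsto_nhds_unique hsumi.hasSum.tendsto_sum_nat (hx i)
  have hpart : ∀ x i, f (n i) x = f (n 0) x + ∑ l ∈ Finset.range i, g l x := by
    intro x i
    have hS := Finset.sum_range_sub (fun l => f (n l) x) i
    have : ∑ l ∈ Finset.range i, g l x = f (n i) x - f (n 0) x := hS
    linarith
  clear_value c
  set gl : Ω → ℝ := fun x => f (n 0) x + ∑' l, g l x with hgl
  have htendgl : ∀ᵐ x ∂μ, Tendsto (fun i => f (n i) x) atTop (𝓝 (gl x)) := by
    filter_upwards [haelim] with x hx
    have h2 : Tendsto (fun i => ∑ l ∈ Finset.range i, g l x) atTop (𝓝 (∑' l, g l x)) :=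
      hx.1.hasSum.tendsto_sum_nat
    have h3 := h2.const_add (f (n 0) x)
    exact h3.congr fun i => (hpart x i).symm
  have hglmeas : AEMeasurable gl μ :=
    aemeasurable_of_tendsto_metrizable_ae atTop (fun i => (hf (n i)).1) htendgl
  have hT0shift : ∀ᵐ x ∂μ, (∑' l, |g l x|) = T 0 x := by
    filter_upwards [haelim] with x hx
    have := hx.2.2 0
    refine Eq.trans ?_ this
    exact tsum_congr fun l => by rw [Nat.zero_add]
  set D : Ω → ℝ := (fun x => |f (n 0) x|) + T 0 with hD
  have hDLC : D ∈ LC X := (add_LC (abs_LC (hf (n 0))).1 (hTLC 0)).1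
  have hglLC : gl ∈ LC X := by
    refine ⟨hglmeas, (ideal_LC hDLC.2 hglmeas ?_).1⟩
    filter_upwards [haelim, hT0shift] with x hx hT0
    have hTnn : 0 ≤ T 0 x := by
      rw [← hT0]
      exact tsum_nonneg fun l => abs_nonneg _
    have habs : |∑' l, g l x| ≤ ∑' l, |g l x| := by
      have := norm_tsum_le_tsum_norm (f := fun l => g l x)
        (by simpa [Real.norm_eq_abs] using hx.2.1)
      simpa [Real.norm_eq_abs] using this
    have hDx : |D x| = |f (n 0) x| + T 0 x := by
      rw [hD]
      simp only [Pi.add_apply]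
      exact abs_of_nonneg (add_nonneg (abs_nonneg _) hTnn)
    rw [hDx, hgl]
    calc |f (n 0) x + ∑' l, g l x| ≤ |f (n 0) x| + |∑' l, g l x| := abs_add_le _ _
      _ ≤ |f (n 0) x| + ∑' l, |g l x| := by linarith
      _ = |f (n 0) x| + T 0 x := by rw [hT0]
  have htail : ∀ i, LN X (f (n i) - gl) ≤ (4:ℝ)⁻¹^i := by
    intro i
    refine le_trans (ideal_LC (hTLC i).2 ((hf (n i)).1.sub hglmeas) ?_).2 (hTle i)
    filter_upwards [haelim] with x hx
    obtain ⟨hsumg, hsumabs, htsum⟩ := hx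
    have hTnn : 0 ≤ T i x := by
      rw [← htsum i]
      exact tsum_nonneg fun l => abs_nonneg _
    have hsumtail : Summable fun l => g (l + i) x := (summable_nat_add_iff i).2 hsumg
    have heq : gl x - f (n i) x = ∑' l, g (l + i) x := by
      have hsplit := hsumg.sum_add_tsum_nat_add i
      have h9 : f (n i) x = f (n 0) x + ∑ l ∈ Finset.range i, g l x := hpart x i
      have h10 : gl x = f (n 0) x + ∑' l, g l x := rfl
      rw [h10, h9]
      linarith [hsplit]
    have hsumabstail : Summable fun l => |g (l + i) x| := (summable_nat_add_iff i).2 hsumabs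
    have habs2 : |f (n i) x - gl x| ≤ ∑' l, |g (l + i) x| := by
      rw [abs_sub_comm, heq]
      have := norm_tsum_le_tsum_norm (f := fun l => g (l + i) x)
        (by simpa [Real.norm_eq_abs] using hsumabstail)
      simpa [Real.norm_eq_abs] using this
    have hts : (∑' l, |g (l + i) x|) = T i x := by
      rw [← htsum i]
      exact tsum_congr fun l => by rw [Nat.add_comm]
    rw [abs_of_nonneg hTnn, ← hts]
    simpa using habs2
  refine ⟨gl, hglLC, ?_⟩
  rw [Metric.tendsto_atTop]
  intro ε hε
  obtain ⟨i, hi⟩ := exists_pow_lt_of_lt_one (x := ε / (2 * X.K))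
    (by positivity) (by norm_num : (4:ℝ)⁻¹ < 1)
  refine ⟨Nf i, fun m hm => ?_⟩
  have h1 : LN X (f m - f (n i)) < c i := hNf i m hm (n i) (hnge i)
  have h2 : LN X (f (n i) - gl) ≤ (4:ℝ)⁻¹^i := htail i
  have hsplit : f m - gl = (f m - f (n i)) + (f (n i) - gl) :=
    (sub_add_sub_cancel (f m) (f (n i)) gl).symm
  have h3 := (add_LC (sub_LC (hf m) (hf (n i))).1 (sub_LC (hf (n i)) hglLC).1).2
  rw [← hsplit] at h3
  have hci : c i ≤ (4:ℝ)⁻¹^i := by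
    rw [hc]
    have ha : ((X.K ^ (i+1))⁻¹ : ℝ) ≤ 1 := by
      rw [inv_le_one_iff₀]
      right
      exact one_le_pow₀ hK1
    have hb : (4:ℝ)⁻¹^(i+1) ≤ (4:ℝ)⁻¹^i :=
      pow_le_pow_of_le_one (by norm_num) (by norm_num) (Nat.le_succ i)
    calc (X.K ^ (i+1))⁻¹ * (4:ℝ)⁻¹^(i+1) ≤ 1 * (4:ℝ)⁻¹^(i+1) :=
          mul_le_mul_of_nonneg_right ha (by positivity)
      _ = (4:ℝ)⁻¹^(i+1) := one_mul _
      _ ≤ (4:ℝ)⁻¹^i := hb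
  have h4 : LN X (f m - gl) < ε := by
    have h5 : LN X (f m - gl) ≤ X.K * (LN X (f m - f (n i)) + LN X (f (n i) - gl)) := h3
    have h6 : X.K * (LN X (f m - f (n i)) + LN X (f (n i) - gl)) <
        X.K * (c i + (4:ℝ)⁻¹^i) := by
      refine mul_lt_mul_of_pos_left ?_ hK0
      have := LN_nonneg X (f (n i) - gl)
      linarith
    have h7 : X.K * (c i + (4:ℝ)⁻¹^i) ≤ 2 * X.K * (4:ℝ)⁻¹^i := by nlinarith
    have h8 : 2 * X.K * (4:ℝ)⁻¹^i < ε := by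
      rw [lt_div_iff₀ (by positivity)] at hi
      nlinarith
    linarith
  rw [Real.dist_eq, sub_zero, abs_of_nonneg (LN_nonneg X _)]
  exact h4

end FatouAux

/-- Every quasi-Banach function space embeds, with norm at most the original
norm, into a quasi-Banach function space `Y` with the Fatou property, where `Y`
is given by the Lorentz construction. -/
theorem embeds_into_fatou_space
    {Ω : Type*} [MeasurableSpace Ω] {μ : Measure Ω} [SigmaFinite μ]
    (X : QBFS μ) :
    ∃ Y : QBFS μ,
      Y.carrier = {f | AEMeasurable f μ ∧ ∃ g, ApproxFromBelow X f g} ∧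
      (∀ f ∈ Y.carrier, Y.qnorm f =
        sInf {r | ∃ g, ApproxFromBelow X f g ∧
          r = sSup (Set.range fun n => X.qnorm (g n))}) ∧
      Y.Fatou ∧ X.carrier ⊆ Y.carrier ∧
      ∀ f ∈ X.carrier, Y.qnorm f ≤ X.qnorm f := by
  refine ⟨⟨{f | AEMeasurable f μ ∧ ∃ g, ApproxFromBelow X f g}, FatouAux.LN X, X.K, X.one_le_K,
      fun f hf => hf.1,
      FatouAux.zero_mem_LC,
      fun f hf g hg => (FatouAux.add_LC hf hg).1,
      fun c f hf => (FatouAux.smul_LC c hf).1,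
      fun f _ => FatouAux.LN_nonneg X f,
      fun f hf => FatouAux.ae_zero_iff_LN_zero hf,
      fun c f hf => (FatouAux.smul_LC c hf).2,
      fun f hf g hg => (FatouAux.add_LC hf hg).2,
      fun f hf g hg hle => ⟨⟨hg, (FatouAux.ideal_LC hf.2 hg hle).1⟩,
        (FatouAux.ideal_LC hf.2 hg hle).2⟩,
      ?_,
      fun f hf hcau => FatouAux.complete_LC X f hf hcau⟩,
    rfl, fun f _ => rfl,
    fun f g hf hg hae hbdd => FatouAux.fatou_LC X f g hf hg hae hbdd,
    fun f hf => (FatouAux.mem_LC_of_mem hf).1,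
    fun f hf => (FatouAux.mem_LC_of_mem hf).2⟩
  intro E hE hEpos
  obtain ⟨F, h1, h2, h3, h4⟩ := X.saturated E hE hEpos
  exact ⟨F, h1, h2, h3, (FatouAux.mem_LC_of_mem h4).1⟩
end

section
/- Suppose X and Y are quasi-Banach function spaces over (Ω,μ), X ⊆ Y, and ‖f‖_X = ‖f‖_Y for all f ∈ X. If X has the Fatou property, then X = Y. -/
open MeasureTheory Filter Set Topology

section AuxLemmas

open scoped ENNReal

variable {Ω : Type*} [MeasurableSpace Ω] {μ : Measure Ω}

lemma Set.accumulate_zero' {β : Type*} (s : ℕ → Set β) :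
    Set.accumulate s 0 = s 0 := by
  ext x; simp [Set.mem_accumulate, Nat.le_zero]

lemma Set.accumulate_succ' {β : Type*} (s : ℕ → Set β) (n : ℕ) :
    Set.accumulate s (n + 1) = Set.accumulate s n ∪ s (n + 1) := by
  ext x
  simp only [Set.mem_accumulate, Set.mem_union]
  constructor
  · rintro ⟨y, hy, hx⟩
    rcases Nat.lt_succ_iff_lt_or_eq.mp (Nat.lt_succ_of_le hy) with h | h
    · exact Or.inl ⟨y, Nat.lt_succ_iff.mp h, hx⟩
    · subst h; exact Or.inr hx
  · rintro (⟨y, hy, hx⟩ | hx)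
    · exact ⟨y, le_trans hy (Nat.le_succ n), hx⟩
    · exact ⟨n + 1, le_rfl, hx⟩

/-- Indicator of a union of two good sets is in `X`. -/
lemma QBFS.indicator_union_mem (X : QBFS μ) {E F : Set Ω}
    (hE : MeasurableSet E) (hF : MeasurableSet F)
    (h1 : E.indicator (fun _ => (1 : ℝ)) ∈ X.carrier)
    (h2 : F.indicator (fun _ => (1 : ℝ)) ∈ X.carrier) :
    (E ∪ F).indicator (fun _ => (1 : ℝ)) ∈ X.carrier := by
  have hadd := X.add_mem _ h1 _ h2
  refine (X.ideal _ hadd _ ?_ ?_).1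
  · exact ((measurable_const.indicator (hE.union hF)).aemeasurable)
  · filter_upwards with x
    by_cases hx : x ∈ E ∪ F
    · rw [Set.indicator_of_mem hx]
      simp only [Pi.add_apply]
      rcases hx with hx | hx
      · have h1' : E.indicator (fun _ => (1 : ℝ)) x = 1 := Set.indicator_of_mem hx _
        have h2' : (0 : ℝ) ≤ F.indicator (fun _ => (1 : ℝ)) x :=
          Set.indicator_nonneg (fun _ _ => zero_le_one) x
        rw [abs_one, abs_of_nonneg (by rw [h1']; linarith)]
        rw [h1']; linarith
      · have h1' : F.indicator (fun _ => (1 : ℝ)) x = 1 := Set.indicator_of_mem hx _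
        have h2' : (0 : ℝ) ≤ E.indicator (fun _ => (1 : ℝ)) x :=
          Set.indicator_nonneg (fun _ _ => zero_le_one) x
        rw [abs_one, abs_of_nonneg (by rw [h1']; linarith)]
        rw [h1']; linarith
    · rw [Set.indicator_of_notMem hx]
      simp [abs_nonneg]

/-- Exhaustion inside a set of finite measure: a countable family of good sets
covering `A` up to a null set. -/
lemma QBFS.exists_cover_of_finite (X : QBFS μ) {A : Set Ω}
    (hA : MeasurableSet A) (hAfin : μ A ≠ ∞) :
    ∃ E : ℕ → Set Ω, (∀ n, E n ⊆ A) ∧ (∀ n, MeasurableSet (E n)) ∧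
      (∀ n, (E n).indicator (fun _ => (1 : ℝ)) ∈ X.carrier) ∧
      μ (A \ ⋃ n, E n) = 0 := by
  classical
  set C : Set (Set Ω) :=
    {F | F ⊆ A ∧ MeasurableSet F ∧ F.indicator (fun _ => (1 : ℝ)) ∈ X.carrier} with hC
  set S : Set ℝ≥0∞ := μ '' C with hS
  have hemp : (∅ : Set Ω) ∈ C := by
    refine ⟨Set.empty_subset _, MeasurableSet.empty, ?_⟩
    rw [Set.indicator_empty]
    exact X.zero_mem
  have hSne : S.Nonempty := ⟨μ ∅, ⟨∅, hemp, rfl⟩⟩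
  set s : ℝ≥0∞ := sSup S with hs
  have hsle : s ≤ μ A := by
    refine sSup_le ?_
    rintro m ⟨F, hF, rfl⟩
    exact measure_mono hF.1
  have hsfin : s ≠ ∞ := fun h => hAfin (top_le_iff.mp (h ▸ hsle))
  -- choose a sequence almost attaining the sup
  have hchoice : ∀ n : ℕ, ∃ F ∈ C, s < μ F + (↑(n + 1) : ℝ≥0∞)⁻¹ := by
    intro n
    by_contra hcon
    push_neg at hcon
    have hsle' : s ≤ s - (↑(n + 1) : ℝ≥0∞)⁻¹ := by
      refine sSup_le ?_
      rintro m ⟨F, hF, rfl⟩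
      exact ENNReal.le_sub_of_add_le_right (ENNReal.inv_ne_top.mpr (by simp)) (hcon F hF)
    by_cases hs0 : s = 0
    · have := hcon ∅ hemp
      rw [hs0] at this
      simp at this
    · have : s - (↑(n + 1) : ℝ≥0∞)⁻¹ < s :=
        ENNReal.sub_lt_self hsfin hs0 (ENNReal.inv_ne_zero.mpr (ENNReal.natCast_ne_top _))
      exact absurd (lt_of_le_of_lt hsle' this) (lt_irrefl s)
  choose F hFC hFs using hchoice
  refine ⟨F, fun n => (hFC n).1, fun n => (hFC n).2.1, fun n => (hFC n).2.2, ?_⟩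
  by_contra hpos
  have hpos' : 0 < μ (A \ ⋃ n, F n) := pos_iff_ne_zero.mpr hpos
  have hmeasU : MeasurableSet (⋃ n, F n) := MeasurableSet.iUnion fun n => (hFC n).2.1
  obtain ⟨G, hGsub, hGmeas, hGpos, hGmem⟩ :=
    X.saturated _ (hA.diff hmeasU) hpos'
  -- G is disjoint from every F n
  have hdisj : ∀ n, Disjoint (F n) G := by
    intro n
    refine Set.disjoint_left.mpr fun x hx hxG => ?_
    exact (hGsub hxG).2 (Set.mem_iUnion.mpr ⟨n, hx⟩)
  have hunionC : ∀ n, F n ∪ G ∈ C := by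
    intro n
    refine ⟨Set.union_subset (hFC n).1 (fun x hx => (hGsub hx).1),
      (hFC n).2.1.union hGmeas,
      X.indicator_union_mem (hFC n).2.1 hGmeas (hFC n).2.2 hGmem⟩
  have hle : ∀ n, μ (F n) + μ G ≤ s := by
    intro n
    rw [← measure_union (hdisj n) hGmeas]
    exact le_sSup ⟨F n ∪ G, hunionC n, rfl⟩
  obtain ⟨n, hn⟩ := ENNReal.exists_inv_nat_lt (ne_of_gt hGpos)
  have hn' : (↑(n + 1) : ℝ≥0∞)⁻¹ < μ G := by
    refine lt_of_le_of_lt ?_ hn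
    exact ENNReal.inv_le_inv.mpr (by exact_mod_cast Nat.le_succ n)
  have : s < s := by
    calc s < μ (F n) + (↑(n + 1) : ℝ≥0∞)⁻¹ := hFs n
    _ ≤ μ (F n) + μ G := add_le_add le_rfl hn'.le
    _ ≤ s := hle n
  exact absurd this (lt_irrefl s)

/-- A countable a.e. cover of `Ω` by good sets. -/
lemma QBFS.exists_cover (X : QBFS μ) [SigmaFinite μ] :
    ∃ E : ℕ → Set Ω, (∀ n, MeasurableSet (E n)) ∧
      (∀ n, (E n).indicator (fun _ => (1 : ℝ)) ∈ X.carrier) ∧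
      μ (⋃ n, E n)ᶜ = 0 := by
  classical
  have h : ∀ k : ℕ, ∃ E : ℕ → Set Ω,
      (∀ n, E n ⊆ spanningSets μ k) ∧ (∀ n, MeasurableSet (E n)) ∧
      (∀ n, (E n).indicator (fun _ => (1 : ℝ)) ∈ X.carrier) ∧
      μ (spanningSets μ k \ ⋃ n, E n) = 0 := fun k =>
    X.exists_cover_of_finite (measurableSet_spanningSets μ k)
      (measure_spanningSets_lt_top μ k).ne
  choose E hEsub hEmeas hEmem hEnull using h
  refine ⟨fun n => E (Nat.unpair n).1 (Nat.unpair n).2,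
    fun n => hEmeas _ _, fun n => hEmem _ _, ?_⟩
  have hU : (⋃ n, E (Nat.unpair n).1 (Nat.unpair n).2) = ⋃ k, ⋃ j, E k j := by
    ext x
    simp only [Set.mem_iUnion]
    constructor
    · rintro ⟨n, hn⟩; exact ⟨_, _, hn⟩
    · rintro ⟨k, j, hn⟩
      exact ⟨Nat.pair k j, by rw [Nat.unpair_pair]; exact hn⟩
  rw [hU]
  have hsubset : (⋃ k, ⋃ j, E k j)ᶜ ⊆ ⋃ k, (spanningSets μ k \ ⋃ j, E k j) := by
    intro x hx
    have hxspan : x ∈ ⋃ k, spanningSets μ k := by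
      rw [iUnion_spanningSets]; trivial
    obtain ⟨k, hk⟩ := Set.mem_iUnion.mp hxspan
    refine Set.mem_iUnion.mpr ⟨k, hk, fun hxE => hx ?_⟩
    exact Set.mem_iUnion.mpr ⟨k, hxE⟩
  refine measure_mono_null hsubset ?_
  exact measure_iUnion_null fun k => hEnull k

end AuxLemmas

/-- A quasi-Banach function space with the Fatou property admits no proper
isometric quasi-Banach function space extension. -/
theorem no_proper_extension_of_fatou
    {Ω : Type*} [MeasurableSpace Ω] {μ : Measure Ω} [SigmaFinite μ]
    (X Y : QBFS μ) (hsub : X.carrier ⊆ Y.carrier)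
    (hnorm : ∀ f ∈ X.carrier, X.qnorm f = Y.qnorm f)
    (hfatou : X.Fatou) :
    X.carrier = Y.carrier := by
  classical
  refine Set.Subset.antisymm hsub fun f hf => ?_
  obtain ⟨E, hEmeas, hEmem, hEnull⟩ := X.exists_cover
  -- accumulated good sets
  set G : ℕ → Set Ω := Set.accumulate E with hG
  have hGmeas : ∀ n, MeasurableSet (G n) := fun n =>
    MeasurableSet.iUnion fun i => MeasurableSet.iUnion fun _ => hEmeas i
  have hGmem : ∀ n, (G n).indicator (fun _ => (1 : ℝ)) ∈ X.carrier := by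
    intro n
    induction n with
    | zero =>
        have : G 0 = E 0 := Set.accumulate_zero' E
        rw [this]; exact hEmem 0
    | succ n ih =>
        have : G (n + 1) = G n ∪ E (n + 1) := Set.accumulate_succ' E n
        rw [this]
        exact X.indicator_union_mem (hGmeas n) (hEmeas (n + 1)) ih (hEmem (n + 1))
  have hfae : AEMeasurable f μ := Y.aemeasurable_mem f hf
  -- the approximating sequence
  set F : ℕ → Ω → ℝ := fun n => (G n).indicator (fun x => min |f x| (n : ℝ)) with hF
  have hFae : ∀ n, AEMeasurable (F n) μ :=
    fun n => (((continuous_abs.measurable.comp_aemeasurable hfae).min aemeasurable_const)).indicator (hGmeas n)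
  have hFnonneg : ∀ n x, 0 ≤ F n x := by
    intro n x
    exact Set.indicator_nonneg (fun y _ => le_min (abs_nonneg _) (Nat.cast_nonneg n)) x
  have hFle : ∀ n x, F n x ≤ |f x| := by
    intro n x
    by_cases hx : x ∈ G n
    · rw [hF]; simp only [Set.indicator_of_mem hx]; exact min_le_left _ _
    · rw [hF]; simp only [Set.indicator_of_notMem hx]; exact abs_nonneg _
  have hFmono : ∀ x, Monotone fun n => F n x := by
    intro x n m hnm
    by_cases hx : x ∈ G n
    · have hx' : x ∈ G m := Set.monotone_accumulate hnm hx
      rw [hF]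
      simp only [Set.indicator_of_mem hx, Set.indicator_of_mem hx']
      exact min_le_min le_rfl (by exact_mod_cast hnm)
    · rw [hF]; simp only [Set.indicator_of_notMem hx]
      exact hFnonneg m x
  -- membership in X
  have hFmemX : ∀ n, F n ∈ X.carrier := by
    intro n
    have hdom : ((n : ℝ) • (G n).indicator (fun _ => (1 : ℝ))) ∈ X.carrier :=
      X.smul_mem _ _ (hGmem n)
    refine (X.ideal _ hdom _ (hFae n) ?_).1
    filter_upwards with x
    by_cases hx : x ∈ G n
    · rw [hF]
      simp only [Set.indicator_of_mem hx, Pi.smul_apply, smul_eq_mul, mul_one]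
      rw [abs_of_nonneg (le_min (abs_nonneg _) (Nat.cast_nonneg n)),
        abs_of_nonneg (Nat.cast_nonneg n : (0:ℝ) ≤ n)]
      exact min_le_right _ _
    · rw [hF]
      simp [Set.indicator_of_notMem hx]
  -- norms bounded by the Y-norm of f
  have hFbdd : BddAbove (Set.range fun n => X.qnorm (F n)) := by
    refine ⟨Y.qnorm f, ?_⟩
    rintro r ⟨n, rfl⟩
    show X.qnorm (F n) ≤ Y.qnorm f
    rw [hnorm _ (hFmemX n)]
    refine (Y.ideal f hf (F n) (hFae n) ?_).2
    filter_upwards with x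
    rw [abs_of_nonneg (hFnonneg n x)]
    exact hFle n x
  -- apply Fatou to get |f| ∈ X
  have habs : (fun x => |f x|) ∈ X.carrier := by
    refine (hfatou F (fun x => |f x|) hFmemX (continuous_abs.measurable.comp_aemeasurable hfae) ?_ hFbdd).1
    have hnull : ∀ᵐ x ∂μ, x ∈ ⋃ n, E n := by
      rw [MeasureTheory.ae_iff]
      have : {a | ¬ a ∈ ⋃ n, E n} = (⋃ n, E n)ᶜ := rfl
      rw [this]; exact hEnull
    filter_upwards [hnull] with x hx
    refine ⟨hFnonneg 0 x, hFmono x, ?_⟩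
    obtain ⟨j, hj⟩ := Set.mem_iUnion.mp hx
    obtain ⟨m, hm⟩ := exists_nat_ge |f x|
    have hev : ∀ n ≥ max j m, F n x = |f x| := by
      intro n hn
      have hxG : x ∈ G n :=
        Set.monotone_accumulate (le_trans (le_max_left j m) hn)
          (Set.subset_accumulate hj)
      rw [hF]
      simp only [Set.indicator_of_mem hxG]
      refine min_eq_left (le_trans hm ?_)
      exact_mod_cast le_trans (le_max_right j m) hn
    refine Tendsto.congr' ?_ tendsto_const_nhds
    filter_upwards [eventually_ge_atTop (max j m)] with n hn
    exact (hev n hn).symm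
  -- conclude f ∈ X
  refine (X.ideal _ habs f hfae ?_).1
  filter_upwards with x
  rw [abs_abs]
end

section
/- Let X be an order-continuous quasi-Banach function space over (Ω,μ). Then every bounded linear functional on X is given by integration against a function in the Köthe dual: for every x* ∈ X* there exists g ∈ X' with x*(f) = ∫_Ω fg dμ for all f ∈ X. -/
open MeasureTheory Filter Set Topology

namespace DualRepAux

open MeasureTheory Filter Set Topology

variable {Ω : Type*} [MeasurableSpace Ω] {μ : Measure Ω}

/-- Shorthand for the real indicator of a set. -/
noncomputable def ind (A : Set Ω) : Ω → ℝ := A.indicator (fun _ => (1 : ℝ))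

lemma ind_of_mem {A : Set Ω} {x : Ω} (hx : x ∈ A) : ind A x = 1 :=
  Set.indicator_of_mem hx _

lemma ind_of_not_mem {A : Set Ω} {x : Ω} (hx : x ∉ A) : ind A x = 0 :=
  Set.indicator_of_notMem hx _

lemma ind_nonneg (A : Set Ω) (x : Ω) : 0 ≤ ind A x := by
  by_cases hx : x ∈ A
  · rw [ind_of_mem hx]; norm_num
  · rw [ind_of_not_mem hx]

lemma ind_le_one (A : Set Ω) (x : Ω) : ind A x ≤ 1 := by
  by_cases hx : x ∈ A
  · rw [ind_of_mem hx]
  · rw [ind_of_not_mem hx]; norm_num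

lemma abs_ind_le_abs_ind {A B : Set Ω} (h : A ⊆ B) (x : Ω) : |ind A x| ≤ |ind B x| := by
  by_cases hx : x ∈ A
  · rw [ind_of_mem hx, ind_of_mem (h hx)]
  · rw [ind_of_not_mem hx]; simp [abs_nonneg]

lemma ind_measurable {A : Set Ω} (hA : MeasurableSet A) : Measurable (ind A) :=
  (measurable_const.indicator hA)

lemma ind_empty : ind (∅ : Set Ω) = 0 := by
  ext x; simp [ind]

lemma mem_of_le (X : QBFS μ) {f : Ω → ℝ} (hf : f ∈ X.carrier) {h : Ω → ℝ}
    (hh : AEMeasurable h μ) (hle : ∀ x, |h x| ≤ |f x|) :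
    h ∈ X.carrier ∧ X.qnorm h ≤ X.qnorm f :=
  X.ideal f hf h hh (Filter.Eventually.of_forall hle)

lemma ind_mem (X : QBFS μ) {A B : Set Ω} (hA : MeasurableSet A) (hAB : A ⊆ B)
    (hB : ind B ∈ X.carrier) :
    ind A ∈ X.carrier ∧ X.qnorm (ind A) ≤ X.qnorm (ind B) :=
  mem_of_le X hB (ind_measurable hA).aemeasurable (abs_ind_le_abs_ind hAB)

lemma phi_zero (X : QBFS μ) (φ : (Ω → ℝ) → ℝ)
    (hsmul : ∀ (c : ℝ), ∀ f ∈ X.carrier, φ (c • f) = c * φ f) : φ 0 = 0 := by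
  have h := hsmul 0 0 X.zero_mem
  simpa using h

lemma phi_neg (X : QBFS μ) (φ : (Ω → ℝ) → ℝ)
    (hsmul : ∀ (c : ℝ), ∀ f ∈ X.carrier, φ (c • f) = c * φ f)
    {f : Ω → ℝ} (hf : f ∈ X.carrier) : φ (-f) = -φ f := by
  have h := hsmul (-1) f hf
  simpa using h

lemma phi_sub (X : QBFS μ) (φ : (Ω → ℝ) → ℝ)
    (hadd : ∀ f ∈ X.carrier, ∀ g ∈ X.carrier, φ (f + g) = φ f + φ g)
    (hsmul : ∀ (c : ℝ), ∀ f ∈ X.carrier, φ (c • f) = c * φ f)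
    {f g : Ω → ℝ} (hf : f ∈ X.carrier) (hg : g ∈ X.carrier) :
    φ (f - g) = φ f - φ g := by
  have hng : -g ∈ X.carrier := by
    have := X.smul_mem (-1) g hg; simpa using this
  have h := hadd f hf (-g) hng
  rw [sub_eq_add_neg, h, phi_neg X φ hsmul hg, sub_eq_add_neg]

lemma sub_mem (X : QBFS μ) {f g : Ω → ℝ} (hf : f ∈ X.carrier) (hg : g ∈ X.carrier) :
    f - g ∈ X.carrier := by
  have hng : -g ∈ X.carrier := by
    have := X.smul_mem (-1) g hg; simpa using this
  have := X.add_mem f hf (-g) hng; simpa [sub_eq_add_neg] using this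

lemma phi_congr (X : QBFS μ) (φ : (Ω → ℝ) → ℝ)
    (hadd : ∀ f ∈ X.carrier, ∀ g ∈ X.carrier, φ (f + g) = φ f + φ g)
    (hsmul : ∀ (c : ℝ), ∀ f ∈ X.carrier, φ (c • f) = c * φ f)
    (C : ℝ) (hb : ∀ f ∈ X.carrier, |φ f| ≤ C * X.qnorm f)
    {f g : Ω → ℝ} (hf : f ∈ X.carrier) (hg : g ∈ X.carrier)
    (hfg : f =ᵐ[μ] g) : φ f = φ g := by
  have hmem : f - g ∈ X.carrier := sub_mem X hf hg
  have hq : X.qnorm (f - g) = 0 := by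
    rw [X.qnorm_eq_zero_iff _ hmem]
    filter_upwards [hfg] with x hx
    simp [hx]
  have hbb := hb (f - g) hmem
  rw [hq, mul_zero] at hbb
  have h0 : φ (f - g) = 0 :=
    abs_eq_zero.mp (le_antisymm hbb (abs_nonneg _))
  have hps := phi_sub X φ hadd hsmul hf hg
  rw [hps] at h0
  linarith

/-- `φ` of a finite sum. -/
lemma phi_finset_sum (X : QBFS μ) (φ : (Ω → ℝ) → ℝ)
    (hadd : ∀ f ∈ X.carrier, ∀ g ∈ X.carrier, φ (f + g) = φ f + φ g)
    (hsmul : ∀ (c : ℝ), ∀ f ∈ X.carrier, φ (c • f) = c * φ f)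
    {ι : Type*} (s : Finset ι) (h : ι → Ω → ℝ)
    (hmem : ∀ i ∈ s, h i ∈ X.carrier) :
    (∑ i ∈ s, h i) ∈ X.carrier ∧ φ (∑ i ∈ s, h i) = ∑ i ∈ s, φ (h i) := by
  classical
  induction s using Finset.induction_on with
  | empty => simpa using ⟨X.zero_mem, phi_zero X φ hsmul⟩
  | insert a s hnot ih =>
    have h1 : h a ∈ X.carrier := hmem a (Finset.mem_insert_self a s)
    have h2 := ih (fun i hi => hmem i (Finset.mem_insert_of_mem hi))
    rw [Finset.sum_insert hnot, Finset.sum_insert hnot]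
    exact ⟨X.add_mem _ h1 _ h2.1, by rw [hadd _ h1 _ h2.1, h2.2]⟩

end DualRepAux
namespace DualRepAux

open MeasureTheory Filter Set Topology
open scoped Classical

variable {Ω : Type*} [MeasurableSpace Ω] {μ : Measure Ω}

/-- The tail indicators of a disjoint sequence tend to zero in quasi-norm. -/
lemma tail_qnorm_tendsto (X : QBFS μ) (hoc : X.OrderContinuous)
    {F : Set Ω} (hFm : MeasurableSet F) (hFc : ind F ∈ X.carrier)
    {E : ℕ → Set Ω} (hEm : ∀ i, MeasurableSet (E i)) (hEd : Pairwise (Function.onFun Disjoint E)) :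
    Tendsto (fun N => X.qnorm (ind (F ∩ ⋃ (i) (_ : N ≤ i), E i))) atTop (𝓝 0) := by
  set A : ℕ → Set Ω := fun N => F ∩ ⋃ (i) (_ : N ≤ i), E i with hA
  have hAm : ∀ N, MeasurableSet (A N) := fun N =>
    hFm.inter (MeasurableSet.iUnion fun i => MeasurableSet.iUnion fun _ => hEm i)
  have hAsub : ∀ N, A N ⊆ F := fun N => Set.inter_subset_left
  have hAmem : ∀ N, ind (A N) ∈ X.carrier := fun N =>
    (ind_mem X (hAm N) (hAsub N) hFc).1
  have hAanti : Antitone A := by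
    intro N M hNM x hx
    obtain ⟨hxF, hxU⟩ := hx
    refine ⟨hxF, ?_⟩
    simp only [Set.mem_iUnion] at hxU ⊢
    obtain ⟨i, hi, hxi⟩ := hxU
    exact ⟨i, le_trans hNM hi, hxi⟩
  apply hoc
  · exact hAmem
  · refine Filter.Eventually.of_forall fun x => ⟨?_, ?_⟩
    · intro N M hNM
      show ind (A M) x ≤ ind (A N) x
      by_cases hx : x ∈ A M
      · rw [ind_of_mem hx, ind_of_mem (hAanti hNM hx)]
      · rw [ind_of_not_mem hx]
        exact ind_nonneg _ _
    · have hev : ∀ᶠ N in atTop, ind (A N) x = 0 := by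
        by_cases hx : ∃ i, x ∈ E i
        · obtain ⟨i, hi⟩ := hx
          filter_upwards [eventually_ge_atTop (i + 1)] with N hN
          apply ind_of_not_mem
          rintro ⟨-, hxU⟩
          simp only [Set.mem_iUnion] at hxU
          obtain ⟨j, hj, hxj⟩ := hxU
          have hij : i ≠ j := by omega
          exact (hEd hij).le_bot ⟨hi, hxj⟩
        · push_neg at hx
          refine Filter.Eventually.of_forall fun N => ind_of_not_mem ?_
          rintro ⟨-, hxU⟩
          simp only [Set.mem_iUnion] at hxU
          obtain ⟨j, _, hxj⟩ := hxU
          exact hx j hxj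
      exact Tendsto.congr' (hev.mono fun N h => h.symm) tendsto_const_nhds

/-- Additivity of `φ` over disjoint indicators. -/
lemma phi_ind_union (X : QBFS μ) (φ : (Ω → ℝ) → ℝ)
    (hadd : ∀ f ∈ X.carrier, ∀ g ∈ X.carrier, φ (f + g) = φ f + φ g)
    {A B : Set Ω} (hd : Disjoint A B)
    (hA : ind A ∈ X.carrier) (hB : ind B ∈ X.carrier) :
    ind (A ∪ B) ∈ X.carrier ∧ φ (ind (A ∪ B)) = φ (ind A) + φ (ind B) := by
  have heq : ind (A ∪ B) = ind A + ind B := by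
    funext x
    rw [ind, Set.indicator_union_of_disjoint hd]
    rfl
  rw [heq]
  exact ⟨X.add_mem _ hA _ hB, hadd _ hA _ hB⟩

lemma phi_ind_biUnion (X : QBFS μ) (φ : (Ω → ℝ) → ℝ)
    (hadd : ∀ f ∈ X.carrier, ∀ g ∈ X.carrier, φ (f + g) = φ f + φ g)
    (hsmul : ∀ (c : ℝ), ∀ f ∈ X.carrier, φ (c • f) = c * φ f)
    {F : Set Ω} (hFm : MeasurableSet F) (hFc : ind F ∈ X.carrier)
    {E : ℕ → Set Ω} (hEm : ∀ i, MeasurableSet (E i)) (hEd : Pairwise (Function.onFun Disjoint E))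
    (s : Finset ℕ) :
    φ (ind ((⋃ i ∈ s, E i) ∩ F)) = ∑ i ∈ s, φ (ind (E i ∩ F)) := by
  induction s using Finset.induction_on with
  | empty =>
    simp only [Finset.sum_empty]
    rw [show ((⋃ i ∈ (∅ : Finset ℕ), E i) ∩ F) = ∅ by simp, ind_empty]
    exact phi_zero X φ hsmul
  | insert a s hnot ih =>
    have hsm : MeasurableSet (⋃ i ∈ s, E i) :=
      MeasurableSet.biUnion s.countable_toSet fun i _ => hEm i
    have hdecomp : (⋃ i ∈ insert a s, E i) ∩ F = (E a ∩ F) ∪ ((⋃ i ∈ s, E i) ∩ F) := by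
      rw [Finset.set_biUnion_insert, Set.union_inter_distrib_right]
    have hd : Disjoint (E a ∩ F) ((⋃ i ∈ s, E i) ∩ F) := by
      rw [Set.disjoint_left]
      rintro x ⟨hxa, -⟩ ⟨hxU, -⟩
      simp only [Set.mem_iUnion] at hxU
      obtain ⟨i, hi, hxi⟩ := hxU
      have hia : a ≠ i := fun h => hnot (h ▸ hi)
      exact (hEd hia).le_bot ⟨hxa, hxi⟩
    have hAmem : ind (E a ∩ F) ∈ X.carrier :=
      (ind_mem X ((hEm a).inter hFm) Set.inter_subset_right hFc).1
    have hBmem : ind ((⋃ i ∈ s, E i) ∩ F) ∈ X.carrier :=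
      (ind_mem X (hsm.inter hFm) Set.inter_subset_right hFc).1
    rw [hdecomp, (phi_ind_union X φ hadd hd hAmem hBmem).2, Finset.sum_insert hnot, ih]

end DualRepAux
namespace DualRepAux

open MeasureTheory Filter Set Topology
open scoped Classical

variable {Ω : Type*} [MeasurableSpace Ω] {μ : Measure Ω}

/-- The signed measure `E ↦ φ(1_{E ∩ F})` associated to a bounded functional `φ`. -/
noncomputable def phiMeasure (X : QBFS μ) (hoc : X.OrderContinuous) (φ : (Ω → ℝ) → ℝ)
    (hadd : ∀ f ∈ X.carrier, ∀ g ∈ X.carrier, φ (f + g) = φ f + φ g)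
    (hsmul : ∀ (c : ℝ), ∀ f ∈ X.carrier, φ (c • f) = c * φ f)
    (C : ℝ) (hC : 0 ≤ C) (hb : ∀ f ∈ X.carrier, |φ f| ≤ C * X.qnorm f)
    {F : Set Ω} (hFm : MeasurableSet F) (hFc : ind F ∈ X.carrier) :
    SignedMeasure Ω where
  measureOf' := fun E => if MeasurableSet E then φ (ind (E ∩ F)) else 0
  empty' := by
    show (if MeasurableSet (∅ : Set Ω) then φ (ind (∅ ∩ F)) else 0) = 0
    rw [if_pos MeasurableSet.empty, Set.empty_inter, ind_empty]
    exact phi_zero X φ hsmul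
  not_measurable' := fun E hE => if_neg hE
  m_iUnion' := by
    intro E hEm hEd
    show HasSum (fun i => if MeasurableSet (E i) then φ (ind (E i ∩ F)) else 0)
      (if MeasurableSet (⋃ i, E i) then φ (ind ((⋃ i, E i) ∩ F)) else 0)
    have hfun : (fun i => if MeasurableSet (E i) then φ (ind (E i ∩ F)) else 0)
        = fun i => φ (ind (E i ∩ F)) := funext fun i => if_pos (hEm i)
    rw [hfun, if_pos (MeasurableSet.iUnion hEm), HasSum, SummationFilter.unconditional_filter, Metric.tendsto_atTop]
    intro ε hε
    -- choose a threshold N with C * ‖tail N‖ < ε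
    have htail := tail_qnorm_tendsto X hoc hFm hFc hEm hEd
    have htail' : Tendsto (fun N => C * X.qnorm (ind (F ∩ ⋃ (i) (_ : N ≤ i), E i)))
        atTop (𝓝 0) := by
      simpa using htail.const_mul C
    have hev : ∀ᶠ N in atTop,
        C * X.qnorm (ind (F ∩ ⋃ (i) (_ : N ≤ i), E i)) < ε :=
      htail'.eventually_lt_const hε
    obtain ⟨N, hN⟩ := hev.exists
    refine ⟨Finset.range N, fun s hs => ?_⟩
    -- finite additivity
    have hsum : ∑ i ∈ s, φ (ind (E i ∩ F)) = φ (ind ((⋃ i ∈ s, E i) ∩ F)) :=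
      (phi_ind_biUnion X φ hadd hsmul hFm hFc hEm hEd s).symm
    set Us : Set Ω := ⋃ i ∈ s, E i with hUs
    set Ua : Set Ω := ⋃ i, E i with hUa
    have hUsm : MeasurableSet Us := MeasurableSet.biUnion s.countable_toSet fun i _ => hEm i
    have hUam : MeasurableSet Ua := MeasurableSet.iUnion hEm
    have hUsub : Us ⊆ Ua := by
      intro x hx
      simp only [hUs, Set.mem_iUnion] at hx
      obtain ⟨i, _, hxi⟩ := hx
      exact Set.mem_iUnion.2 ⟨i, hxi⟩
    have hdecomp : Ua ∩ F = (Us ∩ F) ∪ ((Ua \ Us) ∩ F) := by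
      rw [← Set.union_inter_distrib_right, Set.union_diff_cancel hUsub]
    have hd : Disjoint (Us ∩ F) ((Ua \ Us) ∩ F) := by
      rw [Set.disjoint_left]
      rintro x ⟨hx1, -⟩ ⟨⟨-, hx2⟩, -⟩
      exact hx2 hx1
    have hm1 : ind (Us ∩ F) ∈ X.carrier :=
      (ind_mem X (hUsm.inter hFm) Set.inter_subset_right hFc).1
    have hm2 : ind ((Ua \ Us) ∩ F) ∈ X.carrier :=
      (ind_mem X ((hUam.diff hUsm).inter hFm) Set.inter_subset_right hFc).1
    have hsplit : φ (ind (Ua ∩ F)) = φ (ind (Us ∩ F)) + φ (ind ((Ua \ Us) ∩ F)) := by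
      rw [hdecomp]
      exact (phi_ind_union X φ hadd hd hm1 hm2).2
    -- tail bound
    have hsubtail : (Ua \ Us) ∩ F ⊆ F ∩ ⋃ (i) (_ : N ≤ i), E i := by
      rintro x ⟨⟨hxU, hxs⟩, hxF⟩
      refine ⟨hxF, ?_⟩
      obtain ⟨i, hxi⟩ := Set.mem_iUnion.1 hxU
      have hiN : N ≤ i := by
        by_contra hlt
        push_neg at hlt
        exact hxs (by
          simp only [hUs, Set.mem_iUnion]
          exact ⟨i, hs (Finset.mem_range.2 hlt), hxi⟩)
      simp only [Set.mem_iUnion]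
      exact ⟨i, hiN, hxi⟩
    have hq : X.qnorm (ind ((Ua \ Us) ∩ F)) ≤
        X.qnorm (ind (F ∩ ⋃ (i) (_ : N ≤ i), E i)) := by
      refine (mem_of_le X ?_ (ind_measurable ((hUam.diff hUsm).inter hFm)).aemeasurable
        (abs_ind_le_abs_ind hsubtail)).2
      exact (ind_mem X (hFm.inter (MeasurableSet.iUnion fun i =>
        MeasurableSet.iUnion fun _ => hEm i)) Set.inter_subset_left hFc).1
    calc dist (∑ i ∈ s, φ (ind (E i ∩ F))) (φ (ind (Ua ∩ F)))
        = |φ (ind ((Ua \ Us) ∩ F))| := by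
          rw [Real.dist_eq, hsum, hsplit]
          rw [abs_sub_comm]
          ring_nf
      _ ≤ C * X.qnorm (ind ((Ua \ Us) ∩ F)) := hb _ hm2
      _ ≤ C * X.qnorm (ind (F ∩ ⋃ (i) (_ : N ≤ i), E i)) :=
          mul_le_mul_of_nonneg_left hq hC
      _ < ε := hN

end DualRepAux
namespace DualRepAux

open MeasureTheory Filter Set Topology
open scoped Classical

variable {Ω : Type*} [MeasurableSpace Ω] {μ : Measure Ω}

section SM

variable (X : QBFS μ) (hoc : X.OrderContinuous) (φ : (Ω → ℝ) → ℝ)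
    (hadd : ∀ f ∈ X.carrier, ∀ g ∈ X.carrier, φ (f + g) = φ f + φ g)
    (hsmul : ∀ (c : ℝ), ∀ f ∈ X.carrier, φ (c • f) = c * φ f)
    (C : ℝ) (hC : 0 ≤ C) (hb : ∀ f ∈ X.carrier, |φ f| ≤ C * X.qnorm f)
    {F : Set Ω} (hFm : MeasurableSet F) (hFc : ind F ∈ X.carrier)

lemma phiMeasure_apply {E : Set Ω} (hE : MeasurableSet E) :
    phiMeasure X hoc φ hadd hsmul C hC hb hFm hFc E = φ (ind (E ∩ F)) := by
  show (if MeasurableSet E then φ (ind (E ∩ F)) else 0) = φ (ind (E ∩ F))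
  rw [if_pos hE]

lemma phiMeasure_ac [SigmaFinite μ] :
    phiMeasure X hoc φ hadd hsmul C hC hb hFm hFc ≪ᵥ μ.toENNRealVectorMeasure := by
  refine VectorMeasure.AbsolutelyContinuous.mk fun E hE hE0 => ?_
  rw [MeasureTheory.Measure.toENNRealVectorMeasure_apply_measurable hE] at hE0
  rw [phiMeasure_apply X hoc φ hadd hsmul C hC hb hFm hFc hE]
  have hmem : ind (E ∩ F) ∈ X.carrier :=
    (ind_mem X (hE.inter hFm) Set.inter_subset_right hFc).1
  have hq : X.qnorm (ind (E ∩ F)) = 0 := by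
    rw [X.qnorm_eq_zero_iff _ hmem]
    have hnull : μ (E ∩ F) = 0 := measure_mono_null Set.inter_subset_left hE0
    have : ∀ᵐ x ∂μ, x ∉ E ∩ F := by
      rw [ae_iff]
      simpa using hnull
    filter_upwards [this] with x hx
    simp [ind_of_not_mem hx]
  have := hb _ hmem
  rw [hq, mul_zero] at this
  exact abs_eq_zero.mp (le_antisymm this (abs_nonneg _))

/-- The local Radon–Nikodym derivative associated to `φ` on `F`. -/
noncomputable def localDeriv [SigmaFinite μ] : Ω → ℝ :=
  (phiMeasure X hoc φ hadd hsmul C hC hb hFm hFc).rnDeriv μ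

lemma localDeriv_measurable [SigmaFinite μ] :
    Measurable (localDeriv X hoc φ hadd hsmul C hC hb hFm hFc) :=
  SignedMeasure.measurable_rnDeriv _ _

lemma localDeriv_integrable [SigmaFinite μ] :
    Integrable (localDeriv X hoc φ hadd hsmul C hC hb hFm hFc) μ :=
  SignedMeasure.integrable_rnDeriv _ _

lemma localDeriv_rep [SigmaFinite μ] {E : Set Ω} (hE : MeasurableSet E) :
    φ (ind (E ∩ F)) = ∫ x in E, localDeriv X hoc φ hadd hsmul C hC hb hFm hFc x ∂μ := by
  have h := SignedMeasure.withDensityᵥ_rnDeriv_eq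
    (phiMeasure X hoc φ hadd hsmul C hC hb hFm hFc) μ
    (phiMeasure_ac X hoc φ hadd hsmul C hC hb hFm hFc)
  have h2 := withDensityᵥ_apply (SignedMeasure.integrable_rnDeriv
    (phiMeasure X hoc φ hadd hsmul C hC hb hFm hFc) μ) hE
  rw [h] at h2
  rw [localDeriv, ← h2, phiMeasure_apply X hoc φ hadd hsmul C hC hb hFm hFc hE]

end SM

end DualRepAux
namespace DualRepAux

open MeasureTheory Filter Set Topology
open scoped Classical

variable {Ω : Type*} [MeasurableSpace Ω] {μ : Measure Ω}

section Rep

variable [SigmaFinite μ] (X : QBFS μ) (hoc : X.OrderContinuous) (φ : (Ω → ℝ) → ℝ)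
    (hadd : ∀ f ∈ X.carrier, ∀ g ∈ X.carrier, φ (f + g) = φ f + φ g)
    (hsmul : ∀ (c : ℝ), ∀ f ∈ X.carrier, φ (c • f) = c * φ f)
    (C : ℝ) (hC : 0 ≤ C) (hb : ∀ f ∈ X.carrier, |φ f| ≤ C * X.qnorm f)
    {F : Set Ω} (hFm : MeasurableSet F) (hFc : ind F ∈ X.carrier)

/-- Representation for nonnegative bounded measurable functions supported on `F`. -/
lemma rep_nonneg_bounded {f : Ω → ℝ} (hfm : Measurable f) {c : ℝ} (hc : 0 ≤ c)
    (hf0 : ∀ x, 0 ≤ f x) (hfc : ∀ x, f x ≤ c) (hsupp : ∀ x ∉ F, f x = 0) :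
    f ∈ X.carrier ∧
      Integrable (fun x => f x * localDeriv X hoc φ hadd hsmul C hC hb hFm hFc x) μ ∧
      φ f = ∫ x, f x * localDeriv X hoc φ hadd hsmul C hC hb hFm hFc x ∂μ := by
  set g := localDeriv X hoc φ hadd hsmul C hC hb hFm hFc with hg
  have hgm : Measurable g := localDeriv_measurable X hoc φ hadd hsmul C hC hb hFm hFc
  have hgi : Integrable g μ := localDeriv_integrable X hoc φ hadd hsmul C hC hb hFm hFc
  -- f is in the carrier
  have hfF : ∀ x, |f x| ≤ |(c • ind F) x| := by
    intro x
    by_cases hx : x ∈ F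
    · rw [abs_of_nonneg (hf0 x)]
      have : (c • ind F) x = c := by simp [ind_of_mem hx]
      rw [this, abs_of_nonneg hc]
      exact hfc x
    · rw [hsupp x hx]
      simp [abs_nonneg]; positivity
  have hfmem : f ∈ X.carrier :=
    (mem_of_le X (X.smul_mem c _ hFc) hfm.aemeasurable hfF).1
  -- integrability of f * g
  have hfgi : Integrable (fun x => f x * g x) μ := by
    refine Integrable.mono' ((hgi.abs).const_mul c) (hfm.mul hgm).aestronglyMeasurable ?_
    refine Filter.Eventually.of_forall fun x => ?_
    rw [Real.norm_eq_abs, abs_mul]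
    exact mul_le_mul_of_nonneg_right
      (by rw [abs_of_nonneg (hf0 x)]; exact hfc x) (abs_nonneg _)
  refine ⟨hfmem, hfgi, ?_⟩
  -- the approximating simple functions
  have key : ∀ k : ℕ, ∃ s : Ω → ℝ, s ∈ X.carrier ∧
      Integrable (fun x => s x * g x) μ ∧ φ s = ∫ x, s x * g x ∂μ ∧
      AEMeasurable s μ ∧
      (∀ x, 0 ≤ f x - s x) ∧ (∀ x, f x - s x ≤ ((k : ℝ) + 1)⁻¹) ∧
      (∀ x ∉ F, s x = 0) := by
    intro k
    set M : ℕ := ⌈c⌉₊ * (k + 1) with hM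
    set Ej : ℕ → Set Ω := fun j => {x | (j : ℝ) ≤ ((k : ℝ) + 1) * f x} with hEj
    have hEjm : ∀ j, MeasurableSet (Ej j) :=
      fun j => measurableSet_le measurable_const (hfm.const_mul _)
    have hEjF : ∀ j ∈ Finset.Icc 1 M, Ej j ⊆ F := by
      intro j hj x hx
      by_contra hxF
      have h0 : f x = 0 := hsupp x hxF
      have hj1 : 1 ≤ j := (Finset.mem_Icc.1 hj).1
      have h1 : (1 : ℝ) ≤ (j : ℝ) := by exact_mod_cast hj1
      have hxle : (j : ℝ) ≤ ((k : ℝ) + 1) * f x := hx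
      rw [h0, mul_zero] at hxle
      linarith
    set s : Ω → ℝ := ∑ j ∈ Finset.Icc 1 M, ((k : ℝ) + 1)⁻¹ • ind (Ej j) with hs
    -- pointwise value
    have hval : ∀ x, s x = (⌊((k : ℝ) + 1) * f x⌋₊ : ℝ) / ((k : ℝ) + 1) := by
      intro x
      have hsx : s x = ∑ j ∈ Finset.Icc 1 M, ((k : ℝ) + 1)⁻¹ * ind (Ej j) x := by
        rw [hs, Finset.sum_apply]
        rfl
      rw [hsx, ← Finset.mul_sum]
      have hindval : ∀ j, ind (Ej j) x = if (j : ℝ) ≤ ((k : ℝ) + 1) * f x then (1:ℝ) else 0 := by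
        intro j
        by_cases hx : x ∈ Ej j
        · rw [ind_of_mem hx]; exact (if_pos hx).symm
        · rw [ind_of_not_mem hx]; exact (if_neg hx).symm
      simp only [hindval]
      rw [Finset.sum_boole]
      have t0 : 0 ≤ ((k : ℝ) + 1) * f x := mul_nonneg (by positivity) (hf0 x)
      have htM : ((k : ℝ) + 1) * f x ≤ (M : ℝ) := by
        have h1 : ((k : ℝ) + 1) * f x ≤ ((k : ℝ) + 1) * c :=
          mul_le_mul_of_nonneg_left (hfc x) (by positivity)
        have h2 : (c : ℝ) ≤ (⌈c⌉₊ : ℕ) := Nat.le_ceil c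
        have h3 : ((M : ℕ) : ℝ) = (⌈c⌉₊ : ℝ) * ((k : ℝ) + 1) := by
          rw [hM]; push_cast; ring
        rw [h3]
        nlinarith
      have hfilter : Finset.filter (fun j : ℕ => (j : ℝ) ≤ ((k : ℝ) + 1) * f x)
          (Finset.Icc 1 M) = Finset.Icc 1 ⌊((k : ℝ) + 1) * f x⌋₊ := by
        ext j
        simp only [Finset.mem_filter, Finset.mem_Icc]
        constructor
        · rintro ⟨⟨h1, _⟩, hle⟩
          exact ⟨h1, Nat.le_floor hle⟩
        · rintro ⟨h1, h2⟩
          have hjle : (j : ℝ) ≤ ((k : ℝ) + 1) * f x :=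
            le_trans (by exact_mod_cast h2) (Nat.floor_le t0)
          have hjM : j ≤ M := by
            have := Nat.floor_le_floor (R := ℝ) htM
            rw [Nat.floor_natCast] at this
            omega
          exact ⟨⟨h1, hjM⟩, hjle⟩
      rw [hfilter]
      rw [Nat.card_Icc]
      simp only [Nat.add_sub_cancel]
      rw [div_eq_inv_mul]
    -- each summand is representable
    have hterm : ∀ j ∈ Finset.Icc 1 M,
        (((k : ℝ) + 1)⁻¹ • ind (Ej j)) ∈ X.carrier ∧
        Integrable (fun x => (((k : ℝ) + 1)⁻¹ • ind (Ej j)) x * g x) μ ∧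
        φ (((k : ℝ) + 1)⁻¹ • ind (Ej j)) =
          ∫ x, (((k : ℝ) + 1)⁻¹ • ind (Ej j)) x * g x ∂μ := by
      intro j hj
      have hmem : ind (Ej j) ∈ X.carrier := (ind_mem X (hEjm j) (hEjF j hj) hFc).1
      have hmem' := X.smul_mem (((k : ℝ) + 1)⁻¹) _ hmem
      have hindg : (fun x => ind (Ej j) x * g x) = (Ej j).indicator g := by
        funext x
        by_cases hx : x ∈ Ej j
        · rw [ind_of_mem hx, Set.indicator_of_mem hx, one_mul]
        · rw [ind_of_not_mem hx, Set.indicator_of_notMem hx, zero_mul]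
      have hindgi : Integrable (fun x => ind (Ej j) x * g x) μ := by
        rw [hindg]; exact hgi.indicator (hEjm j)
      have hphi : φ (ind (Ej j)) = ∫ x, ind (Ej j) x * g x ∂μ := by
        have h1 : Ej j ∩ F = Ej j := Set.inter_eq_self_of_subset_left (hEjF j hj)
        have h2 := localDeriv_rep X hoc φ hadd hsmul C hC hb hFm hFc (hEjm j)
        rw [h1] at h2
        rw [h2, hindg, integral_indicator (hEjm j)]
      refine ⟨hmem', ?_, ?_⟩
      · have : (fun x => (((k : ℝ) + 1)⁻¹ • ind (Ej j)) x * g x)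
            = fun x => ((k : ℝ) + 1)⁻¹ * (ind (Ej j) x * g x) := by
          funext x; simp [mul_assoc]
        rw [this]
        exact hindgi.const_mul _
      · rw [hsmul _ _ hmem, hphi]
        have : (fun x => (((k : ℝ) + 1)⁻¹ • ind (Ej j)) x * g x)
            = fun x => ((k : ℝ) + 1)⁻¹ * (ind (Ej j) x * g x) := by
          funext x; simp [mul_assoc]
        rw [this, integral_const_mul]
    -- assemble
    have hsmem := phi_finset_sum X φ hadd hsmul (Finset.Icc 1 M) _
      (fun j hj => (hterm j hj).1)
    have hsint : Integrable (fun x => s x * g x) μ := by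
      have : (fun x => s x * g x)
          = fun x => ∑ j ∈ Finset.Icc 1 M, (((k : ℝ) + 1)⁻¹ • ind (Ej j)) x * g x := by
        funext x
        rw [hs, Finset.sum_apply, Finset.sum_mul]
      rw [this]
      exact integrable_finset_sum _ (fun j hj => (hterm j hj).2.1)
    have hsphi : φ s = ∫ x, s x * g x ∂μ := by
      rw [hs, hsmem.2]
      have h1 : ∑ j ∈ Finset.Icc 1 M, φ (((k : ℝ) + 1)⁻¹ • ind (Ej j))
          = ∑ j ∈ Finset.Icc 1 M, ∫ x, (((k : ℝ) + 1)⁻¹ • ind (Ej j)) x * g x ∂μ :=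
        Finset.sum_congr rfl fun j hj => (hterm j hj).2.2
      rw [h1, ← integral_finset_sum _ (fun j hj => (hterm j hj).2.1)]
      congr 1
      funext x
      rw [Finset.sum_apply, Finset.sum_mul]
    refine ⟨s, hsmem.1, hsint, hsphi, X.aemeasurable_mem s hsmem.1, ?_, ?_, ?_⟩
    · intro x
      rw [hval x]
      have h1 : (⌊((k : ℝ) + 1) * f x⌋₊ : ℝ) ≤ ((k : ℝ) + 1) * f x :=
        Nat.floor_le (mul_nonneg (by positivity) (hf0 x))
      have hk1 : (0:ℝ) < (k : ℝ) + 1 := by positivity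
      rw [sub_nonneg, div_le_iff₀ hk1]
      linarith [h1]
    · intro x
      rw [hval x]
      have h1 : ((k : ℝ) + 1) * f x - 1 < (⌊((k : ℝ) + 1) * f x⌋₊ : ℝ) :=
        Nat.sub_one_lt_floor _
      have hk1 : (0:ℝ) < (k : ℝ) + 1 := by positivity
      have e1 : ((k : ℝ) + 1)⁻¹ * ((k : ℝ) + 1) = 1 := inv_mul_cancel₀ (ne_of_gt hk1)
      have e2 : (⌊((k : ℝ) + 1) * f x⌋₊ : ℝ) / ((k : ℝ) + 1) * ((k : ℝ) + 1)
          = (⌊((k : ℝ) + 1) * f x⌋₊ : ℝ) := div_mul_cancel₀ _ (ne_of_gt hk1)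
      rw [sub_le_iff_le_add]
      nlinarith [h1, hk1, e1, e2]
    · intro x hx
      rw [hval x, hsupp x hx]
      simp
  -- limit argument
  set D : ℝ := C * X.qnorm (ind F) + ∫ x, |g x| ∂μ with hD
  have hbound : ∀ k : ℕ, |φ f - ∫ x, f x * g x ∂μ| ≤ ((k : ℝ) + 1)⁻¹ * D := by
    intro k
    obtain ⟨s, hsmem, hsint, hsphi, hsaem, hd0, hdk, hs0⟩ := key k
    have hdiffmem : f - s ∈ X.carrier := sub_mem X hfmem hsmem
    have hdle : ∀ x, |(f - s) x| ≤ |((((k : ℝ) + 1)⁻¹) • ind F) x| := by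
      intro x
      by_cases hx : x ∈ F
      · have : ((((k : ℝ) + 1)⁻¹) • ind F) x = ((k : ℝ) + 1)⁻¹ := by
          simp [ind_of_mem hx]
        rw [this, Pi.sub_apply, abs_of_nonneg (hd0 x), abs_of_nonneg (by positivity)]
        exact hdk x
      · have h1 : f x = 0 := hsupp x hx
        have h2 : s x = 0 := hs0 x hx
        simp [Pi.sub_apply, h1, h2, abs_nonneg]; positivity
    have hdq : X.qnorm (f - s) ≤ ((k : ℝ) + 1)⁻¹ * X.qnorm (ind F) := by
      have h1 := (mem_of_le X (X.smul_mem (((k : ℝ) + 1)⁻¹) _ hFc)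
        (hfm.aemeasurable.sub hsaem) hdle).2
      rw [X.qnorm_smul _ _ hFc, abs_of_nonneg (by positivity : (0:ℝ) ≤ ((k:ℝ)+1)⁻¹)] at h1
      exact h1
    have hphidiff : |φ f - φ s| ≤ ((k : ℝ) + 1)⁻¹ * (C * X.qnorm (ind F)) := by
      rw [← phi_sub X φ hadd hsmul hfmem hsmem]
      calc |φ (f - s)| ≤ C * X.qnorm (f - s) := hb _ hdiffmem
        _ ≤ C * (((k : ℝ) + 1)⁻¹ * X.qnorm (ind F)) := mul_le_mul_of_nonneg_left hdq hC
        _ = ((k : ℝ) + 1)⁻¹ * (C * X.qnorm (ind F)) := by ring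
    have hintdiff : |(∫ x, s x * g x ∂μ) - ∫ x, f x * g x ∂μ|
        ≤ ((k : ℝ) + 1)⁻¹ * ∫ x, |g x| ∂μ := by
      rw [← integral_sub hsint hfgi]
      calc |∫ x, (s x * g x - f x * g x) ∂μ|
          ≤ ∫ x, |s x * g x - f x * g x| ∂μ := by
            rw [← Real.norm_eq_abs]
            refine (norm_integral_le_integral_norm _).trans (le_of_eq ?_)
            simp [Real.norm_eq_abs]
        _ ≤ ∫ x, ((k : ℝ) + 1)⁻¹ * |g x| ∂μ := by
            refine integral_mono (hsint.sub hfgi).abs ((hgi.abs).const_mul _) fun x => ?_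
            rw [← sub_mul, abs_mul]
            gcongr
            rw [abs_sub_comm, abs_of_nonneg (hd0 x)]
            exact hdk x
        _ = ((k : ℝ) + 1)⁻¹ * ∫ x, |g x| ∂μ := integral_const_mul _ _
    calc |φ f - ∫ x, f x * g x ∂μ|
        ≤ |φ f - φ s| + |φ s - ∫ x, f x * g x ∂μ| := abs_sub_le _ _ _
      _ = |φ f - φ s| + |(∫ x, s x * g x ∂μ) - ∫ x, f x * g x ∂μ| := by rw [hsphi]
      _ ≤ ((k : ℝ) + 1)⁻¹ * (C * X.qnorm (ind F)) + ((k : ℝ) + 1)⁻¹ * ∫ x, |g x| ∂μ :=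
          add_le_add hphidiff hintdiff
      _ = ((k : ℝ) + 1)⁻¹ * D := by rw [hD]; ring
  have htend : Tendsto (fun k : ℕ => ((k : ℝ) + 1)⁻¹ * D) atTop (𝓝 0) := by
    have h1 : Tendsto (fun k : ℕ => ((k : ℝ) + 1)⁻¹) atTop (𝓝 0) :=
      tendsto_one_div_add_atTop_nhds_zero_nat.congr (by intro k; rw [one_div])
    simpa using h1.mul_const D
  have h0 : |φ f - ∫ x, f x * g x ∂μ| ≤ 0 := ge_of_tendsto' htend hbound
  have := abs_nonneg (φ f - ∫ x, f x * g x ∂μ)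
  have heq : φ f - ∫ x, f x * g x ∂μ = 0 := abs_eq_zero.mp (le_antisymm h0 this)
  linarith [heq]

/-- Representation for bounded measurable functions supported on `F` (signed case). -/
lemma rep_bounded {f : Ω → ℝ} (hfm : Measurable f) {c : ℝ} (hc : 0 ≤ c)
    (hfc : ∀ x, |f x| ≤ c) (hsupp : ∀ x ∉ F, f x = 0) :
    f ∈ X.carrier ∧
      Integrable (fun x => f x * localDeriv X hoc φ hadd hsmul C hC hb hFm hFc x) μ ∧
      φ f = ∫ x, f x * localDeriv X hoc φ hadd hsmul C hC hb hFm hFc x ∂μ := by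
  set g := localDeriv X hoc φ hadd hsmul C hC hb hFm hFc with hg
  set p : Ω → ℝ := fun x => max (f x) 0 with hp
  set m : Ω → ℝ := fun x => max (-f x) 0 with hm
  have hpm : Measurable p := hfm.max measurable_const
  have hmm : Measurable m := hfm.neg.max measurable_const
  have hrep1 := rep_nonneg_bounded X hoc φ hadd hsmul C hC hb hFm hFc hpm hc
    (fun x => le_max_right _ _)
    (fun x => max_le (le_trans (le_abs_self _) (hfc x)) hc)
    (fun x hx => by rw [hp]; simp [hsupp x hx])
  have hrep2 := rep_nonneg_bounded X hoc φ hadd hsmul C hC hb hFm hFc hmm hc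
    (fun x => le_max_right _ _)
    (fun x => max_le (le_trans (neg_le_abs _) (hfc x)) hc)
    (fun x hx => by rw [hm]; simp [hsupp x hx])
  have hfpm : f = p - m := by
    funext x
    rw [Pi.sub_apply, hp, hm]
    simp [max_zero_sub_max_neg_zero_eq_self]
  have hfmem : f ∈ X.carrier := by
    rw [hfpm]; exact sub_mem X hrep1.1 hrep2.1
  have hint : Integrable (fun x => f x * g x) μ := by
    have : (fun x => f x * g x) = fun x => p x * g x - m x * g x := by
      funext x
      rw [hfpm]; simp [Pi.sub_apply, sub_mul]
    rw [this]
    exact hrep1.2.1.sub hrep2.2.1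
  refine ⟨hfmem, hint, ?_⟩
  rw [hfpm, phi_sub X φ hadd hsmul hrep1.1 hrep2.1, hrep1.2.2, hrep2.2.2]
  rw [← integral_sub hrep1.2.1 hrep2.2.1]
  congr 1
  funext x
  simp [sub_mul]; rfl

end Rep

end DualRepAux
namespace DualRepAux

open MeasureTheory Filter Set Topology
open scoped ENNReal

variable {Ω : Type*} [MeasurableSpace Ω] {μ : Measure Ω}

/-- Exhaustion: a countable disjoint family of sets with indicators in `X`
covering almost all of `Ω`. -/
lemma exists_partition [SigmaFinite μ] (X : QBFS μ) :
    ∃ Fs : ℕ → Set Ω, (∀ n, MeasurableSet (Fs n)) ∧ (∀ n, ind (Fs n) ∈ X.carrier) ∧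
      Pairwise (Function.onFun Disjoint Fs) ∧ μ (⋃ n, Fs n)ᶜ = 0 := by
  obtain ⟨ν, hνfin, hμν, hνμ⟩ := MeasureTheory.exists_isFiniteMeasure_absolutelyContinuous μ
  haveI := hνfin
  set good : Set Ω → Prop := fun G => MeasurableSet G ∧ ind G ∈ X.carrier with hgood
  set αf : Set Ω → ℝ≥0∞ := fun S => ⨆ (G : Set Ω) (_ : good G ∧ G ⊆ Sᶜ), ν G with hαf
  have hα_le : ∀ S, αf S ≤ ν Set.univ := by
    intro S
    refine iSup₂_le fun G _ => measure_mono (Set.subset_univ G)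
  have hα_top : ∀ S, αf S ≠ ⊤ :=
    fun S => (lt_of_le_of_lt (hα_le S) (measure_lt_top ν _)).ne
  have hnext : ∀ S : Set Ω, ∃ G, good G ∧ G ⊆ Sᶜ ∧ αf S ≤ 2 * ν G := by
    intro S
    by_cases h0 : αf S = 0
    · refine ⟨∅, ⟨MeasurableSet.empty, ?_⟩, Set.empty_subset _, by rw [h0]; exact zero_le⟩
      rw [ind_empty]; exact X.zero_mem
    · have hlt : αf S / 2 < αf S := ENNReal.half_lt_self h0 (hα_top S)
      have hlt' : αf S / 2 < ⨆ (G : Set Ω) (_ : good G ∧ G ⊆ Sᶜ), ν G := hlt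
      obtain ⟨G, hG⟩ := lt_iSup_iff.mp hlt'
      by_cases hp : good G ∧ G ⊆ Sᶜ
      · rw [iSup_pos hp] at hG
        refine ⟨G, hp.1, hp.2, ?_⟩
        calc αf S = 2 * (αf S / 2) :=
              (ENNReal.mul_div_cancel two_ne_zero ENNReal.ofNat_ne_top).symm
          _ ≤ 2 * ν G := mul_le_mul_right hG.le 2
      · rw [iSup_neg hp] at hG
        exact absurd hG (by simp)
  choose next hnext1 hnext2 hnext3 using hnext
  set U : ℕ → Set Ω := fun n => Nat.rec ∅ (fun _ S => S ∪ next S) n with hU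
  set Fs : ℕ → Set Ω := fun n => next (U n) with hFs
  have hUsucc : ∀ n, U (n + 1) = U n ∪ Fs n := fun n => rfl
  have hUmono : ∀ m n, m ≤ n → U m ⊆ U n := by
    intro m n hmn
    induction n with
    | zero => rw [Nat.le_zero.mp hmn]
    | succ n ih =>
      rcases Nat.lt_or_ge m (n + 1) with h | h
      · exact (ih (Nat.lt_succ_iff.mp h)).trans (by rw [hUsucc]; exact Set.subset_union_left)
      · rw [Nat.le_antisymm hmn h]
  have hFsU : ∀ n, Fs n ⊆ U (n + 1) := by
    intro n
    rw [hUsucc]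
    exact Set.subset_union_right
  have hFscompl : ∀ n, Fs n ⊆ (U n)ᶜ := fun n => hnext2 (U n)
  have hFsm : ∀ n, MeasurableSet (Fs n) := fun n => (hnext1 (U n)).1
  have hFsc : ∀ n, ind (Fs n) ∈ X.carrier := fun n => (hnext1 (U n)).2
  have hdisj : Pairwise (Function.onFun Disjoint Fs) := by
    have key : ∀ m n, m < n → Disjoint (Fs m) (Fs n) := by
      intro m n hmn
      have h1 : Fs m ⊆ U n := (hFsU m).trans (hUmono _ _ hmn)
      exact (disjoint_compl_right.mono h1 (hFscompl n))
    intro m n hmn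
    rcases lt_or_gt_of_ne hmn with h | h
    · exact key m n h
    · exact (key n m h).symm
  refine ⟨Fs, hFsm, hFsc, hdisj, ?_⟩
  -- the remainder is null
  have hsum : ∑' n, ν (Fs n) ≠ ⊤ := by
    rw [← measure_iUnion hdisj hFsm]
    exact (measure_lt_top ν _).ne
  have htend : Tendsto (fun n => ν (Fs n)) atTop (𝓝 0) :=
    ENNReal.tendsto_atTop_zero_of_tsum_ne_top hsum
  have htend2 : Tendsto (fun n => 2 * ν (Fs n)) atTop (𝓝 0) := by
    have := ENNReal.Tendsto.const_mul (a := 2) htend (Or.inr ENNReal.ofNat_ne_top)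
    simpa using this
  by_contra hR
  have hRpos : 0 < μ (⋃ n, Fs n)ᶜ := pos_iff_ne_zero.mpr hR
  have hRm : MeasurableSet (⋃ n, Fs n)ᶜ := (MeasurableSet.iUnion hFsm).compl
  obtain ⟨G, hGR, hGm, hGpos, hGc⟩ := X.saturated _ hRm hRpos
  have hGU : ∀ n, G ⊆ (U n)ᶜ := by
    intro n
    refine hGR.trans (Set.compl_subset_compl.2 ?_)
    induction n with
    | zero => exact Set.empty_subset _
    | succ n ih =>
      rw [hUsucc]
      exact Set.union_subset ih (Set.subset_iUnion Fs n)
  have hνG : ∀ n, ν G ≤ 2 * ν (Fs n) := by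
    intro n
    have h1 : ν G ≤ αf (U n) := by
      have h2 : ν G ≤ ⨆ (_ : good G ∧ G ⊆ (U n)ᶜ), ν G :=
        le_iSup_of_le ⟨⟨hGm, hGc⟩, hGU n⟩ le_rfl
      exact h2.trans (le_iSup_of_le G le_rfl)
    exact h1.trans (hnext3 (U n))
  have hνG0 : ν G ≤ 0 := ge_of_tendsto' htend2 hνG
  have : μ G = 0 := hμν (le_antisymm hνG0 zero_le)
  exact absurd this (pos_iff_ne_zero.mp hGpos)

end DualRepAux
namespace DualRepAux

open MeasureTheory Filter Set Topology

variable {Ω : Type*} [MeasurableSpace Ω] {μ : Measure Ω}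

lemma rep_chunk (X : QBFS μ) (φ : (Ω → ℝ) → ℝ)
    (hadd : ∀ f ∈ X.carrier, ∀ g ∈ X.carrier, φ (f + g) = φ f + φ g)
    (hsmul : ∀ (c : ℝ), ∀ f ∈ X.carrier, φ (c • f) = c * φ f)
    (Fs : ℕ → Set Ω) (hFsm : ∀ n, MeasurableSet (Fs n)) (g : Ω → ℝ)
    (hpiece : ∀ k (f : Ω → ℝ), Measurable f → ∀ c : ℝ, 0 ≤ c → (∀ x, |f x| ≤ c) →
      (∀ x ∉ Fs k, f x = 0) →
      f ∈ X.carrier ∧ Integrable (fun x => f x * g x) μ ∧ φ f = ∫ x, f x * g x ∂μ) :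
    ∀ n (f : Ω → ℝ), Measurable f → ∀ c : ℝ, 0 ≤ c → (∀ x, |f x| ≤ c) →
      (∀ x, x ∉ (⋃ k ∈ Finset.range n, Fs k) → f x = 0) →
      f ∈ X.carrier ∧ Integrable (fun x => f x * g x) μ ∧ φ f = ∫ x, f x * g x ∂μ := by
  intro n
  induction n with
  | zero =>
    intro f hfm c hc hfc hsupp
    have hf0 : f = 0 := by
      funext x
      exact hsupp x (by simp)
    subst hf0
    refine ⟨X.zero_mem, ?_, ?_⟩
    · simpa using (integrable_zero Ω ℝ μ)
    · rw [phi_zero X φ hsmul]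
      simp
  | succ n ih =>
    intro f hfm c hc hfc hsupp
    set f1 : Ω → ℝ := (Fs n).indicator f with hf1
    set f2 : Ω → ℝ := f - f1 with hf2
    have hf1m : Measurable f1 := hfm.indicator (hFsm n)
    have hf2m : Measurable f2 := hfm.sub hf1m
    have hf1c : ∀ x, |f1 x| ≤ c := by
      intro x
      rw [hf1]
      by_cases hx : x ∈ Fs n
      · rw [Set.indicator_of_mem hx]; exact hfc x
      · rw [Set.indicator_of_notMem hx]; simpa using hc
    have hf1supp : ∀ x ∉ Fs n, f1 x = 0 := fun x hx => Set.indicator_of_notMem hx f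
    have hP := hpiece n f1 hf1m c hc hf1c hf1supp
    have hf2c : ∀ x, |f2 x| ≤ c := by
      intro x
      rw [hf2, Pi.sub_apply, hf1]
      by_cases hx : x ∈ Fs n
      · rw [Set.indicator_of_mem hx]; simpa using hc
      · rw [Set.indicator_of_notMem hx]; simpa using hfc x
    have hf2supp : ∀ x, x ∉ (⋃ k ∈ Finset.range n, Fs k) → f2 x = 0 := by
      intro x hx
      rw [hf2, Pi.sub_apply, hf1]
      by_cases hxn : x ∈ Fs n
      · rw [Set.indicator_of_mem hxn]; ring
      · rw [Set.indicator_of_notMem hxn]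
        have hxout : x ∉ (⋃ k ∈ Finset.range (n+1), Fs k) := by
          intro hmem
          simp only [Set.mem_iUnion, Finset.mem_range] at hmem hx
          obtain ⟨k, hk, hxk⟩ := hmem
          rcases Nat.lt_succ_iff_lt_or_eq.mp hk with h | h
          · exact hx ⟨k, h, hxk⟩
          · exact hxn (h ▸ hxk)
        rw [hsupp x hxout]
        ring
    have hQ := ih f2 hf2m c hc hf2c hf2supp
    have hsum : f = f1 + f2 := by
      funext x
      simp [hf2]
    have hmem : f ∈ X.carrier := by
      rw [hsum]; exact X.add_mem _ hP.1 _ hQ.1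
    have hint : Integrable (fun x => f x * g x) μ := by
      have : (fun x => f x * g x) = fun x => f1 x * g x + f2 x * g x := by
        funext x
        rw [hsum]
        simp [add_mul]
      rw [this]
      exact hP.2.1.add hQ.2.1
    refine ⟨hmem, hint, ?_⟩
    rw [hsum, hadd _ hP.1 _ hQ.1, hP.2.2, hQ.2.2, ← integral_add hP.2.1 hQ.2.1]
    congr 1
    funext x
    simp [add_mul]

end DualRepAux
open DualRepAux in
/-- In an order-continuous quasi-Banach function space, every bounded linear
functional is given by integration against a function in the Köthe dual. -/
theorem dual_eq_kotheDual_of_orderContinuous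
    {Ω : Type*} [MeasurableSpace Ω] {μ : Measure Ω} [SigmaFinite μ]
    (X : QBFS μ) (hoc : X.OrderContinuous)
    (φ : (Ω → ℝ) → ℝ)
    (hadd : ∀ f ∈ X.carrier, ∀ g ∈ X.carrier, φ (f + g) = φ f + φ g)
    (hsmul : ∀ (c : ℝ), ∀ f ∈ X.carrier, φ (c • f) = c * φ f)
    (hbdd : ∃ C : ℝ, ∀ f ∈ X.carrier, |φ f| ≤ C * X.qnorm f) :
    ∃ g ∈ X.kotheDual, ∀ f ∈ X.carrier, φ f = ∫ x, f x * g x ∂μ := by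
  classical
  obtain ⟨C₀, hb₀⟩ := hbdd
  set C : ℝ := max C₀ 0 with hCdef
  have hC : 0 ≤ C := le_max_right _ _
  have hb : ∀ f ∈ X.carrier, |φ f| ≤ C * X.qnorm f := fun f hf =>
    (hb₀ f hf).trans (mul_le_mul_of_nonneg_right (le_max_left _ _) (X.qnorm_nonneg f hf))
  obtain ⟨Fs, hFsm, hFsc, hdisj, hnull⟩ := exists_partition X
  -- glue the local derivatives
  have hgdm : ∀ k, Measurable
      (localDeriv X hoc φ hadd hsmul C hC hb (hFsm k) (hFsc k)) := fun k =>
    localDeriv_measurable X hoc φ hadd hsmul C hC hb (hFsm k) (hFsc k)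
  set term : ℕ → Ω → ℝ := fun k =>
    (Fs k).indicator (localDeriv X hoc φ hadd hsmul C hC hb (hFsm k) (hFsc k)) with hterm
  have htermm : ∀ k, Measurable (term k) := fun k => (hgdm k).indicator (hFsm k)
  have hsummable : ∀ x, Summable (fun k => term k x) := by
    intro x
    by_cases hx : ∃ k, x ∈ Fs k
    · obtain ⟨k0, hk0⟩ := hx
      exact (hasSum_single k0 fun j hj => Set.indicator_of_notMem
        (fun hxj => Set.disjoint_left.mp (hdisj hj) hxj hk0) _).summable
    · push_neg at hx
      have hz : (fun k => term k x) = fun _ => 0 :=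
        funext fun k => Set.indicator_of_notMem (hx k) _
      rw [hz]; exact summable_zero
  set g : Ω → ℝ := fun x => ∑' k, term k x with hgdef
  have hHasSum : ∀ x, HasSum (fun k => term k x) (g x) := fun x => (hsummable x).hasSum
  have hgm : Measurable g := by
    have htend : Tendsto (fun n x => ∑ k ∈ Finset.range n, term k x) atTop (𝓝 g) := by
      rw [tendsto_pi_nhds]
      exact fun x => (hHasSum x).tendsto_sum_nat
    exact measurable_of_tendsto_metrizable
      (fun n => Finset.measurable_sum _ fun k _ => htermm k) htend
  have hgFs : ∀ k x, x ∈ Fs k →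
      g x = localDeriv X hoc φ hadd hsmul C hC hb (hFsm k) (hFsc k) x := by
    intro k x hx
    have h1 : HasSum (fun j => term j x) (term k x) :=
      hasSum_single k fun j hj => Set.indicator_of_notMem
        (fun hxj => Set.disjoint_left.mp (hdisj hj) hxj hx) _
    have h2 : g x = term k x := h1.tsum_eq
    rw [h2, hterm]
    exact Set.indicator_of_mem hx _
  -- representation on each piece
  have hpiece : ∀ k (f : Ω → ℝ), Measurable f → ∀ c : ℝ, 0 ≤ c → (∀ x, |f x| ≤ c) →
      (∀ x ∉ Fs k, f x = 0) →
      f ∈ X.carrier ∧ Integrable (fun x => f x * g x) μ ∧ φ f = ∫ x, f x * g x ∂μ := by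
    intro k f hfm c hc hfc hsupp
    obtain ⟨h1, h2, h3⟩ :=
      rep_bounded X hoc φ hadd hsmul C hC hb (hFsm k) (hFsc k) hfm hc hfc hsupp
    have heq : (fun x => f x * localDeriv X hoc φ hadd hsmul C hC hb (hFsm k) (hFsc k) x)
        =ᵐ[μ] fun x => f x * g x := by
      refine Filter.Eventually.of_forall fun x => ?_
      show f x * localDeriv X hoc φ hadd hsmul C hC hb (hFsm k) (hFsc k) x = f x * g x
      by_cases hx : x ∈ Fs k
      · rw [hgFs k x hx]
      · rw [hsupp x hx, zero_mul, zero_mul]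
    refine ⟨h1, h2.congr heq, ?_⟩
    rw [h3]
    exact integral_congr_ae heq
  have hchunk := rep_chunk X φ hadd hsmul Fs hFsm g hpiece
  -- main claim for arbitrary members of the carrier
  have main : ∀ f ∈ X.carrier,
      Integrable (fun x => f x * g x) μ ∧ φ f = ∫ x, f x * g x ∂μ := by
    intro f hf
    have hfae := X.aemeasurable_mem f hf
    set f' : Ω → ℝ := hfae.mk f with hf'def
    have hf'm : Measurable f' := hfae.measurable_mk
    have hff' : f =ᵐ[μ] f' := hfae.ae_eq_mk
    have hf'mem : f' ∈ X.carrier :=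
      (X.ideal f hf f' hf'm.aemeasurable (hff'.mono fun x hx => by rw [hx])).1
    have hφeq : φ f = φ f' := phi_congr X φ hadd hsmul C hb hf hf'mem hff'
    -- truncations
    set R : ℕ → Set Ω := fun n => (⋃ k ∈ Finset.range n, Fs k) ∩ {x | |f' x| ≤ (n:ℝ)} with hR
    have hRm : ∀ n, MeasurableSet (R n) := fun n =>
      (MeasurableSet.biUnion (Finset.range n).countable_toSet fun k _ => hFsm k).inter
        (measurableSet_le hf'm.abs measurable_const)
    have hRmono : Monotone R := by
      intro m n hmn x hx
      obtain ⟨hx1, hx2⟩ := hx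
      constructor
      · simp only [Set.mem_iUnion, Finset.mem_range] at hx1 ⊢
        obtain ⟨k, hk, hxk⟩ := hx1
        exact ⟨k, lt_of_lt_of_le hk hmn, hxk⟩
      · have : (m : ℝ) ≤ (n : ℝ) := Nat.cast_le.mpr hmn
        exact le_trans hx2 this
    set tr : ℕ → Ω → ℝ := fun n => (R n).indicator f' with htr
    have htrval_mem : ∀ n x, x ∈ R n → tr n x = f' x :=
      fun n x hx => Set.indicator_of_mem hx _
    have htrval_not : ∀ n x, x ∉ R n → tr n x = 0 :=
      fun n x hx => Set.indicator_of_notMem hx _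
    have htrm : ∀ n, Measurable (tr n) := fun n => hf'm.indicator (hRm n)
    have htrabs : ∀ n x, |tr n x| ≤ (n : ℝ) := by
      intro n x
      by_cases hx : x ∈ R n
      · rw [htrval_mem n x hx]; exact hx.2
      · rw [htrval_not n x hx]; simpa using Nat.cast_nonneg n
    have htrle : ∀ n x, |tr n x| ≤ |f' x| := by
      intro n x
      by_cases hx : x ∈ R n
      · rw [htrval_mem n x hx]
      · rw [htrval_not n x hx]; simp [abs_nonneg]
    have htrmono : ∀ x, Monotone fun n => |tr n x| := by
      intro x m n hmn
      show |tr m x| ≤ |tr n x|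
      by_cases hx : x ∈ R m
      · rw [htrval_mem m x hx, htrval_mem n x (hRmono hmn hx)]
      · rw [htrval_not m x hx]
        simp [abs_nonneg]
    have htrsupp : ∀ n x, x ∉ (⋃ k ∈ Finset.range n, Fs k) → tr n x = 0 := fun n x hx =>
      Set.indicator_of_notMem (fun hmem => hx hmem.1) _
    have htrCH := fun n =>
      hchunk n (tr n) (htrm n) (n : ℝ) (Nat.cast_nonneg n) (htrabs n) (htrsupp n)
    -- almost everywhere the truncations are eventually equal to f'
    have hae_event : ∀ᵐ x ∂μ, ∀ᶠ n in atTop, tr n x = f' x := by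
      have hcov : ∀ᵐ x ∂μ, x ∈ ⋃ k, Fs k := by
        rw [ae_iff]
        convert hnull using 2; rfl
      filter_upwards [hcov] with x hx
      obtain ⟨k0, hk0⟩ := Set.mem_iUnion.mp hx
      filter_upwards [eventually_ge_atTop (max (k0 + 1) ⌈|f' x|⌉₊)] with n hn
      have hk0n : k0 + 1 ≤ n := le_trans (le_max_left _ _) hn
      have hcn : ⌈|f' x|⌉₊ ≤ n := le_trans (le_max_right _ _) hn
      have h1 : x ∈ ⋃ k ∈ Finset.range n, Fs k := by
        simp only [Set.mem_iUnion, Finset.mem_range]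
        exact ⟨k0, by omega, hk0⟩
      have h2 : |f' x| ≤ (n : ℝ) :=
        le_trans (Nat.le_ceil _) (Nat.cast_le.mpr hcn)
      exact htrval_mem n x ⟨h1, h2⟩
    -- integrability of f' * g
    set sgn : Ω → ℝ := fun x => if 0 ≤ g x then 1 else -1 with hsgn
    have hsgnm : Measurable sgn :=
      Measurable.ite (measurableSet_le measurable_const hgm) measurable_const measurable_const
    have hsgng : ∀ x, sgn x * g x = |g x| := by
      intro x
      show (if 0 ≤ g x then (1:ℝ) else -1) * g x = |g x|
      by_cases h : 0 ≤ g x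
      · simp [h, abs_of_nonneg h]
      · simp only [h, if_false]
        rw [abs_of_neg (lt_of_not_ge h)]
        ring
    have hsgnabs : ∀ x, |sgn x| = 1 := by
      intro x
      show |if 0 ≤ g x then (1:ℝ) else -1| = 1
      split <;> simp
    have hbd : ∀ n, ∫ x, |tr n x| * |g x| ∂μ ≤ C * X.qnorm f' := by
      intro n
      set h : Ω → ℝ := fun x => |tr n x| * sgn x with hh
      have hhval : ∀ x, h x = |tr n x| * sgn x := fun x => rfl
      have hhm : Measurable h := (htrm n).abs.mul hsgnm
      have hhabs : ∀ x, |h x| ≤ (n : ℝ) := by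
        intro x
        rw [hhval, abs_mul, hsgnabs, mul_one, abs_abs]
        exact htrabs n x
      have hhle : ∀ x, |h x| ≤ |f' x| := by
        intro x
        rw [hhval, abs_mul, hsgnabs, mul_one, abs_abs]
        exact htrle n x
      have hhsupp : ∀ x, x ∉ (⋃ k ∈ Finset.range n, Fs k) → h x = 0 := by
        intro x hx
        rw [hhval, htrsupp n x hx]
        simp
      have hH := hchunk n h hhm (n : ℝ) (Nat.cast_nonneg n) hhabs hhsupp
      have hint_eq : ∫ x, h x * g x ∂μ = ∫ x, |tr n x| * |g x| ∂μ := by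
        refine integral_congr_ae (Filter.Eventually.of_forall fun x => ?_)
        show h x * g x = |tr n x| * |g x|
        rw [hhval, mul_assoc, hsgng]
      have hqh : X.qnorm h ≤ X.qnorm f' :=
        (mem_of_le X hf'mem hhm.aemeasurable hhle).2
      calc ∫ x, |tr n x| * |g x| ∂μ = φ h := by rw [← hint_eq, hH.2.2]
        _ ≤ |φ h| := le_abs_self _
        _ ≤ C * X.qnorm h := hb h hH.1
        _ ≤ C * X.qnorm f' := mul_le_mul_of_nonneg_left hqh hC
    have hint' : Integrable (fun x => f' x * g x) μ := by
      refine ⟨(hf'm.mul hgm).aestronglyMeasurable, ?_⟩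
      rw [hasFiniteIntegral_iff_norm]
      have hmono : ∀ x, Monotone fun n => ENNReal.ofReal (|tr n x| * |g x|) := by
        intro x m n hmn
        exact ENNReal.ofReal_le_ofReal
          (mul_le_mul_of_nonneg_right (htrmono x hmn) (abs_nonneg _))
      have hsup : ∀ᵐ x ∂μ, (⨆ n, ENNReal.ofReal (|tr n x| * |g x|))
          = ENNReal.ofReal ‖f' x * g x‖ := by
        filter_upwards [hae_event] with x hx
        obtain ⟨N, hN⟩ := eventually_atTop.mp hx
        apply le_antisymm
        · refine iSup_le fun n => ENNReal.ofReal_le_ofReal ?_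
          rw [Real.norm_eq_abs, abs_mul]
          exact mul_le_mul_of_nonneg_right (htrle n x) (abs_nonneg _)
        · refine le_iSup_of_le N (le_of_eq ?_)
          rw [hN N le_rfl, Real.norm_eq_abs, abs_mul]
      have hlim : ∫⁻ x, ENNReal.ofReal ‖f' x * g x‖ ∂μ
          = ⨆ n, ∫⁻ x, ENNReal.ofReal (|tr n x| * |g x|) ∂μ := by
        rw [← lintegral_iSup' (fun n => (show Measurable fun x => ENNReal.ofReal (|tr n x| * |g x|) from ((htrm n).abs.mul hgm.abs).ennreal_ofReal).aemeasurable)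
          (Filter.Eventually.of_forall hmono)]
        exact lintegral_congr_ae (hsup.mono fun x hx => hx.symm)
      have hboundn : ∀ n, ∫⁻ x, ENNReal.ofReal (|tr n x| * |g x|) ∂μ
          ≤ ENNReal.ofReal (C * X.qnorm f') := by
        intro n
        have hi : Integrable (fun x => |tr n x| * |g x|) μ := by
          have heq : (fun x => |tr n x| * |g x|) = fun x => |tr n x * g x| := by
            funext x; rw [abs_mul]
          rw [heq]
          exact (htrCH n).2.1.abs
        rw [← ofReal_integral_eq_lintegral_ofReal hi
          (Filter.Eventually.of_forall fun x => by positivity)]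
        exact ENNReal.ofReal_le_ofReal (hbd n)
      rw [hlim]
      exact lt_of_le_of_lt (iSup_le hboundn) ENNReal.ofReal_lt_top
    -- order continuity gives convergence of φ (tr n)
    set r : ℕ → Ω → ℝ := fun n => (R n)ᶜ.indicator (fun x => |f' x|) with hr
    have hrval_mem : ∀ n x, x ∉ R n → r n x = |f' x| :=
      fun n x hx => Set.indicator_of_mem (Set.mem_compl hx) (fun x => |f' x|)
    have hrval_not : ∀ n x, x ∈ R n → r n x = 0 :=
      fun n x hx => Set.indicator_of_notMem (by simpa using hx) _
    have hrm : ∀ n, Measurable (r n) := fun n => hf'm.abs.indicator (hRm n).compl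
    have hrabs : ∀ n x, |r n x| ≤ |f' x| := by
      intro n x
      by_cases hx : x ∈ R n
      · rw [hrval_not n x hx]; simp [abs_nonneg]
      · rw [hrval_mem n x hx, abs_abs]
    have hrmem : ∀ n, r n ∈ X.carrier := fun n =>
      (mem_of_le X hf'mem (hrm n).aemeasurable (hrabs n)).1
    have hrq : Tendsto (fun n => X.qnorm (r n)) atTop (𝓝 0) := by
      apply hoc _ hrmem
      filter_upwards [hae_event] with x hx
      constructor
      · intro m n hmn
        show r n x ≤ r m x
        by_cases hxm : x ∈ R m
        · rw [hrval_not m x hxm, hrval_not n x (hRmono hmn hxm)]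
        · rw [hrval_mem m x hxm]
          by_cases hxn : x ∈ R n
          · rw [hrval_not n x hxn]; exact abs_nonneg _
          · rw [hrval_mem n x hxn]
      · have hev : ∀ᶠ n in atTop, r n x = 0 := by
          filter_upwards [hx] with n hn
          by_cases hxn : x ∈ R n
          · exact hrval_not n x hxn
          · have h0 : f' x = 0 := by
              rw [← hn]
              exact htrval_not n x hxn
            rw [hrval_mem n x hxn, h0, abs_zero]
        exact Tendsto.congr' (hev.mono fun n h => h.symm) tendsto_const_nhds
    have hq1 : ∀ n, X.qnorm (f' - tr n) ≤ X.qnorm (r n) := by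
      intro n
      refine (mem_of_le X (hrmem n) ((hf'm.sub (htrm n)).aemeasurable) fun x => ?_).2
      show |(f' - tr n) x| ≤ |r n x|
      simp only [Pi.sub_apply]
      by_cases hx : x ∈ R n
      · rw [htrval_mem n x hx, hrval_not n x hx]
        simp
      · rw [htrval_not n x hx, sub_zero, hrval_mem n x hx, abs_abs]
    have hphitr : Tendsto (fun n => φ (tr n)) atTop (𝓝 (φ f')) := by
      have hub : ∀ n, ‖φ (tr n) - φ f'‖ ≤ C * X.qnorm (r n) := by
        intro n
        have hmemtr := (htrCH n).1
        rw [Real.norm_eq_abs, abs_sub_comm, ← phi_sub X φ hadd hsmul hf'mem hmemtr]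
        calc |φ (f' - tr n)| ≤ C * X.qnorm (f' - tr n) := hb _ (sub_mem X hf'mem hmemtr)
          _ ≤ C * X.qnorm (r n) := mul_le_mul_of_nonneg_left (hq1 n) hC
      rw [tendsto_iff_norm_sub_tendsto_zero]
      refine squeeze_zero (fun n => norm_nonneg _) hub ?_
      simpa using hrq.const_mul C
    have hinttr : Tendsto (fun n => ∫ x, tr n x * g x ∂μ) atTop
        (𝓝 (∫ x, f' x * g x ∂μ)) := by
      refine tendsto_integral_of_dominated_convergence (fun x => |f' x * g x|)
        (fun n => ((htrm n).mul hgm).aestronglyMeasurable) hint'.abs ?_ ?_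
      · intro n
        refine Filter.Eventually.of_forall fun x => ?_
        show ‖tr n x * g x‖ ≤ |f' x * g x|
        simp only [Real.norm_eq_abs, abs_mul]
        exact mul_le_mul_of_nonneg_right (htrle n x) (abs_nonneg _)
      · filter_upwards [hae_event] with x hx
        have hev : ∀ᶠ n in atTop, tr n x * g x = f' x * g x := by
          filter_upwards [hx] with n hn
          rw [hn]
        exact Tendsto.congr' (hev.mono fun n h => h.symm) tendsto_const_nhds
    have heqn : (fun n => φ (tr n)) = fun n => ∫ x, tr n x * g x ∂μ :=
      funext fun n => (htrCH n).2.2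
    have hphif' : φ f' = ∫ x, f' x * g x ∂μ :=
      tendsto_nhds_unique (heqn ▸ hphitr) hinttr
    have hprodae : (fun x => f' x * g x) =ᵐ[μ] fun x => f x * g x := by
      filter_upwards [hff'] with x hx
      rw [hx]
    constructor
    · exact hint'.congr hprodae
    · rw [hφeq, hphif']
      exact integral_congr_ae hprodae
  exact ⟨g, ⟨hgm.aemeasurable, fun f hf => (main f hf).1⟩, fun f hf => (main f hf).2⟩
end

section
/- Let X be a quasi-Banach function space over (Ω,μ) such that its Köthe dual X' is saturated, and let 0 < u ∈ X be a weak order unit. Then there exists a weight 0 < w ∈ L^1(Ω) such that for every f ∈ X(u) and every measurable E ⊆ Ω one has ∫_E |f| w dμ < ∞; moreover 1_E ∈ X(u) for every measurable E ⊆ Ω. -/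
open MeasureTheory Filter Set Topology

open scoped ENNReal NNReal

section AuxLemmas

variable {Ω : Type*} [MeasurableSpace Ω] {μ : Measure Ω}

lemma aux_aemeasurable_abs {f : Ω → ℝ} (hf : AEMeasurable f μ) :
    AEMeasurable (fun x => |f x|) μ := by
  simpa [Real.norm_eq_abs] using hf.norm

lemma aux_qnorm_zero (X : QBFS μ) : X.qnorm 0 = 0 := by
  have h := X.qnorm_smul 0 0 X.zero_mem
  simpa using h

lemma aux_sub_mem (X : QBFS μ) {f g : Ω → ℝ} (hf : f ∈ X.carrier) (hg : g ∈ X.carrier) :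
    f - g ∈ X.carrier := by
  have h := X.add_mem f hf ((-1 : ℝ) • g) (X.smul_mem (-1) g hg)
  simpa [sub_eq_add_neg] using h

lemma aux_qnorm_neg (X : QBFS μ) {f : Ω → ℝ} (hf : f ∈ X.carrier) :
    X.qnorm (-f) = X.qnorm f := by
  have h := X.qnorm_smul (-1) f hf
  simpa using h

lemma aux_sum_mem (X : QBFS μ) (g : ℕ → Ω → ℝ) (hg : ∀ n, g n ∈ X.carrier) (m : ℕ) :
    (fun x => ∑ i ∈ Finset.range m, g i x) ∈ X.carrier := by
  induction m with
  | zero =>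
    simp only [Finset.range_zero, Finset.sum_empty]
    exact X.zero_mem
  | succ m ih =>
    have h := X.add_mem _ ih (g m) (hg m)
    have heq : (fun x => ∑ i ∈ Finset.range (m + 1), g i x)
        = (fun x => ∑ i ∈ Finset.range m, g i x) + g m := by
      funext x
      simp [Finset.sum_range_succ]
    rw [heq]
    exact h

lemma aux_qnorm_sum_le (X : QBFS μ) :
    ∀ (m : ℕ) (g : ℕ → Ω → ℝ), (∀ n, g n ∈ X.carrier) →
      X.qnorm (fun x => ∑ i ∈ Finset.range m, g i x)
        ≤ ∑ i ∈ Finset.range m, X.K ^ (i + 1) * X.qnorm (g i) := by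
  intro m
  induction m with
  | zero =>
    intro g hg
    simp only [Finset.range_zero, Finset.sum_empty]
    exact le_of_eq (aux_qnorm_zero X)
  | succ m ih =>
    intro g hg
    have hK0 : (0 : ℝ) < X.K := lt_of_lt_of_le one_pos X.one_le_K
    have h0 : (fun x => ∑ i ∈ Finset.range (m + 1), g i x)
        = g 0 + fun x => ∑ i ∈ Finset.range m, g (i + 1) x := by
      funext x
      rw [Finset.sum_range_succ' (fun i => g i x) m]
      simp [add_comm]
    have hmem : (fun x => ∑ i ∈ Finset.range m, g (i + 1) x) ∈ X.carrier :=
      aux_sum_mem X _ (fun n => hg (n + 1)) m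
    have htri := X.qnorm_triangle (g 0) (hg 0) _ hmem
    have hih := ih (fun n => g (n + 1)) (fun n => hg (n + 1))
    have hsum_eq : ∑ i ∈ Finset.range (m + 1), X.K ^ (i + 1) * X.qnorm (g i)
        = X.K * X.qnorm (g 0)
          + X.K * ∑ i ∈ Finset.range m, X.K ^ (i + 1) * X.qnorm (g (i + 1)) := by
      rw [Finset.sum_range_succ' (fun i => X.K ^ (i + 1) * X.qnorm (g i)) m, Finset.mul_sum,
        add_comm]
      congr 1
      · ring
      · exact Finset.sum_congr rfl fun i _ => by ring
    have h3 := mul_le_mul_of_nonneg_left hih (le_of_lt hK0)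
    rw [h0, hsum_eq]
    calc X.qnorm (g 0 + fun x => ∑ i ∈ Finset.range m, g (i + 1) x)
        ≤ X.K * (X.qnorm (g 0) + X.qnorm (fun x => ∑ i ∈ Finset.range m, g (i + 1) x)) := htri
      _ ≤ X.K * X.qnorm (g 0)
          + X.K * ∑ i ∈ Finset.range m, X.K ^ (i + 1) * X.qnorm (g (i + 1)) := by nlinarith

lemma aux_integrableOn_of_dual (X : QBFS μ) {F : Set Ω} (hF : MeasurableSet F)
    (hFd : F.indicator (fun _ => (1 : ℝ)) ∈ X.kotheDual) {f : Ω → ℝ} (hf : f ∈ X.carrier) :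
    IntegrableOn f F μ := by
  have h := hFd.2 f hf
  have heq : (fun x => f x * F.indicator (fun _ => (1 : ℝ)) x) = F.indicator f := by
    funext x
    by_cases hx : x ∈ F
    · simp [hx]
    · simp [hx]
  rw [heq] at h
  exact (integrable_indicator_iff hF).mp h

lemma aux_dual_bound (X : QBFS μ) {F : Set Ω} (hF : MeasurableSet F)
    (hFd : F.indicator (fun _ => (1 : ℝ)) ∈ X.kotheDual) :
    ∃ C : ℝ, 0 ≤ C ∧ ∀ f ∈ X.carrier, ∫ x in F, |f x| ∂μ ≤ C * X.qnorm f := by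
  by_contra hcon
  push_neg at hcon
  have hK1 := X.one_le_K
  have hKpos : (0 : ℝ) < X.K := lt_of_lt_of_le one_pos hK1
  have h2K : (0 : ℝ) < 2 * X.K := by linarith
  have hex : ∀ n : ℕ, ∃ f, f ∈ X.carrier ∧
      ((n : ℝ) + 1) * (2 * X.K) ^ (n + 1) * X.qnorm f < ∫ x in F, |f x| ∂μ := by
    intro n
    obtain ⟨f, hf1, hf2⟩ := hcon (((n : ℝ) + 1) * (2 * X.K) ^ (n + 1)) (by positivity)
    exact ⟨f, hf1, hf2⟩
  choose f hfmem hflt using hex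
  have hqpos : ∀ n, 0 < X.qnorm (f n) := by
    intro n
    rcases (X.qnorm_nonneg (f n) (hfmem n)).lt_or_eq with h | h
    · exact h
    · exfalso
      have hz : f n =ᵐ[μ] 0 := (X.qnorm_eq_zero_iff (f n) (hfmem n)).mp h.symm
      have hzero : ∫ x in F, |f n x| ∂μ = 0 := by
        have hz' : (fun x => |f n x|) =ᵐ[μ.restrict F] (fun _ => (0 : ℝ)) :=
          ae_restrict_of_ae (hz.mono fun x hx => by simp [hx])
        rw [integral_congr_ae hz']
        simp
      have hl := hflt n
      rw [← h, mul_zero, hzero] at hl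
      exact lt_irrefl 0 hl
  have habs : ∀ n, (fun x => |f n x|) ∈ X.carrier ∧
      X.qnorm (fun x => |f n x|) ≤ X.qnorm (f n) :=
    fun n => X.ideal (f n) (hfmem n) _ (aux_aemeasurable_abs (X.aemeasurable_mem (f n) (hfmem n)))
      (Filter.Eventually.of_forall fun x => by simp)
  set c : ℕ → ℝ := fun n => ((2 * X.K) ^ (n + 1) * X.qnorm (f n))⁻¹ with hc
  have hcpos : ∀ n, 0 < c n := fun n =>
    inv_pos.mpr (mul_pos (pow_pos h2K _) (hqpos n))
  set g : ℕ → Ω → ℝ := fun n => c n • (fun x => |f n x|) with hgdef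
  have hgmem : ∀ n, g n ∈ X.carrier := fun n => X.smul_mem _ _ (habs n).1
  have hgnonneg : ∀ n x, 0 ≤ g n x := by
    intro n x
    simp only [hgdef, Pi.smul_apply, smul_eq_mul]
    exact mul_nonneg (hcpos n).le (abs_nonneg _)
  have hgq : ∀ n, X.qnorm (g n) ≤ ((2 * X.K) ^ (n + 1))⁻¹ := by
    intro n
    have hqs := X.qnorm_smul (c n) _ (habs n).1
    rw [hgdef]
    simp only
    rw [hqs, abs_of_pos (hcpos n)]
    have h2 : c n * X.qnorm (fun x => |f n x|) ≤ c n * X.qnorm (f n) :=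
      mul_le_mul_of_nonneg_left (habs n).2 (hcpos n).le
    have hq : X.qnorm (f n) ≠ 0 := (hqpos n).ne'
    have h3 : c n * X.qnorm (f n) = ((2 * X.K) ^ (n + 1))⁻¹ := by
      simp only [hc]
      rw [mul_inv, mul_assoc, inv_mul_cancel₀ hq, mul_one]
    linarith
  have hgint : ∀ n : ℕ, ((n : ℝ) + 1) < ∫ x in F, g n x ∂μ := by
    intro n
    have h1 : ∫ x in F, g n x ∂μ = c n * ∫ x in F, |f n x| ∂μ := by
      simp only [hgdef, Pi.smul_apply, smul_eq_mul]
      exact integral_const_mul _ _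
    have h3 : c n * (((n : ℝ) + 1) * (2 * X.K) ^ (n + 1) * X.qnorm (f n))
        < c n * ∫ x in F, |f n x| ∂μ :=
      mul_lt_mul_of_pos_left (hflt n) (hcpos n)
    have hA : ((2 * X.K) ^ (n + 1) : ℝ) ≠ 0 := (pow_pos h2K _).ne'
    have hq : X.qnorm (f n) ≠ 0 := (hqpos n).ne'
    have h4 : c n * (((n : ℝ) + 1) * (2 * X.K) ^ (n + 1) * X.qnorm (f n)) = (n : ℝ) + 1 := by
      simp only [hc]
      field_simp
    rw [h1]
    rw [h4] at h3
    exact h3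
  set S : ℕ → Ω → ℝ := fun N x => ∑ i ∈ Finset.range (N + 1), g i x with hSdef
  have hSmem : ∀ N, S N ∈ X.carrier := fun N => aux_sum_mem X g hgmem (N + 1)
  have hSsub : ∀ M N, M ≤ N →
      (S N - S M) = fun x => ∑ j ∈ Finset.range (N - M), g (M + 1 + j) x := by
    intro M N hMN
    funext x
    have hsplit : (N + 1) = (M + 1) + (N - M) := by omega
    have hadd := Finset.sum_range_add (fun i => g i x) (M + 1) (N - M)
    simp only [Pi.sub_apply, hSdef]
    rw [hsplit, hadd]
    ring
  have hcauchy : ∀ M N, M ≤ N → X.qnorm (S N - S M) ≤ (1 / 2 : ℝ) ^ (M + 1) := by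
    intro M N hMN
    rw [hSsub M N hMN]
    have hb := aux_qnorm_sum_le X (N - M) (fun j => g (M + 1 + j)) (fun j => hgmem _)
    refine hb.trans ?_
    have hterm : ∀ j ∈ Finset.range (N - M),
        X.K ^ (j + 1) * X.qnorm (g (M + 1 + j)) ≤ (1 / 2 : ℝ) ^ (M + 2 + j) := by
      intro j _
      have h1 : X.qnorm (g (M + 1 + j)) ≤ ((2 * X.K) ^ (M + 2 + j))⁻¹ := by
        have h := hgq (M + 1 + j)
        rwa [show M + 1 + j + 1 = M + 2 + j by omega] at h
      have h2 : X.K ^ (j + 1) * X.qnorm (g (M + 1 + j))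
          ≤ X.K ^ (j + 1) * ((2 * X.K) ^ (M + 2 + j))⁻¹ :=
        mul_le_mul_of_nonneg_left h1 (pow_nonneg hKpos.le _)
      refine h2.trans ?_
      have h3 : X.K ^ (j + 1) ≤ X.K ^ (M + 2 + j) := pow_le_pow_right₀ hK1 (by omega)
      have h4 : ((2 : ℝ) * X.K) ^ (M + 2 + j) = 2 ^ (M + 2 + j) * X.K ^ (M + 2 + j) :=
        mul_pow _ _ _
      have h6 : (0 : ℝ) < X.K ^ (M + 2 + j) := pow_pos hKpos _
      have key : X.K ^ (j + 1) * ((2 * X.K) ^ (M + 2 + j))⁻¹ ≤ ((2 : ℝ) ^ (M + 2 + j))⁻¹ := by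
        rw [h4, mul_inv]
        calc X.K ^ (j + 1) * (((2 : ℝ) ^ (M + 2 + j))⁻¹ * (X.K ^ (M + 2 + j))⁻¹)
            ≤ X.K ^ (M + 2 + j) * (((2 : ℝ) ^ (M + 2 + j))⁻¹ * (X.K ^ (M + 2 + j))⁻¹) := by
              apply mul_le_mul_of_nonneg_right h3
              positivity
          _ = ((2 : ℝ) ^ (M + 2 + j))⁻¹ := by
              field_simp
      refine key.trans ?_
      rw [one_div, inv_pow]
    refine (Finset.sum_le_sum hterm).trans ?_
    have h7 : ∀ j : ℕ, (1 / 2 : ℝ) ^ (M + 2 + j) = (1 / 2 : ℝ) ^ (M + 2) * (1 / 2 : ℝ) ^ j :=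
      fun j => pow_add _ _ _
    calc ∑ j ∈ Finset.range (N - M), (1 / 2 : ℝ) ^ (M + 2 + j)
        = (1 / 2 : ℝ) ^ (M + 2) * ∑ j ∈ Finset.range (N - M), (1 / 2 : ℝ) ^ j := by
          rw [Finset.mul_sum]
          exact Finset.sum_congr rfl fun j _ => h7 j
      _ ≤ (1 / 2 : ℝ) ^ (M + 2) * 2 := by
          have hs : ∑ j ∈ Finset.range (N - M), (1 / 2 : ℝ) ^ j ≤ 2 := by
            have hst := Summable.sum_le_tsum (Finset.range (N - M))
              (fun i _ => by positivity) summable_geometric_two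
            rwa [tsum_geometric_two] at hst
          have hp : (0 : ℝ) ≤ (1 / 2 : ℝ) ^ (M + 2) := by positivity
          nlinarith
      _ = (1 / 2 : ℝ) ^ (M + 1) := by
          rw [pow_succ]
          ring
  obtain ⟨h, hhmem, hconv⟩ := X.complete S hSmem (by
    intro ε hε
    obtain ⟨N₀, hN₀⟩ := exists_pow_lt_of_lt_one hε (by norm_num : (1 / 2 : ℝ) < 1)
    refine ⟨N₀, fun j hj k hk => ?_⟩
    have key : ∀ a b : ℕ, N₀ ≤ a → a ≤ b → X.qnorm (S b - S a) < ε := by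
      intro a b ha hab
      have h1 := hcauchy a b hab
      have h2 : (1 / 2 : ℝ) ^ (a + 1) ≤ (1 / 2 : ℝ) ^ N₀ :=
        pow_le_pow_of_le_one (by norm_num) (by norm_num) (by omega)
      linarith
    rcases le_total j k with hjk | hkj
    · have h1 := key j k hj hjk
      have h2 : X.qnorm (S j - S k) = X.qnorm (S k - S j) := by
        rw [← neg_sub (S k) (S j), aux_qnorm_neg X (aux_sub_mem X (hSmem k) (hSmem j))]
      rw [h2]
      exact h1
    · exact key k j hk hkj)
  have hSmono : ∀ N M x, N ≤ M → S N x ≤ S M x := by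
    intro N M x hNM
    have hsplit : (M + 1) = (N + 1) + (M - N) := by omega
    have hadd : ∑ i ∈ Finset.range (M + 1), g i x
        = ∑ i ∈ Finset.range (N + 1), g i x + ∑ j ∈ Finset.range (M - N), g (N + 1 + j) x := by
      rw [hsplit]
      exact Finset.sum_range_add (fun i => g i x) (N + 1) (M - N)
    have hnn : 0 ≤ ∑ j ∈ Finset.range (M - N), g (N + 1 + j) x :=
      Finset.sum_nonneg fun j _ => hgnonneg _ x
    simp only [hSdef]
    rw [hadd]
    linarith
  have hle : ∀ᵐ x ∂μ, ∀ N, S N x ≤ h x := by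
    rw [ae_all_iff]
    intro N
    set p : Ω → ℝ := fun x => max (S N x - h x) 0 with hpdef
    have hpmeas : AEMeasurable p μ :=
      ((X.aemeasurable_mem _ (hSmem N)).sub (X.aemeasurable_mem h hhmem)).max aemeasurable_const
    have hpbound : ∀ M, N ≤ M → ∀ x, |p x| ≤ |(S M - h) x| := by
      intro M hM x
      simp only [hpdef, Pi.sub_apply]
      rw [abs_of_nonneg (le_max_right _ _)]
      rcases le_or_gt (S N x - h x) 0 with h0 | h0
      · rw [max_eq_right h0]
        exact abs_nonneg _
      · rw [max_eq_left h0.le]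
        have hm := hSmono N M x hM
        have : S N x - h x ≤ S M x - h x := by linarith
        exact this.trans (le_abs_self _)
    have hpM : ∀ M, N ≤ M → X.qnorm p ≤ X.qnorm (S M - h) := fun M hM =>
      (X.ideal _ (aux_sub_mem X (hSmem M) hhmem) p hpmeas
        (Filter.Eventually.of_forall (hpbound M hM))).2
    have hpmem : p ∈ X.carrier :=
      (X.ideal _ (aux_sub_mem X (hSmem N) hhmem) p hpmeas
        (Filter.Eventually.of_forall (hpbound N le_rfl))).1
    have hp0 : X.qnorm p ≤ 0 :=
      ge_of_tendsto hconv (Filter.eventually_atTop.mpr ⟨N, fun M hM => hpM M hM⟩)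
    have hpz : p =ᵐ[μ] 0 :=
      (X.qnorm_eq_zero_iff p hpmem).mp (le_antisymm hp0 (X.qnorm_nonneg p hpmem))
    filter_upwards [hpz] with x hx
    simp only [hpdef, Pi.zero_apply] at hx
    have hd : S N x - h x ≤ 0 := by
      have hl := le_max_left (S N x - h x) 0
      rw [hx] at hl
      exact hl
    linarith
  have hBint : IntegrableOn (fun x => |h x|) F μ := (aux_integrableOn_of_dual X hF hFd hhmem).abs
  have hcontr : ∀ N : ℕ, ((N : ℝ) + 1) < ∫ x in F, |h x| ∂μ := by
    intro N
    have hSint : IntegrableOn (S N) F μ := aux_integrableOn_of_dual X hF hFd (hSmem N)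
    have h1 : ∫ x in F, S N x ∂μ ≤ ∫ x in F, |h x| ∂μ := by
      refine integral_mono_ae hSint hBint ?_
      have hae : ∀ᵐ x ∂μ, S N x ≤ |h x| := by
        filter_upwards [hle] with x hx
        exact (hx N).trans (le_abs_self _)
      exact ae_restrict_of_ae hae
    have h2 : ∫ x in F, S N x ∂μ = ∑ i ∈ Finset.range (N + 1), ∫ x in F, g i x ∂μ := by
      simp only [hSdef]
      exact integral_finset_sum _ fun i _ => aux_integrableOn_of_dual X hF hFd (hgmem i)
    have h3 : ((N : ℝ) + 1) < ∑ i ∈ Finset.range (N + 1), ∫ x in F, g i x ∂μ := by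
      have hN : ∫ x in F, g N x ∂μ ≤ ∑ i ∈ Finset.range (N + 1), ∫ x in F, g i x ∂μ :=
        Finset.single_le_sum (f := fun i => ∫ x in F, g i x ∂μ) (fun i _ => integral_nonneg fun x => hgnonneg i x)
          (Finset.self_mem_range_succ N)
      exact lt_of_lt_of_le (hgint N) hN
    linarith
  obtain ⟨n, hn⟩ := exists_nat_gt (∫ x in F, |h x| ∂μ)
  have hcc := hcontr n
  linarith

end AuxLemmas

/-- If the Köthe dual `X'` is saturated and `u` is a weak order unit of `X`,
then there is a weight `0 < w ∈ L¹(Ω)` such that every `f ∈ X(u)` satisfies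
`∫_E |f| w dμ < ∞` for all measurable `E`; moreover `1_E ∈ X(u)` for all
measurable `E`. -/
theorem weak_order_unit_weight
    {Ω : Type*} [MeasurableSpace Ω] {μ : Measure Ω} [SigmaFinite μ]
    (X : QBFS μ)
    (hsat : ∀ E : Set Ω, MeasurableSet E → 0 < μ E →
      ∃ F, F ⊆ E ∧ MeasurableSet F ∧ 0 < μ F ∧
        F.indicator (fun _ => (1 : ℝ)) ∈ X.kotheDual)
    (u : Ω → ℝ) (hu : u ∈ X.carrier) (hupos : ∀ᵐ x ∂μ, 0 < u x) :
    (∃ w : Ω → ℝ, AEMeasurable w μ ∧ (∀ᵐ x ∂μ, 0 < w x) ∧ Integrable w μ ∧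
      ∀ f : Ω → ℝ, AEMeasurable f μ → (fun x => f x * u x) ∈ X.carrier →
        ∀ E : Set Ω, MeasurableSet E →
          IntegrableOn (fun x => |f x| * w x) E μ) ∧
    ∀ E : Set Ω, MeasurableSet E → (fun x => E.indicator u x) ∈ X.carrier := by
  have hK1 := X.one_le_K
  have hind : ∀ E : Set Ω, MeasurableSet E → (fun x => E.indicator u x) ∈ X.carrier := by
    intro E hE
    refine (X.ideal u hu (fun x => E.indicator u x)
      ((X.aemeasurable_mem u hu).indicator hE) ?_).1
    refine Filter.Eventually.of_forall fun x => ?_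
    by_cases hx : x ∈ E
    · simp [Set.indicator_of_mem hx]
    · simp [Set.indicator_of_notMem hx]
  refine ⟨?_, hind⟩
  -- a positive integrable function
  obtain ⟨g₀, hg₀pos, hg₀meas, hg₀int⟩ := exists_pos_lintegral_lt_of_sigmaFinite μ one_ne_zero
  set ρ : Ω → ℝ := fun x => (g₀ x : ℝ) with hρ
  have hρmeas : Measurable ρ := measurable_coe_nnreal_real.comp hg₀meas
  have hρpos : ∀ x, 0 < ρ x := fun x => by exact_mod_cast hg₀pos x
  have hρint : Integrable ρ μ := by
    refine ⟨hρmeas.aestronglyMeasurable, ?_⟩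
    have hnn : ∀ a, (‖ρ a‖₊ : ℝ≥0∞) = (g₀ a : ℝ≥0∞) := by
      intro a
      simp [hρ, NNReal.nnnorm_eq]
    calc ∫⁻ a, (‖ρ a‖₊ : ℝ≥0∞) ∂μ = ∫⁻ a, (g₀ a : ℝ≥0∞) ∂μ := lintegral_congr hnn
      _ < 1 := hg₀int
      _ < ⊤ := ENNReal.one_lt_top
  -- the class of dual-indicator sets
  set 𝒞 : Set (Set Ω) :=
    {F | MeasurableSet F ∧ F.indicator (fun _ => (1 : ℝ)) ∈ X.kotheDual} with h𝒞
  set ν : Set Ω → ℝ := fun F => ∫ x in F, ρ x ∂μ with hν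
  have hempty : (∅ : Set Ω) ∈ 𝒞 := by
    refine ⟨MeasurableSet.empty, ?_, ?_⟩
    · simp only [Set.indicator_empty]
      exact aemeasurable_const
    · intro f hf
      simp only [Set.indicator_empty, Pi.zero_apply, mul_zero]
      exact integrable_zero _ _ _
  have hbdd : ∀ F ∈ 𝒞, ν F ≤ ∫ x, ρ x ∂μ := fun F _ =>
    setIntegral_le_integral hρint (Filter.Eventually.of_forall fun x => (hρpos x).le)
  have hne : (ν '' 𝒞).Nonempty := ⟨ν ∅, ⟨∅, hempty, rfl⟩⟩
  have hbdd' : BddAbove (ν '' 𝒞) := by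
    refine ⟨∫ x, ρ x ∂μ, ?_⟩
    rintro y ⟨F, hF, rfl⟩
    exact hbdd F hF
  set t := sSup (ν '' 𝒞) with ht
  have hchoose : ∀ n : ℕ, ∃ F, F ∈ 𝒞 ∧ t - 1 / ((n : ℝ) + 1) < ν F := by
    intro n
    have hlt : t - 1 / ((n : ℝ) + 1) < t := by
      have hp : (0 : ℝ) < 1 / ((n : ℝ) + 1) := by positivity
      linarith
    obtain ⟨y, ⟨F, hF, rfl⟩, hy⟩ := exists_lt_of_lt_csSup hne hlt
    exact ⟨F, hF, hy⟩
  choose F hF𝒞 hFν using hchoose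
  have hFmeas : ∀ n, MeasurableSet (F n) := fun n => (hF𝒞 n).1
  have hFdual : ∀ n, (F n).indicator (fun _ => (1 : ℝ)) ∈ X.kotheDual := fun n => (hF𝒞 n).2
  set U : Set Ω := ⋃ n, F n with hU
  have hUmeas : MeasurableSet U := MeasurableSet.iUnion hFmeas
  have hUc : μ Uᶜ = 0 := by
    by_contra h0
    have hpos : 0 < μ Uᶜ := pos_iff_ne_zero.mpr h0
    obtain ⟨F', hF'sub, hF'meas, hF'pos, hF'dual⟩ := hsat Uᶜ hUmeas.compl hpos
    have hνF' : 0 < ν F' := by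
      refine (setIntegral_pos_iff_support_of_nonneg_ae
        (Filter.Eventually.of_forall fun x => (hρpos x).le) hρint.integrableOn).mpr ?_
      have hsupp : Function.support ρ = Set.univ := by
        ext x
        simp [Function.mem_support, (hρpos x).ne']
      rw [hsupp, Set.univ_inter]
      exact hF'pos
    obtain ⟨n, hn⟩ := exists_nat_one_div_lt hνF'
    have hdisj : Disjoint (F n) F' := by
      refine Set.disjoint_left.mpr fun x hx hx' => ?_
      exact (hF'sub hx') (Set.mem_iUnion.mpr ⟨n, hx⟩)
    have hGdual : (F n ∪ F').indicator (fun _ => (1 : ℝ)) ∈ X.kotheDual := by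
      refine ⟨(measurable_const.indicator ((hFmeas n).union hF'meas)).aemeasurable, ?_⟩
      intro f hf
      have h1 := (hFdual n).2 f hf
      have h2 := hF'dual.2 f hf
      refine Integrable.mono' (h1.abs.add h2.abs)
        ((X.aemeasurable_mem f hf).aestronglyMeasurable.mul
          (measurable_const.indicator ((hFmeas n).union hF'meas)).aestronglyMeasurable) ?_
      refine Filter.Eventually.of_forall fun x => ?_
      simp only [Real.norm_eq_abs, Pi.add_apply]
      by_cases hx1 : x ∈ F n
      · have hxu : x ∈ F n ∪ F' := Or.inl hx1
        simp only [Set.indicator_of_mem hx1, Set.indicator_of_mem hxu]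
        have := abs_nonneg (f x * F'.indicator (fun _ => (1 : ℝ)) x)
        linarith [le_refl |f x * 1|]
      · by_cases hx2 : x ∈ F'
        · have hxu : x ∈ F n ∪ F' := Or.inr hx2
          simp only [Set.indicator_of_mem hx2, Set.indicator_of_mem hxu,
            Set.indicator_of_notMem hx1]
          have := abs_nonneg (f x * (1 : ℝ))
          simp only [mul_zero, abs_zero]
          linarith
        · have hxu : x ∉ F n ∪ F' := by
            simp [hx1, hx2]
          simp only [Set.indicator_of_notMem hx1, Set.indicator_of_notMem hx2,
            Set.indicator_of_notMem hxu, mul_zero, abs_zero]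
          linarith
    have hG𝒞 : F n ∪ F' ∈ 𝒞 := ⟨(hFmeas n).union hF'meas, hGdual⟩
    have hνG : ν (F n ∪ F') = ν (F n) + ν F' :=
      setIntegral_union hdisj hF'meas hρint.integrableOn hρint.integrableOn
    have hleG : ν (F n ∪ F') ≤ t := le_csSup hbdd' ⟨F n ∪ F', hG𝒞, rfl⟩
    have h1 := hFν n
    rw [hνG] at hleG
    linarith
  have hUae : ∀ᵐ x ∂μ, x ∈ U := by
    rw [MeasureTheory.ae_iff]
    exact hUc
  -- bounds for each F n
  have hCn : ∀ n, ∃ C : ℝ, 0 ≤ C ∧ ∀ f ∈ X.carrier, ∫ x in F n, |f x| ∂μ ≤ C * X.qnorm f :=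
    fun n => aux_dual_bound X (hFmeas n) (hFdual n)
  choose C hC0 hCbound using hCn
  set c : ℕ → ℝ := fun n => (1 / 2 : ℝ) ^ (n + 1) / (1 + C n) with hc
  have hcpos : ∀ n, 0 < c n := by
    intro n
    simp only [hc]
    have := hC0 n
    positivity
  have hcle : ∀ n, c n ≤ (1 / 2 : ℝ) ^ (n + 1) := by
    intro n
    simp only [hc]
    rw [div_le_iff₀ (by linarith [hC0 n] : (0 : ℝ) < 1 + C n)]
    nlinarith [pow_nonneg (by norm_num : (0 : ℝ) ≤ 1 / 2) (n + 1), hC0 n]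
  have hcC : ∀ n, c n * C n ≤ (1 / 2 : ℝ) ^ (n + 1) := by
    intro n
    simp only [hc]
    rw [div_mul_eq_mul_div, div_le_iff₀ (by linarith [hC0 n] : (0 : ℝ) < 1 + C n)]
    nlinarith [pow_nonneg (by norm_num : (0 : ℝ) ≤ 1 / 2) (n + 1), hC0 n]
  have hind01 : ∀ (n : ℕ) (x : Ω), (0 : ℝ) ≤ (F n).indicator (fun _ => (1 : ℝ)) x ∧
      (F n).indicator (fun _ => (1 : ℝ)) x ≤ 1 := by
    intro n x
    by_cases hx : x ∈ F n <;> simp [hx]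
  have hs2 : Summable (fun n : ℕ => (1 / 2 : ℝ) ^ (n + 1)) := by
    have hgeo := summable_geometric_two.mul_left (1 / 2 : ℝ)
    exact hgeo.congr fun n => by rw [pow_succ]; ring
  have hsumm : ∀ x, Summable fun n => c n * (F n).indicator (fun _ => (1 : ℝ)) x := by
    intro x
    refine Summable.of_nonneg_of_le
      (fun n => mul_nonneg (hcpos n).le (hind01 n x).1) (fun n => ?_) hs2
    calc c n * (F n).indicator (fun _ => (1 : ℝ)) x
        ≤ c n := mul_le_of_le_one_right (hcpos n).le (hind01 n x).2
      _ ≤ (1 / 2 : ℝ) ^ (n + 1) := hcle n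
  set v : Ω → ℝ := fun x => ∑' n, c n * (F n).indicator (fun _ => (1 : ℝ)) x with hv
  have hvmeas : Measurable v := by
    apply measurable_of_tendsto_metrizable
      (f := fun N x => ∑ n ∈ Finset.range N, c n * (F n).indicator (fun _ => (1 : ℝ)) x)
    · intro N
      refine Finset.measurable_sum _ fun n _ => ?_
      exact (measurable_const.indicator (hFmeas n)).const_mul (c n)
    · rw [tendsto_pi_nhds]
      intro x
      exact (hsumm x).hasSum.tendsto_sum_nat
  have hvnonneg : ∀ x, 0 ≤ v x := fun x =>
    tsum_nonneg fun n => mul_nonneg (hcpos n).le (hind01 n x).1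
  have hvposU : ∀ x ∈ U, 0 < v x := by
    intro x hx
    obtain ⟨n, hn⟩ := Set.mem_iUnion.mp hx
    have h1 : c n * (F n).indicator (fun _ => (1 : ℝ)) x = c n := by
      simp [Set.indicator_of_mem hn]
    have h2 : c n ≤ v x := by
      rw [hv]
      calc c n = c n * (F n).indicator (fun _ => (1 : ℝ)) x := h1.symm
        _ ≤ ∑' m, c m * (F m).indicator (fun _ => (1 : ℝ)) x :=
            Summable.le_tsum (hsumm x) n fun m _ => mul_nonneg (hcpos m).le (hind01 m x).1
    exact lt_of_lt_of_le (hcpos n) h2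
  -- the key integrability estimate
  have hkey : ∀ g ∈ X.carrier, Integrable (fun x => |g x| * v x) μ := by
    intro g hg
    have hgaem := X.aemeasurable_mem g hg
    have hgabs : AEMeasurable (fun x => |g x|) μ := aux_aemeasurable_abs hgaem
    refine ⟨(hgabs.mul hvmeas.aemeasurable).aestronglyMeasurable, ?_⟩
    have hnn : ∀ x, 0 ≤ |g x| * v x := fun x => mul_nonneg (abs_nonneg _) (hvnonneg x)
    have hnorm : ∀ x, (‖|g x| * v x‖₊ : ℝ≥0∞) = ENNReal.ofReal (|g x| * v x) := by
      intro x
      rw [← enorm_eq_nnnorm, ← ofReal_norm, Real.norm_eq_abs, abs_of_nonneg (hnn x)]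
    have hterm_nonneg : ∀ (x : Ω) (n : ℕ),
        0 ≤ |g x| * (c n * (F n).indicator (fun _ => (1 : ℝ)) x) :=
      fun x n => mul_nonneg (abs_nonneg _) (mul_nonneg (hcpos n).le (hind01 n x).1)
    have heq : ∀ x, ENNReal.ofReal (|g x| * v x)
        = ∑' n, ENNReal.ofReal (|g x| * (c n * (F n).indicator (fun _ => (1 : ℝ)) x)) := by
      intro x
      rw [hv]
      rw [← tsum_mul_left]
      exact ENNReal.ofReal_tsum_of_nonneg (hterm_nonneg x) ((hsumm x).mul_left _)
    have hterm_le : ∀ n : ℕ,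
        ∫⁻ x, ENNReal.ofReal (|g x| * (c n * (F n).indicator (fun _ => (1 : ℝ)) x)) ∂μ
          ≤ ENNReal.ofReal ((1 / 2 : ℝ) ^ (n + 1) * X.qnorm g) := by
      intro n
      have hintg : IntegrableOn (fun x => |g x|) (F n) μ :=
        (aux_integrableOn_of_dual X (hFmeas n) (hFdual n) hg).abs
      have hrw : ∀ x, ENNReal.ofReal (|g x| * (c n * (F n).indicator (fun _ => (1 : ℝ)) x))
          = ENNReal.ofReal (c n) * (F n).indicator (fun y => ENNReal.ofReal |g y|) x := by
        intro x
        by_cases hx : x ∈ F n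
        · simp only [Set.indicator_of_mem hx, mul_one]
          rw [← ENNReal.ofReal_mul (hcpos n).le, mul_comm]
        · simp [Set.indicator_of_notMem hx]
      have h1 : ∫⁻ x, ENNReal.ofReal (|g x| * (c n * (F n).indicator (fun _ => (1 : ℝ)) x)) ∂μ
          = ENNReal.ofReal (c n) * ∫⁻ x in F n, ENNReal.ofReal |g x| ∂μ := by
        rw [lintegral_congr hrw, lintegral_const_mul' _ _ ENNReal.ofReal_ne_top,
          lintegral_indicator (hFmeas n) _]
      have h2 : ∫⁻ x in F n, ENNReal.ofReal |g x| ∂μ = ENNReal.ofReal (∫ x in F n, |g x| ∂μ) :=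
        (ofReal_integral_eq_lintegral_ofReal hintg
          (Filter.Eventually.of_forall fun x => abs_nonneg _)).symm
      rw [h1, h2, ← ENNReal.ofReal_mul (hcpos n).le]
      refine ENNReal.ofReal_le_ofReal ?_
      have h3 := hCbound n g hg
      have h4 := hcC n
      have h5 := X.qnorm_nonneg g hg
      nlinarith [(hcpos n).le]
    calc ∫⁻ x, (‖|g x| * v x‖₊ : ℝ≥0∞) ∂μ
        = ∫⁻ x, ENNReal.ofReal (|g x| * v x) ∂μ := lintegral_congr hnorm
      _ = ∫⁻ x, ∑' n, ENNReal.ofReal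
            (|g x| * (c n * (F n).indicator (fun _ => (1 : ℝ)) x)) ∂μ := lintegral_congr heq
      _ = ∑' n, ∫⁻ x, ENNReal.ofReal
            (|g x| * (c n * (F n).indicator (fun _ => (1 : ℝ)) x)) ∂μ := by
          refine lintegral_tsum fun n => ?_
          exact (hgabs.mul
            (((measurable_const.indicator (hFmeas n)).aemeasurable).const_mul
              (c n))).ennreal_ofReal
      _ ≤ ∑' n, ENNReal.ofReal ((1 / 2 : ℝ) ^ (n + 1) * X.qnorm g) :=
          ENNReal.tsum_le_tsum hterm_le
      _ = ENNReal.ofReal (∑' n : ℕ, (1 / 2 : ℝ) ^ (n + 1) * X.qnorm g) :=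
          (ENNReal.ofReal_tsum_of_nonneg
            (fun n => mul_nonneg (by positivity) (X.qnorm_nonneg g hg))
            (hs2.mul_right _)).symm
      _ < ⊤ := ENNReal.ofReal_lt_top
  refine ⟨fun x => u x * v x, (X.aemeasurable_mem u hu).mul hvmeas.aemeasurable, ?_, ?_, ?_⟩
  · filter_upwards [hupos, hUae] with x h1 h2
    exact mul_pos h1 (hvposU x h2)
  · have h1 := hkey u hu
    refine h1.congr ?_
    filter_upwards [hupos] with x hx
    rw [abs_of_pos hx]
  · intro f hfme hfu E hE
    have h1 := hkey _ hfu
    have h2 : (fun x => |f x * u x| * v x) =ᵐ[μ] fun x => |f x| * (u x * v x) := by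
      filter_upwards [hupos] with x hx
      rw [abs_mul, abs_of_pos hx]
      ring
    exact (h1.congr h2).integrableOn
end
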